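/- arXiv:1106.2915 — 4 statements merged into one kernel-verified Lean document; each statement's English description precedes it below -/
import Mathlib

section
/- For λ ∈ Z_{s,n} and μ ∈ P^{(k)} with λ ⋠_k μ, the inner product ⟨V_{ι(λ)}(A), V̄_{φ^{(k)}(μ)}(A)⟩ vanishes for every (s+n−1)×sn matrix A. -/
set_option maxHeartbeats 1000000

open Finset

/-- The minor of `A` on the rows `I` and columns `J` (listed increasingly);
junk value `0` if `I` and `J` have different sizes. -/
def minor {R : Type*} [CommRing R] {N M : ℕ} (A : Matrix (Fin N) (Fin M) R)
    (I : Finset (Fin N)) (J : Finset (Fin M)) : R :=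
  if h : J.card = I.card then
    (A.submatrix (I.orderEmbOfFin rfl) (J.orderEmbOfFin h)).det
  else 0

/-- `ι(μ) = ⊔_i {(i−1)n+1, …, (i−1)n+μ_i} ⊆ [sn]` (here `0`-based). -/
def iotaSet (s n : ℕ) (μ : Fin s → ℕ) : Finset (Fin (s * n)) :=
  Finset.univ.filter fun x =>
    (x : ℕ) % n < if h : (x : ℕ) / n < s then μ ⟨(x : ℕ) / n, h⟩ else 0

/-- `φ^{(k)}(μ) = {(i−1)n + μ_i + 1 : i ≠ k} ⊆ [sn]` (here `0`-based). -/
def phiSet (s n : ℕ) (k : Fin s) (μ : Fin s → ℕ) : Finset (Fin (s * n)) :=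
  Finset.univ.filter fun x =>
    (x : ℕ) / n ≠ (k : ℕ) ∧
      ((x : ℕ) % n) = (if h : (x : ℕ) / n < s then μ ⟨(x : ℕ) / n, h⟩ else n)

/-- `ε(J,K)`: the sign of the permutation sorting the concatenation of `J` and
`K`, and `0` if `J ∩ K ≠ ∅`. -/
def eps {α : Type*} [LinearOrder α] (J K : Finset α) : ℤ :=
  if Disjoint J K then (-1) ^ ((J ×ˢ K).filter fun p => p.2 < p.1).card else 0

/-- The sign `(−1)^{|I| − n(n+1)/2}` (written with the same parity as
`|I| + n(n+1)/2`, where `|I|` is the sum of the (1-based) elements of `I`). -/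
def vSign {N : ℕ} (n : ℕ) (I : Finset (Fin N)) : ℤ :=
  (-1) ^ ((∑ i ∈ I, ((i : ℕ) + 1)) + n * (n + 1) / 2)

/-- The inner product `⟨V_J(A), V̄_K(A)⟩ = ∑_{I ∈ ([s+n−1] choose n)}
(det A^I_J) · (−1)^{|I|−n(n+1)/2} (det A^{Ī}_K)`. -/
noncomputable def innerVV {R : Type*} [CommRing R] {s n : ℕ}
    (A : Matrix (Fin (s + n - 1)) (Fin (s * n)) R)
    (J K : Finset (Fin (s * n))) : R :=
  ∑ I : {I : Finset (Fin (s + n - 1)) // I.card = n},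
    minor A I.1 J * (((vSign n I.1 : ℤ) : R) * minor A (I.1)ᶜ K)

namespace InnerVanishAux

variable {N n m : ℕ}

def sumEquiv (hN : N = n + m) : Fin n ⊕ Fin m ≃ Fin N :=
  finSumFinEquiv.trans (finCongr hN.symm)

lemma sumEquiv_inl (hN : N = n + m) (a : Fin n) :
    ((sumEquiv hN (Sum.inl a) : Fin N) : ℕ) = (a : ℕ) := by
  simp [sumEquiv]

lemma sumEquiv_inr (hN : N = n + m) (b : Fin m) :
    ((sumEquiv hN (Sum.inr b) : Fin N) : ℕ) = n + (b : ℕ) := by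
  simp [sumEquiv]

lemma card_compl_of (hN : N = n + m) {I : Finset (Fin N)} (hI : I.card = n) :
    Iᶜ.card = m := by
  rw [Finset.card_compl, hI, Fintype.card_fin]; omega

def shuffleFun (hN : N = n + m) (I : Finset (Fin N)) (hI : I.card = n) : Fin N → Fin N :=
  fun x => Sum.elim (I.orderEmbOfFin hI) (Iᶜ.orderEmbOfFin (card_compl_of hN hI))
    ((sumEquiv hN).symm x)

lemma shuffleFun_inj (hN : N = n + m) (I : Finset (Fin N)) (hI : I.card = n) :
    Function.Injective (shuffleFun hN I hI) := by
  intro x y hxy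
  apply_fun (sumEquiv hN).symm using (sumEquiv hN).symm.injective
  unfold shuffleFun at hxy
  rcases hx : (sumEquiv hN).symm x with a | b <;>
    rcases hy : (sumEquiv hN).symm y with a' | b' <;>
      rw [hx, hy] at hxy <;>
        simp only [Sum.elim_inl, Sum.elim_inr] at hxy
  · rw [(I.orderEmbOfFin hI).injective hxy]
  · have h1 := I.orderEmbOfFin_mem hI a
    rw [hxy] at h1
    exact absurd h1 (Finset.mem_compl.mp (Iᶜ.orderEmbOfFin_mem (card_compl_of hN hI) b'))
  · have h1 := I.orderEmbOfFin_mem hI a'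
    rw [← hxy] at h1
    exact absurd h1 (Finset.mem_compl.mp (Iᶜ.orderEmbOfFin_mem (card_compl_of hN hI) b))
  · rw [(Iᶜ.orderEmbOfFin (card_compl_of hN hI)).injective hxy]

noncomputable def shuffle (hN : N = n + m) (I : Finset (Fin N)) (hI : I.card = n) :
    Equiv.Perm (Fin N) :=
  Equiv.ofBijective _ (Finite.injective_iff_bijective.mp (shuffleFun_inj hN I hI))

lemma shuffle_apply_inl (hN : N = n + m) (I : Finset (Fin N)) (hI : I.card = n) (a : Fin n) :
    shuffle hN I hI (sumEquiv hN (Sum.inl a)) = I.orderEmbOfFin hI a := by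
  simp [shuffle, shuffleFun]

lemma shuffle_apply_inr (hN : N = n + m) (I : Finset (Fin N)) (hI : I.card = n) (b : Fin m) :
    shuffle hN I hI (sumEquiv hN (Sum.inr b)) = Iᶜ.orderEmbOfFin (card_compl_of hN hI) b := by
  simp [shuffle, shuffleFun]



lemma card_filter_lt_fin (hn : n ≤ N) :
    (univ.filter fun x : Fin N => (x : ℕ) < n).card = n := by
  have hmap : (univ.filter fun x : Fin N => (x : ℕ) < n) =
      Finset.map ⟨fun a : Fin n => ⟨(a : ℕ), lt_of_lt_of_le a.2 hn⟩,
        fun a b hab => by simpa [Fin.ext_iff] using hab⟩ univ := by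
    ext x
    simp only [mem_filter, mem_univ, true_and, Finset.mem_map, Function.Embedding.coeFn_mk]
    constructor
    · intro hx; exact ⟨⟨(x : ℕ), hx⟩, rfl⟩
    · rintro ⟨a, rfl⟩; exact a.2
  rw [hmap, Finset.card_map, Finset.card_univ, Fintype.card_fin]

lemma sum_filter_lt_fin (hn : n ≤ N) :
    (∑ i ∈ (univ.filter fun x : Fin N => (x : ℕ) < n), ((i : ℕ) + 1)) = n * (n + 1) / 2 := by
  have hmap : (univ.filter fun x : Fin N => (x : ℕ) < n) =
      Finset.map ⟨fun a : Fin n => ⟨(a : ℕ), lt_of_lt_of_le a.2 hn⟩,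
        fun a b hab => by simpa [Fin.ext_iff] using hab⟩ univ := by
    ext x
    simp only [mem_filter, mem_univ, true_and, Finset.mem_map, Function.Embedding.coeFn_mk]
    constructor
    · intro hx; exact ⟨⟨(x : ℕ), hx⟩, rfl⟩
    · rintro ⟨a, rfl⟩; exact a.2
  rw [hmap, Finset.sum_map]
  change (∑ a : Fin n, ((a : ℕ) + 1)) = n * (n + 1) / 2
  rw [Fin.sum_univ_eq_sum_range (fun a => a + 1)]
  have h2 : (∑ a ∈ Finset.range n, (a + 1)) * 2 = n * (n + 1) := by
    rw [Finset.sum_add_distrib, Finset.sum_const, Finset.card_range, smul_eq_mul, mul_one,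
      add_mul, Finset.sum_range_id_mul_two]
    cases n with
    | zero => simp
    | succ k => simp only [Nat.succ_sub_one]; ring
  omega

lemma swap_lt_swap_right {a b x y : Fin N} (hab : (a : ℕ) + 1 = (b : ℕ))
    (hx : x ≠ b) (hy : y ≠ b) (hxy : x < y) :
    Equiv.swap a b x < Equiv.swap a b y := by
  rcases eq_or_ne x a with rfl | hxa
  · rw [Equiv.swap_apply_left, Equiv.swap_apply_of_ne_of_ne (ne_of_gt hxy) hy]
    rw [Fin.lt_def] at hxy ⊢
    simp only [ne_eq, Fin.ext_iff] at hy
    omega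
  · rcases eq_or_ne y a with rfl | hya
    · rw [Equiv.swap_apply_of_ne_of_ne hxa hx, Equiv.swap_apply_left]
      rw [Fin.lt_def] at hxy ⊢
      simp only [ne_eq, Fin.ext_iff] at hx hxa
      omega
    · rw [Equiv.swap_apply_of_ne_of_ne hxa hx, Equiv.swap_apply_of_ne_of_ne hya hy]
      exact hxy

lemma swap_lt_swap_left {a b x y : Fin N} (hab : (a : ℕ) + 1 = (b : ℕ))
    (hx : x ≠ a) (hy : y ≠ a) (hxy : x < y) :
    Equiv.swap a b x < Equiv.swap a b y := by
  rcases eq_or_ne x b with rfl | hxb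
  · rw [Equiv.swap_apply_right, Equiv.swap_apply_of_ne_of_ne hy (ne_of_gt hxy)]
    rw [Fin.lt_def] at hxy ⊢
    omega
  · rcases eq_or_ne y b with rfl | hyb
    · rw [Equiv.swap_apply_of_ne_of_ne hx hxb, Equiv.swap_apply_right]
      rw [Fin.lt_def] at hxy ⊢
      simp only [ne_eq, Fin.ext_iff] at hx hy
      omega
    · rw [Equiv.swap_apply_of_ne_of_ne hx hxb, Equiv.swap_apply_of_ne_of_ne hy hyb]
      exact hxy

lemma sign_shuffle (hN : N = n + m) (I : Finset (Fin N)) (hI : I.card = n) :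
    ((Equiv.Perm.sign (shuffle hN I hI) : ℤ)) = vSign n I := by
  suffices h : ∀ (t : ℕ) (I : Finset (Fin N)) (hI : I.card = n), (∑ i ∈ I, (i : ℕ)) = t →
      ((Equiv.Perm.sign (shuffle hN I hI) : ℤ)) = vSign n I from h _ I hI rfl
  intro t
  induction t using Nat.strong_induction_on with
  | _ t ih =>
    intro I hI hsum
    have hn_le : n ≤ N := by omega
    by_cases hbase : ∀ x ∈ I, (x : ℕ) < n
    · have hIeq : I = univ.filter fun x : Fin N => (x : ℕ) < n := by
        apply Finset.eq_of_subset_of_card_le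
        · intro x hx
          simp only [mem_filter, mem_univ, true_and]
          exact hbase x hx
        · rw [card_filter_lt_fin hn_le, hI]
      subst hIeq
      have hsh : shuffle hN _ hI = Equiv.refl (Fin N) := by
        apply Equiv.ext
        intro x
        obtain ⟨y, rfl⟩ := (sumEquiv hN).surjective x
        simp only [Equiv.refl_apply]
        cases y with
        | inl a =>
          rw [shuffle_apply_inl]
          have huniq : (fun a : Fin n => sumEquiv hN (Sum.inl a)) =
              ⇑((univ.filter fun x : Fin N => (x : ℕ) < n).orderEmbOfFin hI) := by
            apply Finset.orderEmbOfFin_unique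
            · intro u
              simp only [mem_filter, mem_univ, true_and, sumEquiv_inl]
              exact u.2
            · intro u v huv
              rw [Fin.lt_def, sumEquiv_inl, sumEquiv_inl]
              exact huv
          rw [← huniq]
        | inr b =>
          rw [shuffle_apply_inr]
          have huniq : (fun b : Fin m => sumEquiv hN (Sum.inr b)) =
              ⇑((univ.filter fun x : Fin N => (x : ℕ) < n)ᶜ.orderEmbOfFin
                (card_compl_of hN hI)) := by
            apply Finset.orderEmbOfFin_unique
            · intro u
              simp only [Finset.mem_compl, mem_filter, mem_univ, true_and, sumEquiv_inr]
              omega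
            · intro u v huv
              rw [Fin.lt_def, sumEquiv_inr, sumEquiv_inr]
              omega
          rw [← huniq]
      rw [hsh, vSign, sum_filter_lt_fin hn_le, Equiv.Perm.sign_refl,
        Even.neg_one_pow ⟨n * (n + 1) / 2, rfl⟩]
      norm_num
    · push_neg at hbase
      obtain ⟨x, hxI, hxn⟩ := hbase
      have hSne : (univ.filter fun y : Fin N => y < x ∧ y ∉ I).Nonempty := by
        by_contra hcon
        rw [Finset.not_nonempty_iff_eq_empty] at hcon
        have hall : ∀ y : Fin N, y < x → y ∈ I := by
          intro y hy
          by_contra hy2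
          have hmem : y ∈ univ.filter fun y : Fin N => y < x ∧ y ∉ I := by
            simp [hy, hy2]
          rw [hcon] at hmem
          exact absurd hmem (Finset.notMem_empty y)
        have hsub : insert x (univ.filter fun y : Fin N => (y : ℕ) < n) ⊆ I := by
          intro y hy
          rcases Finset.mem_insert.mp hy with rfl | hy
          · exact hxI
          · apply hall
            simp only [mem_filter, mem_univ, true_and] at hy
            rw [Fin.lt_def]; omega
        have hcard := Finset.card_le_card hsub
        rw [Finset.card_insert_of_notMem
            (by simp only [mem_filter, mem_univ, true_and]; omega),
          card_filter_lt_fin hn_le, hI] at hcard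
        omega
      set S := univ.filter (fun y : Fin N => y < x ∧ y ∉ I) with hSdef
      set a : Fin N := S.max' hSne with ha
      have haS : a ∈ S := S.max'_mem hSne
      have hax : a < x := by
        have := (mem_filter.mp haS).2.1; exact this
      have haI : a ∉ I := (mem_filter.mp haS).2.2
      have hbN : (a : ℕ) + 1 < N := by
        have h2 := x.2
        rw [Fin.lt_def] at hax
        omega
      set b : Fin N := ⟨(a : ℕ) + 1, hbN⟩ with hb
      have hab : (a : ℕ) + 1 = (b : ℕ) := rfl
      have habne : a ≠ b := by
        simp only [ne_eq, Fin.ext_iff]; omega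
      have hbI : b ∈ I := by
        rcases eq_or_ne b x with heq | hbx
        · rw [heq]; exact hxI
        · by_contra hbI'
          have hbx' : b < x := by
            rw [Fin.lt_def] at hax ⊢
            simp only [ne_eq, Fin.ext_iff] at hbx
            simp only [hb]
            omega
          have hbS : b ∈ S := by
            rw [hSdef]; simp only [mem_filter, mem_univ, true_and]
            exact ⟨hbx', hbI'⟩
          have hle := S.le_max' b hbS
          rw [← ha, Fin.le_def] at hle
          simp only [hb] at hle
          omega
      set I' : Finset (Fin N) := insert a (I.erase b) with hI'def
      have haE : a ∉ I.erase b := fun h => haI (Finset.mem_of_mem_erase h)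
      have hnpos : 0 < n := by
        rw [← hI]
        exact Finset.card_pos.mpr ⟨b, hbI⟩
      have hI' : I'.card = n := by
        rw [hI'def, Finset.card_insert_of_notMem haE, Finset.card_erase_of_mem hbI, hI]
        omega
      have hbI' : b ∉ I' := by
        rw [hI'def]
        simp only [Finset.mem_insert, Finset.mem_erase]
        push_neg
        exact ⟨habne.symm, fun h => absurd h (fun h2 => (h rfl).elim)⟩
      have haI'' : a ∈ I' := Finset.mem_insert_self _ _
      have hsumI : (∑ i ∈ I, (i : ℕ)) = (∑ i ∈ I.erase b, (i : ℕ)) + ((a : ℕ) + 1) := by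
        rw [← Finset.sum_erase_add I _ hbI]
      have hsumI' : (∑ i ∈ I', (i : ℕ)) = (∑ i ∈ I.erase b, (i : ℕ)) + (a : ℕ) := by
        rw [hI'def, Finset.sum_insert haE]; ring
      have hsum1I : (∑ i ∈ I, ((i : ℕ) + 1)) = (∑ i ∈ I.erase b, ((i : ℕ) + 1)) + ((a : ℕ) + 2) := by
        rw [← Finset.sum_erase_add I _ hbI]
      have hsum1I' : (∑ i ∈ I', ((i : ℕ) + 1)) =
          (∑ i ∈ I.erase b, ((i : ℕ) + 1)) + ((a : ℕ) + 1) := by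
        rw [hI'def, Finset.sum_insert haE]; ring
      have hvs : vSign n I = - vSign n I' := by
        rw [vSign, vSign,
          show (∑ i ∈ I, ((i : ℕ) + 1)) + n * (n + 1) / 2 =
            ((∑ i ∈ I', ((i : ℕ) + 1)) + n * (n + 1) / 2) + 1 by omega,
          pow_succ]
        ring
      have hkey : ∀ z : Fin N, shuffle hN I hI z = Equiv.swap a b (shuffle hN I' hI' z) := by
        intro z
        obtain ⟨y, rfl⟩ := (sumEquiv hN).surjective z
        cases y with
        | inl u =>
          rw [shuffle_apply_inl, shuffle_apply_inl]
          have hne_b : ∀ v : Fin n, I'.orderEmbOfFin hI' v ≠ b :=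
            fun v hv => hbI' (hv ▸ I'.orderEmbOfFin_mem hI' v)
          have huniq : (fun v : Fin n => Equiv.swap a b (I'.orderEmbOfFin hI' v)) =
              ⇑(I.orderEmbOfFin hI) := by
            apply Finset.orderEmbOfFin_unique
            · intro v
              have hv := I'.orderEmbOfFin_mem hI' v
              rcases eq_or_ne (I'.orderEmbOfFin hI' v) a with he | he
              · rw [he, Equiv.swap_apply_left]; exact hbI
              · rw [Equiv.swap_apply_of_ne_of_ne he (hne_b v)]
                rcases Finset.mem_insert.mp hv with hv | hv
                · exact absurd hv he
                · exact Finset.mem_of_mem_erase hv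
            · intro u v huv
              exact swap_lt_swap_right hab (hne_b u) (hne_b v)
                ((I'.orderEmbOfFin hI').strictMono huv)
          exact (congrFun huniq u).symm
        | inr u =>
          rw [shuffle_apply_inr, shuffle_apply_inr]
          have hne_a : ∀ v : Fin m, I'ᶜ.orderEmbOfFin (card_compl_of hN hI') v ≠ a :=
            fun v hv => (Finset.mem_compl.mp
              (I'ᶜ.orderEmbOfFin_mem (card_compl_of hN hI') v)) (hv ▸ haI'')
          have huniq : (fun v : Fin m =>
              Equiv.swap a b (I'ᶜ.orderEmbOfFin (card_compl_of hN hI') v)) =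
              ⇑(Iᶜ.orderEmbOfFin (card_compl_of hN hI)) := by
            apply Finset.orderEmbOfFin_unique
            · intro v
              have hv := Finset.mem_compl.mp (I'ᶜ.orderEmbOfFin_mem (card_compl_of hN hI') v)
              rcases eq_or_ne (I'ᶜ.orderEmbOfFin (card_compl_of hN hI') v) b with he | he
              · rw [he, Equiv.swap_apply_right]
                exact Finset.mem_compl.mpr haI
              · rw [Equiv.swap_apply_of_ne_of_ne (hne_a v) he]
                apply Finset.mem_compl.mpr
                intro hmem
                exact hv (Finset.mem_insert.mpr (Or.inr (Finset.mem_erase.mpr ⟨he, hmem⟩)))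
            · intro u v huv
              exact swap_lt_swap_left hab (hne_a u) (hne_a v)
                ((I'ᶜ.orderEmbOfFin (card_compl_of hN hI')).strictMono huv)
          exact (congrFun huniq u).symm
      have hshuffle_eq : shuffle hN I hI = Equiv.swap a b * shuffle hN I' hI' :=
        Equiv.ext hkey
      have ht' : (∑ i ∈ I', (i : ℕ)) < t := by omega
      rw [hshuffle_eq, Equiv.Perm.sign_mul, Equiv.Perm.sign_swap habne, hvs]
      have hih := ih _ ht' I' hI' rfl
      push_cast
      rw [hih]
      ring

lemma mem_iff_exists_orderEmbOfFin {k : ℕ} (I : Finset (Fin N)) (hI : I.card = k)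
    (g : Equiv.Perm (Fin k)) (x : Fin N) :
    x ∈ I ↔ ∃ a, I.orderEmbOfFin hI (g a) = x := by
  constructor
  · intro hx
    have hx' : x ∈ Set.range (I.orderEmbOfFin hI) := by
      rw [Finset.range_orderEmbOfFin]; exact hx
    obtain ⟨c, hc⟩ := hx'
    exact ⟨g.symm c, by simp [hc]⟩
  · rintro ⟨a, rfl⟩
    exact I.orderEmbOfFin_mem hI (g a)

lemma laplace {R : Type*} [CommRing R] (hN : N = n + m)
    (B : Matrix (Fin N) (Fin n) R) (C : Matrix (Fin N) (Fin m) R) :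
    ∑ I : {I : Finset (Fin N) // I.card = n},
        ((Equiv.Perm.sign (shuffle hN I.1 I.2) : ℤ) : R) *
          ((B.submatrix (I.1.orderEmbOfFin I.2) id).det *
            (C.submatrix ((I.1)ᶜ.orderEmbOfFin (card_compl_of hN I.2)) id).det) =
      (Matrix.of fun i j => Sum.elim (B i) (C i) ((sumEquiv hN).symm j)).det := by
  classical
  set e := sumEquiv hN with he
  set M : Matrix (Fin N) (Fin N) R := Matrix.of fun i j => Sum.elim (B i) (C i) (e.symm j)
    with hM
  let Θ : ({I : Finset (Fin N) // I.card = n} × (Equiv.Perm (Fin n) × Equiv.Perm (Fin m))) →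
      Equiv.Perm (Fin N) :=
    fun z => shuffle hN z.1.1 z.1.2 * (e.permCongr (Equiv.sumCongr z.2.1 z.2.2))
  have hΘ_inl : ∀ z a, Θ z (e (Sum.inl a)) = z.1.1.orderEmbOfFin z.1.2 (z.2.1 a) := by
    intro z a
    show shuffle hN z.1.1 z.1.2 ((e.permCongr (Equiv.sumCongr z.2.1 z.2.2)) (e (Sum.inl a))) = _
    rw [Equiv.permCongr_apply, Equiv.symm_apply_apply]
    simp only [Equiv.sumCongr_apply, Sum.map_inl]
    rw [shuffle_apply_inl]
  have hΘ_inr : ∀ z b, Θ z (e (Sum.inr b)) =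
      (z.1.1)ᶜ.orderEmbOfFin (card_compl_of hN z.1.2) (z.2.2 b) := by
    intro z b
    show shuffle hN z.1.1 z.1.2 ((e.permCongr (Equiv.sumCongr z.2.1 z.2.2)) (e (Sum.inr b))) = _
    rw [Equiv.permCongr_apply, Equiv.symm_apply_apply]
    simp only [Equiv.sumCongr_apply, Sum.map_inr]
    rw [shuffle_apply_inr]
  have hΘ_inj : Function.Injective Θ := by
    rintro ⟨⟨I, hI⟩, g, h⟩ ⟨⟨I', hI'⟩, g', h'⟩ heq
    have hII : I = I' := by
      ext x
      rw [mem_iff_exists_orderEmbOfFin I hI g, mem_iff_exists_orderEmbOfFin I' hI' g']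
      constructor
      · rintro ⟨a, ha⟩
        exact ⟨a, by rw [← hΘ_inl ⟨⟨I', hI'⟩, (g', h')⟩ a, ← heq, hΘ_inl]; exact ha⟩
      · rintro ⟨a, ha⟩
        exact ⟨a, by rw [← hΘ_inl ⟨⟨I, hI⟩, (g, h)⟩ a, heq, hΘ_inl]; exact ha⟩
    subst hII
    have hg : g = g' := by
      apply Equiv.ext
      intro a
      apply (I.orderEmbOfFin hI).injective
      rw [← hΘ_inl ⟨⟨I, hI⟩, (g, h)⟩ a, ← hΘ_inl ⟨⟨I, hI'⟩, (g', h')⟩ a, heq]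
    have hh : h = h' := by
      apply Equiv.ext
      intro b
      apply (Iᶜ.orderEmbOfFin (card_compl_of hN hI)).injective
      rw [← hΘ_inr ⟨⟨I, hI⟩, (g, h)⟩ b, ← hΘ_inr ⟨⟨I, hI'⟩, (g', h')⟩ b, heq]
    subst hg
    subst hh
    rfl
  have hcard : Fintype.card ({I : Finset (Fin N) // I.card = n} ×
      (Equiv.Perm (Fin n) × Equiv.Perm (Fin m))) = Fintype.card (Equiv.Perm (Fin N)) := by
    rw [Fintype.card_prod, Fintype.card_prod, Fintype.card_perm, Fintype.card_perm,
      Fintype.card_perm, Fintype.card_finset_len]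
    simp only [Fintype.card_fin]
    have h1 : n ≤ N := by omega
    have h2 := Nat.choose_mul_factorial_mul_factorial h1
    have h3 : N - n = m := by omega
    rw [h3] at h2
    rw [← h2]; ring
  have hΘ_bij : Function.Bijective Θ :=
    (Fintype.bijective_iff_injective_and_card Θ).mpr ⟨hΘ_inj, hcard⟩
  have hterm : ∀ z, (((Equiv.Perm.sign (Θ z) : ℤ) : R) * ∏ j, M (Θ z j) j)
      = ((Equiv.Perm.sign (shuffle hN z.1.1 z.1.2) : ℤ) : R) *
        ((((Equiv.Perm.sign z.2.1 : ℤ) : R) *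
            ∏ a, B (z.1.1.orderEmbOfFin z.1.2 (z.2.1 a)) a) *
         (((Equiv.Perm.sign z.2.2 : ℤ) : R) *
            ∏ b, C ((z.1.1)ᶜ.orderEmbOfFin (card_compl_of hN z.1.2) (z.2.2 b)) b)) := by
    intro z
    have hsign : Equiv.Perm.sign (Θ z) =
        Equiv.Perm.sign (shuffle hN z.1.1 z.1.2) *
          (Equiv.Perm.sign z.2.1 * Equiv.Perm.sign z.2.2) := by
      show Equiv.Perm.sign
        (shuffle hN z.1.1 z.1.2 * (e.permCongr (Equiv.sumCongr z.2.1 z.2.2))) = _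
      rw [Equiv.Perm.sign_mul, Equiv.Perm.sign_permCongr, Equiv.Perm.sign_sumCongr]
    have hprod : (∏ j, M (Θ z j) j) =
        (∏ a, B (z.1.1.orderEmbOfFin z.1.2 (z.2.1 a)) a) *
        (∏ b, C ((z.1.1)ᶜ.orderEmbOfFin (card_compl_of hN z.1.2) (z.2.2 b)) b) := by
      rw [← Equiv.prod_comp e (fun j => M (Θ z j) j)]
      rw [Fintype.prod_sum_type]
      congr 1
      · apply Finset.prod_congr rfl
        intro a _
        rw [hΘ_inl]
        simp [hM]
      · apply Finset.prod_congr rfl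
        intro b _
        rw [hΘ_inr]
        simp [hM]
    rw [hsign, hprod]
    simp only [Units.val_mul, Int.cast_mul]
    ring
  calc ∑ I : {I : Finset (Fin N) // I.card = n},
        ((Equiv.Perm.sign (shuffle hN I.1 I.2) : ℤ) : R) *
          ((B.submatrix (I.1.orderEmbOfFin I.2) id).det *
            (C.submatrix ((I.1)ᶜ.orderEmbOfFin (card_compl_of hN I.2)) id).det)
      = ∑ z : ({I : Finset (Fin N) // I.card = n} ×
          (Equiv.Perm (Fin n) × Equiv.Perm (Fin m))),
            ((Equiv.Perm.sign (Θ z) : ℤ) : R) * ∏ j, M (Θ z j) j := by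
        rw [Fintype.sum_prod_type]
        apply Finset.sum_congr rfl
        intro I _
        rw [Matrix.det_apply', Matrix.det_apply', Finset.sum_mul_sum, Finset.mul_sum]
        rw [Fintype.sum_prod_type]
        apply Finset.sum_congr rfl
        intro g _
        rw [Finset.mul_sum]
        apply Finset.sum_congr rfl
        intro h _
        rw [hterm ⟨I, (g, h)⟩]
        simp only [Matrix.submatrix_apply, id_eq]
    _ = ∑ σ : Equiv.Perm (Fin N), ((Equiv.Perm.sign σ : ℤ) : R) * ∏ j, M (σ j) j :=
        Fintype.sum_bijective Θ hΘ_bij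
          (fun z => ((Equiv.Perm.sign (Θ z) : ℤ) : R) * ∏ j, M (Θ z j) j)
          (fun σ => ((Equiv.Perm.sign σ : ℤ) : R) * ∏ j, M (σ j) j)
          (fun z => rfl)
    _ = M.det := (Matrix.det_apply' M).symm

lemma minor_eq_det {R : Type*} [CommRing R] {N' M' : ℕ} (A : Matrix (Fin N') (Fin M') R)
    {I : Finset (Fin N')} {J : Finset (Fin M')} {k : ℕ} (hI : I.card = k) (hJ : J.card = k) :
    minor A I J = (A.submatrix (I.orderEmbOfFin hI) (J.orderEmbOfFin hJ)).det := by
  subst hI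
  rw [minor, dif_pos hJ]

lemma sum_minor_vanish {R : Type*} [CommRing R] (hN : N = n + m) {M' : ℕ}
    (A : Matrix (Fin N) (Fin M') R) (J K : Finset (Fin M'))
    (hJ : J.card = n) (hK : K.card = m) (c : Fin M') (hcJ : c ∈ J) (hcK : c ∈ K) :
    ∑ I : {I : Finset (Fin N) // I.card = n},
        minor A I.1 J * (((vSign n I.1 : ℤ) : R) * minor A (I.1)ᶜ K) = 0 := by
  have hstep : ∀ I : {I : Finset (Fin N) // I.card = n},
      minor A I.1 J * (((vSign n I.1 : ℤ) : R) * minor A (I.1)ᶜ K)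
      = ((Equiv.Perm.sign (shuffle hN I.1 I.2) : ℤ) : R) *
          (((A.submatrix id (J.orderEmbOfFin hJ)).submatrix (I.1.orderEmbOfFin I.2) id).det *
           ((A.submatrix id (K.orderEmbOfFin hK)).submatrix
              ((I.1)ᶜ.orderEmbOfFin (card_compl_of hN I.2)) id).det) := by
    intro I
    rw [minor_eq_det A I.2 hJ, minor_eq_det A (card_compl_of hN I.2) hK, sign_shuffle hN I.1 I.2]
    rw [Matrix.submatrix_submatrix, Matrix.submatrix_submatrix]
    simp only [Function.comp_id, Function.id_comp]
    ring
  rw [Finset.sum_congr rfl (fun I _ => hstep I), laplace hN]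
  obtain ⟨a0, ha0⟩ : ∃ a, J.orderEmbOfFin hJ a = c := by
    have h1 : c ∈ Set.range (J.orderEmbOfFin hJ) := by
      rw [Finset.range_orderEmbOfFin]; exact hcJ
    exact h1
  obtain ⟨b0, hb0⟩ : ∃ b, K.orderEmbOfFin hK b = c := by
    have h1 : c ∈ Set.range (K.orderEmbOfFin hK) := by
      rw [Finset.range_orderEmbOfFin]; exact hcK
    exact h1
  apply Matrix.det_zero_of_column_eq
    (i := sumEquiv hN (Sum.inl a0)) (j := sumEquiv hN (Sum.inr b0))
  · intro hcon
    exact Sum.inl_ne_inr ((sumEquiv hN).injective hcon)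
  · intro r
    simp only [Matrix.of_apply, Equiv.symm_apply_apply, Sum.elim_inl, Sum.elim_inr,
      Matrix.submatrix_apply, id_eq, ha0, hb0]

lemma sum_ite_lt (n c : ℕ) (hc : c ≤ n) :
    (∑ b : Fin n, if (b : ℕ) < c then 1 else 0) = c := by
  rw [Fin.sum_univ_eq_sum_range (fun i => if i < c then 1 else 0)]
  rw [← Finset.card_filter]
  have h1 : (Finset.range n).filter (· < c) = Finset.range c := by
    ext x
    simp only [Finset.mem_filter, Finset.mem_range]
    omega
  rw [h1, Finset.card_range]

lemma iotaSet_card (s n : ℕ) (hn : 0 < n) (lam : Fin s → ℕ) (hlam : (∑ i, lam i) = n) :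
    (iotaSet s n lam).card = n := by
  have hle : ∀ a : Fin s, lam a ≤ n := by
    intro a
    rw [← hlam]
    exact Finset.single_le_sum (fun i _ => Nat.zero_le _) (Finset.mem_univ a)
  rw [iotaSet, Finset.card_filter]
  rw [← Equiv.sum_comp (finProdFinEquiv : Fin s × Fin n ≃ Fin (s * n))]
  rw [Fintype.sum_prod_type]
  have hstep : ∀ (a : Fin s) (b : Fin n),
      (if ((((finProdFinEquiv (a, b) : Fin (s * n))) : ℕ) % n <
          if h : (((finProdFinEquiv (a, b) : Fin (s * n))) : ℕ) / n < s
          then lam ⟨(((finProdFinEquiv (a, b) : Fin (s * n))) : ℕ) / n, h⟩ else 0)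
        then 1 else 0)
      = (if (b : ℕ) < lam a then 1 else 0) := by
    intro a b
    have hval : (((finProdFinEquiv (a, b) : Fin (s * n))) : ℕ) = (b : ℕ) + n * (a : ℕ) := by
      simp [finProdFinEquiv]
    have hdiv : (((finProdFinEquiv (a, b) : Fin (s * n))) : ℕ) / n = (a : ℕ) := by
      rw [hval, Nat.add_mul_div_left _ _ hn, Nat.div_eq_of_lt b.2, Nat.zero_add]
    have hmod : (((finProdFinEquiv (a, b) : Fin (s * n))) : ℕ) % n = (b : ℕ) := by
      rw [hval, Nat.add_mul_mod_self_left, Nat.mod_eq_of_lt b.2]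
    have hcond : (if h : (((finProdFinEquiv (a, b) : Fin (s * n))) : ℕ) / n < s
        then lam ⟨(((finProdFinEquiv (a, b) : Fin (s * n))) : ℕ) / n, h⟩ else 0) = lam a := by
      simp only [hdiv]
      rw [dif_pos a.isLt]
    rw [hmod, hcond]
  rw [Finset.sum_congr rfl
    (fun a _ => Finset.sum_congr rfl (fun b _ => hstep a b))]
  rw [Finset.sum_congr rfl (fun a _ => sum_ite_lt n (lam a) (hle a))]
  exact hlam

lemma phiSet_card (s n : ℕ) (hn : 0 < n) (k : Fin s) (μ : Fin s → ℕ)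
    (hμ : (∑ i, μ i) = n) (hk : 0 < μ k) : (phiSet s n k μ).card = s - 1 := by
  have hlt : ∀ a : Fin s, a ≠ k → μ a < n := by
    intro a hak
    have h1 : μ k + ∑ i ∈ univ.erase k, μ i = n := by
      rw [Finset.add_sum_erase _ _ (Finset.mem_univ k), hμ]
    have h2 : μ a ≤ ∑ i ∈ univ.erase k, μ i :=
      Finset.single_le_sum (fun i _ => Nat.zero_le _)
        (Finset.mem_erase.mpr ⟨hak, Finset.mem_univ a⟩)
    omega
  rw [phiSet, Finset.card_filter]
  rw [← Equiv.sum_comp (finProdFinEquiv : Fin s × Fin n ≃ Fin (s * n))]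
  rw [Fintype.sum_prod_type]
  have hstep : ∀ (a : Fin s) (b : Fin n),
      (if ((((finProdFinEquiv (a, b) : Fin (s * n))) : ℕ) / n ≠ (k : ℕ) ∧
          (((finProdFinEquiv (a, b) : Fin (s * n))) : ℕ) % n =
            (if h : (((finProdFinEquiv (a, b) : Fin (s * n))) : ℕ) / n < s
             then μ ⟨(((finProdFinEquiv (a, b) : Fin (s * n))) : ℕ) / n, h⟩ else n))
        then 1 else 0)
      = (if ((a : ℕ) ≠ (k : ℕ) ∧ (b : ℕ) = μ a) then 1 else 0) := by
    intro a b
    have hval : (((finProdFinEquiv (a, b) : Fin (s * n))) : ℕ) = (b : ℕ) + n * (a : ℕ) := by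
      simp [finProdFinEquiv]
    have hdiv : (((finProdFinEquiv (a, b) : Fin (s * n))) : ℕ) / n = (a : ℕ) := by
      rw [hval, Nat.add_mul_div_left _ _ hn, Nat.div_eq_of_lt b.2, Nat.zero_add]
    have hmod : (((finProdFinEquiv (a, b) : Fin (s * n))) : ℕ) % n = (b : ℕ) := by
      rw [hval, Nat.add_mul_mod_self_left, Nat.mod_eq_of_lt b.2]
    have hcond : (if h : (((finProdFinEquiv (a, b) : Fin (s * n))) : ℕ) / n < s
        then μ ⟨(((finProdFinEquiv (a, b) : Fin (s * n))) : ℕ) / n, h⟩ else n) = μ a := by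
      simp only [hdiv]
      rw [dif_pos a.isLt]
    rw [hmod, hcond, hdiv]
  rw [Finset.sum_congr rfl
    (fun a _ => Finset.sum_congr rfl (fun b _ => hstep a b))]
  have hinner : ∀ a : Fin s,
      (∑ b : Fin n, if ((a : ℕ) ≠ (k : ℕ) ∧ (b : ℕ) = μ a) then 1 else 0)
      = if a = k then 0 else 1 := by
    intro a
    rcases eq_or_ne a k with rfl | hak
    · simp
    · have hke : (a : ℕ) ≠ (k : ℕ) := fun h => hak (Fin.ext h)
      simp only [ne_eq, hke, not_false_eq_true, true_and, if_neg hak]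
      rw [Fin.sum_univ_eq_sum_range (fun i => if i = μ a then 1 else 0)]
      rw [← Finset.card_filter]
      have hsingle : (Finset.range n).filter (· = μ a) = {μ a} := by
        ext x
        simp only [Finset.mem_filter, Finset.mem_range, Finset.mem_singleton]
        constructor
        · rintro ⟨_, h⟩; exact h
        · rintro rfl; exact ⟨hlt a hak, rfl⟩
      rw [hsingle, Finset.card_singleton]
  rw [Finset.sum_congr rfl (fun a _ => hinner a)]
  rw [Finset.sum_congr rfl (fun a _ => (ite_not (a = k) 1 0).symm)]
  rw [← Finset.card_filter]
  rw [Finset.filter_ne', Finset.card_erase_of_mem (Finset.mem_univ k), Finset.card_univ,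
    Fintype.card_fin]

end InnerVanishAux

/-- for `λ ∈ Z_{s,n}` and `μ ∈ P^{(k)}` with `λ ⋠_k μ`,
`⟨V_{ι(λ)}(A), V̄_{φ^{(k)}(μ)}(A)⟩ = 0` for every `(s+n−1)×sn` matrix `A`. -/
theorem inner_vanish (s n : ℕ) (hs : 0 < s) (hn : 0 < n)
    {R : Type*} [CommRing R] (A : Matrix (Fin (s + n - 1)) (Fin (s * n)) R)
    (k : Fin s) (lam μ : Fin s → ℕ)
    (hlam : (∑ i, lam i) = n) (hμ : (∑ i, μ i) = n) (hk : 0 < μ k)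
    (l : Fin s) (hl : l ≠ k) (hgt : μ l < lam l) :
    innerVV A (iotaSet s n lam) (phiSet s n k μ) = 0 := by
  have hlaml : lam l ≤ n := by
    rw [← hlam]
    exact Finset.single_le_sum (fun i _ => Nat.zero_le _) (Finset.mem_univ l)
  have hμl : μ l < n := lt_of_lt_of_le hgt hlaml
  have hcval : (l : ℕ) * n + μ l < s * n := by
    have h1 : (l : ℕ) + 1 ≤ s := l.2
    calc (l : ℕ) * n + μ l < (l : ℕ) * n + n := by omega
      _ = ((l : ℕ) + 1) * n := by ring
      _ ≤ s * n := Nat.mul_le_mul_right n h1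
  have hdiv : ((l : ℕ) * n + μ l) / n = (l : ℕ) := by
    rw [show (l : ℕ) * n + μ l = μ l + n * (l : ℕ) by ring, Nat.add_mul_div_left _ _ hn,
      Nat.div_eq_of_lt hμl, Nat.zero_add]
  have hmod : ((l : ℕ) * n + μ l) % n = μ l := by
    rw [show (l : ℕ) * n + μ l = μ l + n * (l : ℕ) by ring, Nat.add_mul_mod_self_left,
      Nat.mod_eq_of_lt hμl]
  have hcJ : (⟨(l : ℕ) * n + μ l, hcval⟩ : Fin (s * n)) ∈ iotaSet s n lam := by
    rw [iotaSet, Finset.mem_filter]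
    refine ⟨Finset.mem_univ _, ?_⟩
    show ((l : ℕ) * n + μ l) % n <
      if h : ((l : ℕ) * n + μ l) / n < s then lam ⟨((l : ℕ) * n + μ l) / n, h⟩ else 0
    simp only [hdiv, hmod]
    rw [dif_pos l.isLt]
    simpa using hgt
  have hcK : (⟨(l : ℕ) * n + μ l, hcval⟩ : Fin (s * n)) ∈ phiSet s n k μ := by
    rw [phiSet, Finset.mem_filter]
    refine ⟨Finset.mem_univ _, ?_⟩
    show ((l : ℕ) * n + μ l) / n ≠ (k : ℕ) ∧
      ((l : ℕ) * n + μ l) % n =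
        (if h : ((l : ℕ) * n + μ l) / n < s then μ ⟨((l : ℕ) * n + μ l) / n, h⟩ else n)
    simp only [hdiv, hmod]
    constructor
    · exact fun h => hl (Fin.ext h)
    · rw [dif_pos l.isLt]
  have hN : s + n - 1 = n + (s - 1) := by omega
  rw [innerVV]
  exact InnerVanishAux.sum_minor_vanish hN A _ _
    (InnerVanishAux.iotaSet_card s n hn lam hlam)
    (InnerVanishAux.phiSet_card s n hn k μ hμ hk)
    ⟨(l : ℕ) * n + μ l, hcval⟩ hcJ hcK
end

section
/- With π and Φ as above (Φ(μ) = φ^{(π(μ))}(μ)), the matrix (⟨V_{ι(λ)}(A), V̄_{Φ(μ)}(A)⟩)_{λ,μ ∈ Z_{s,n}} is block upper triangular with respect to the filtration by max part, and its determinant equals ± ∏_{μ ∈ Z_{s,n}} det A_{ι(μ) ⊔ Φ(μ)}. -/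
open Finset

/-- The set of "star positions" of `μ ∈ Z_{s,n}` in the stars-and-bars word:
this is the order isomorphism `Z_{s,n} ≅ ([s+n−1] choose n)` matching the
lexicographic orderings used for the rows and columns of `M(A)`. -/
def starPos (s n : ℕ) (μ : Fin s → ℕ) : Finset (Fin (s + n - 1)) :=
  Finset.univ.filter fun p => ∃ i : Fin s,
    (∑ l ∈ Finset.univ.filter (· < i), μ l) + (i : ℕ) ≤ (p : ℕ) ∧
      (p : ℕ) < (∑ l ∈ Finset.univ.filter (· ≤ i), μ l) + (i : ℕ)

/-- `Z_{s,n}`, the compositions of `n` into `s` nonnegative parts, as a type. -/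
abbrev Comp (s n : ℕ) := {μ : Fin s → ℕ // μ ∈ Finset.Nat.antidiagonalTuple s n}

/-- The matrix `M(A) = (det A^I_{ι(μ)})_{I,μ}`, with rows indexed through the
order isomorphism `starPos` (i.e. rows and columns in lexicographic order). -/
noncomputable def Mmat {R : Type*} [CommRing R] (s n : ℕ)
    (A : Matrix (Fin (s + n - 1)) (Fin (s * n)) R) :
    Matrix (Comp s n) (Comp s n) R :=
  Matrix.of fun ρ μ => minor A (starPos s n ρ.1) (iotaSet s n μ.1)

/-- The matrix `M̂(Φ,A) = ((−1)^{|I|−n(n+1)/2} det A^{Ī}_{Φ(μ)})_{I,μ}`, rows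
indexed through `starPos` as in `Mmat`. -/
noncomputable def Mhat {R : Type*} [CommRing R] (s n : ℕ)
    (A : Matrix (Fin (s + n - 1)) (Fin (s * n)) R)
    (Φ : (Fin s → ℕ) → Finset (Fin (s * n))) :
    Matrix (Comp s n) (Comp s n) R :=
  Matrix.of fun ρ μ =>
    ((vSign n (starPos s n ρ.1) : ℤ) : R) * minor A (starPos s n ρ.1)ᶜ (Φ μ.1)





section Aux

variable {R : Type*} [CommRing R]

lemma orderEmbOfFin_cast {α : Type*} [LinearOrder α] (s : Finset α) {k k' : ℕ}
    (h : s.card = k) (h' : s.card = k') (j : Fin k) :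
    s.orderEmbOfFin h j = s.orderEmbOfFin h' (Fin.cast (h.symm.trans h') j) := by
  exact Finset.orderEmbOfFin_eq_orderEmbOfFin_iff.mpr rfl

lemma minor_eq {N M : ℕ} (A : Matrix (Fin N) (Fin M) R) (I : Finset (Fin N))
    (J : Finset (Fin M)) {k : ℕ} (hI : I.card = k) (hJ : J.card = k) :
    minor A I J = (A.submatrix (I.orderEmbOfFin hI) (J.orderEmbOfFin hJ)).det := by
  rw [minor, dif_pos (hJ.trans hI.symm)]
  have heq : (A.submatrix (I.orderEmbOfFin rfl) (J.orderEmbOfFin (hJ.trans hI.symm)))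
      = ((A.submatrix (I.orderEmbOfFin hI) (J.orderEmbOfFin hJ)).submatrix
          (finCongr hI) (finCongr hI)) := by
    ext i j
    simp only [Matrix.submatrix_apply, finCongr_apply]
    congr 1
    all_goals exact Finset.orderEmbOfFin_eq_orderEmbOfFin_iff.mpr rfl
  rw [heq, Matrix.det_submatrix_equiv_self]

lemma minor_univ {N M : ℕ} (A : Matrix (Fin N) (Fin M) R) (L : Finset (Fin M))
    (hL : L.card = N) :
    minor A univ L = (A.submatrix id (L.orderEmbOfFin hL)).det := by
  have hu : (univ : Finset (Fin N)).card = N := by simp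
  rw [minor_eq A univ L hu hL]
  congr 1
  ext i j
  simp only [Matrix.submatrix_apply, id_eq]
  congr 1
  have : (id : Fin N → Fin N) = (univ : Finset (Fin N)).orderEmbOfFin hu :=
    Finset.orderEmbOfFin_unique hu (fun _ => mem_univ _) strictMono_id
  exact (congrFun this i).symm

/-- column/row selector: first `n` positions enumerate `J`, last `r` enumerate `K`. -/
def sel {M m n r : ℕ} (hm : m = n + r) (J K : Finset (Fin M))
    (hJ : J.card = n) (hK : K.card = r) : Fin m → Fin M := fun x =>
  if h : (x : ℕ) < n then J.orderEmbOfFin hJ ⟨x, h⟩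
  else K.orderEmbOfFin hK ⟨(x : ℕ) - n, by omega⟩

lemma card_compl_of_card {m n r : ℕ} (hm : m = n + r) {I : Finset (Fin m)}
    (hI : I.card = n) : Iᶜ.card = r := by
  rw [Finset.card_compl, hI, Fintype.card_fin]; omega

lemma sel_mem_union {M m n r : ℕ} (hm : m = n + r) (J K : Finset (Fin M))
    (hJ : J.card = n) (hK : K.card = r) (x : Fin m) :
    sel hm J K hJ hK x ∈ J ∪ K := by
  rw [sel]
  split
  · exact mem_union_left _ (Finset.orderEmbOfFin_mem _ _ _)
  · exact mem_union_right _ (Finset.orderEmbOfFin_mem _ _ _)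

lemma sel_injective {M m n r : ℕ} (hm : m = n + r) (J K : Finset (Fin M))
    (hJ : J.card = n) (hK : K.card = r) (hd : Disjoint J K) :
    Function.Injective (sel hm J K hJ hK) := by
  intro x y hxy
  rw [sel, sel] at hxy
  split at hxy <;> split at hxy
  · have := (Finset.orderEmbOfFin J hJ).injective hxy
    have := congrArg (fun z : Fin n => (z : ℕ)) this
    exact Fin.ext this
  · exact absurd hxy (hd.forall_ne_finset (Finset.orderEmbOfFin_mem J hJ _)
      (Finset.orderEmbOfFin_mem K hK _))
  · exact absurd hxy.symm (hd.forall_ne_finset (Finset.orderEmbOfFin_mem J hJ _)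
      (Finset.orderEmbOfFin_mem K hK _))
  · have := (Finset.orderEmbOfFin K hK).injective hxy
    have := congrArg (fun z : Fin r => (z : ℕ)) this
    simp only at this
    omega

end Aux

section Rho

variable {m n r : ℕ}

/-- The "riffle" permutation of `Fin m` determined by an `n`-subset `I`. -/
noncomputable def rho (hm : m = n + r) (I : Finset (Fin m)) (hI : I.card = n) : Equiv.Perm (Fin m) :=
  Equiv.ofBijective (sel hm I Iᶜ hI (card_compl_of_card hm hI))
    (Finite.injective_iff_bijective.mp
      (sel_injective hm I Iᶜ hI (card_compl_of_card hm hI) disjoint_compl_right))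

lemma rho_apply (hm : m = n + r) (I : Finset (Fin m)) (hI : I.card = n) (x : Fin m) :
    rho hm I hI x = sel hm I Iᶜ hI (card_compl_of_card hm hI) x := rfl

/-- first-n set -/
def firstn (m n : ℕ) : Finset (Fin m) := Finset.univ.filter (fun x => (x : ℕ) < n)

lemma mem_firstn {m n : ℕ} (x : Fin m) : x ∈ firstn m n ↔ (x : ℕ) < n := by
  simp [firstn]

lemma card_firstn (hnm : n ≤ m) : (firstn m n).card = n := by
  classical
  have : firstn m n = Finset.univ.image (fun j : Fin n => (⟨(j : ℕ), by omega⟩ : Fin m)) := by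
    ext x
    simp only [mem_firstn, Finset.mem_image, Finset.mem_univ, true_and]
    constructor
    · intro hx; exact ⟨⟨(x : ℕ), hx⟩, by simp⟩
    · rintro ⟨j, rfl⟩; exact j.isLt
  rw [this, Finset.card_image_of_injective _ (fun a b hab => by
    have := congrArg (fun z : Fin m => (z : ℕ)) hab
    exact Fin.ext this), Finset.card_univ, Fintype.card_fin]

lemma rho_firstn_eq_one (hm : m = n + r) (hF : (firstn m n).card = n) :
    rho hm (firstn m n) hF = 1 := by
  have hle : ∀ (h : (firstn m n).card = n) (j : Fin n),
      (firstn m n).orderEmbOfFin h j = ⟨(j : ℕ), by omega⟩ := by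
    intro h j
    have := Finset.orderEmbOfFin_unique h
      (f := fun j : Fin n => (⟨(j : ℕ), by omega⟩ : Fin m))
      (fun x => by simp [mem_firstn]) (fun a b hab => by
        exact Fin.mk_lt_mk.mpr hab)
    exact (congrFun this j).symm
  have hcc := card_compl_of_card hm hF
  have hge : ∀ (j : Fin r), ((firstn m n)ᶜ).orderEmbOfFin hcc j = ⟨n + (j : ℕ), by omega⟩ := by
    intro j
    have := Finset.orderEmbOfFin_unique hcc
      (f := fun j : Fin r => (⟨n + (j : ℕ), by omega⟩ : Fin m))
      (fun x => by simp [mem_firstn, Finset.mem_compl]) (fun a b hab => by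
        exact Fin.mk_lt_mk.mpr (Nat.add_lt_add_left hab n))
    exact (congrFun this j).symm
  ext x
  rw [rho_apply, sel]
  by_cases h : (x : ℕ) < n
  · rw [dif_pos h, hle hF ⟨(x : ℕ), h⟩]
    simp
  · rw [dif_neg h, hge ⟨(x : ℕ) - n, by omega⟩]
    simp
    omega

end Rho

section SignRho

variable {m n r : ℕ}

lemma exists_step (I : Finset (Fin m)) (hI : I.card = n) (hne : I ≠ firstn m n) :
    ∃ a : Fin m, a ∈ I ∧ 0 < (a : ℕ) ∧
      (⟨(a : ℕ) - 1, lt_of_le_of_lt (Nat.sub_le _ _) a.isLt⟩ : Fin m) ∉ I := by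
  by_contra hcon
  push_neg at hcon
  -- I is downward closed
  have dc : ∀ N : ℕ, ∀ a : Fin m, a ∈ I → (a : ℕ) = N → ∀ b : Fin m, (b : ℕ) ≤ N → b ∈ I := by
    intro N
    induction N with
    | zero =>
      intro a ha h0 b hb
      have : b = a := Fin.ext (by omega)
      rwa [this]
    | succ k ih =>
      intro a ha hk b hb
      rcases Nat.lt_or_ge (b : ℕ) (k + 1) with h | h
      · have hpa := hcon a ha (by omega)
        refine ih _ hpa (by show (a : ℕ) - 1 = k; omega) b (by omega)
      · have : b = a := Fin.ext (by omega)
        rwa [this]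
  -- hence I ⊆ firstn m n
  have hsub : I ⊆ firstn m n := by
    intro x hx
    rw [mem_firstn]
    by_contra hxn
    push_neg at hxn
    have hxm := x.isLt
    have himg : (Finset.univ.image (fun j : Fin (n + 1) =>
        (⟨(j : ℕ), by omega⟩ : Fin m))) ⊆ I := by
      intro y hy
      simp only [Finset.mem_image, Finset.mem_univ, true_and] at hy
      obtain ⟨j, rfl⟩ := hy
      exact dc (x : ℕ) x hx rfl _ (by show (j : ℕ) ≤ (x : ℕ); have := j.isLt; omega)
    have hcard := Finset.card_le_card himg
    rw [Finset.card_image_of_injective _ (fun a b hab => by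
      have := congrArg (fun z : Fin m => (z : ℕ)) hab
      exact Fin.ext this), Finset.card_univ, Fintype.card_fin, hI] at hcard
    omega
  have : I = firstn m n := Finset.eq_of_subset_of_card_le hsub (by
    rw [hI, card_firstn]
    · have := Finset.card_le_card hsub
      rw [hI] at this
      calc n ≤ (firstn m n).card := this
        _ ≤ m := by
          simpa using Finset.card_le_card (Finset.subset_univ (firstn m n)))
  exact hne this

lemma vsign_firstn (hnm : n ≤ m) :
    vSign n (firstn m n) = 1 := by
  have himg : firstn m n = Finset.univ.image (fun j : Fin n =>
      (⟨(j : ℕ), by omega⟩ : Fin m)) := by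
    ext x
    simp only [mem_firstn, Finset.mem_image, Finset.mem_univ, true_and]
    constructor
    · intro hx; exact ⟨⟨(x : ℕ), hx⟩, by simp⟩
    · rintro ⟨j, rfl⟩; exact j.isLt
  have hinj : Function.Injective (fun j : Fin n => (⟨(j : ℕ), by omega⟩ : Fin m)) := by
    intro a b hab
    have := congrArg (fun z : Fin m => (z : ℕ)) hab
    exact Fin.ext this
  have hsum : (∑ i ∈ firstn m n, ((i : ℕ) + 1)) = n * (n + 1) / 2 := by
    rw [himg, Finset.sum_image (fun a _ b _ h => hinj h)]
    have h1 : (∑ j : Fin n, ((j : ℕ) + 1)) = ∑ i ∈ Finset.range n, (i + 1) := by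
      rw [Finset.sum_range fun i => i + 1]
    have h2 : (∑ i ∈ Finset.range n, (i + 1)) = ∑ i ∈ Finset.range (n + 1), i := by
      rw [Finset.sum_range_succ' (fun i => i) n]
      simp
    have h3 : (∑ i ∈ Finset.range (n + 1), i) * 2 = (n + 1) * n :=
      Finset.sum_range_id_mul_two (n + 1)
    have h4 : (n * (n + 1) / 2) * 2 = n * (n + 1) :=
      Nat.div_mul_cancel (Nat.even_mul_succ_self n).two_dvd
    rw [show (n + 1) * n = n * (n + 1) from Nat.mul_comm _ _] at h3
    simp only [h1, h2]
    omega
  rw [vSign, hsum, ← two_mul]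
  exact Even.neg_one_pow ⟨_, (two_mul _)⟩

end SignRho

section SignRho2

variable {m n r : ℕ}

lemma swap_mono_aux {a pa v w : Fin m} (hpalt : (pa : ℕ) + 1 = (a : ℕ))
    (hva : v ≠ a) (hwa : w ≠ a) (hvw : v < w) :
    Equiv.swap pa a v < Equiv.swap pa a w := by
  have hvw' : (v : ℕ) < (w : ℕ) := hvw
  rcases eq_or_ne v pa with hv | hv
  · have hwpa : w ≠ pa := fun hc => by rw [hv, hc] at hvw; exact lt_irrefl _ hvw
    rw [hv, Equiv.swap_apply_left, Equiv.swap_apply_of_ne_of_ne hwpa hwa]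
    have h1 : (pa : ℕ) < (w : ℕ) := hv ▸ hvw'
    have h2 : (w : ℕ) ≠ (a : ℕ) := fun hc => hwa (Fin.ext hc)
    exact Fin.lt_def.mpr (by omega)
  · rcases eq_or_ne w pa with hw | hw
    · rw [hw, Equiv.swap_apply_left, Equiv.swap_apply_of_ne_of_ne hv hva]
      have h1 : (v : ℕ) < (pa : ℕ) := hw ▸ hvw'
      exact Fin.lt_def.mpr (by omega)
    · rw [Equiv.swap_apply_of_ne_of_ne hv hva, Equiv.swap_apply_of_ne_of_ne hw hwa]
      exact hvw

lemma swap_mono_aux' {a pa v w : Fin m} (hpalt : (pa : ℕ) + 1 = (a : ℕ))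
    (hvpa : v ≠ pa) (hwpa : w ≠ pa) (hvw : v < w) :
    Equiv.swap pa a v < Equiv.swap pa a w := by
  have hvw' : (v : ℕ) < (w : ℕ) := hvw
  rcases eq_or_ne v a with hv | hv
  · have hwa : w ≠ a := fun hc => by rw [hv, hc] at hvw; exact lt_irrefl _ hvw
    rw [hv, Equiv.swap_apply_right, Equiv.swap_apply_of_ne_of_ne hwpa hwa]
    have h1 : (a : ℕ) < (w : ℕ) := hv ▸ hvw'
    exact Fin.lt_def.mpr (by omega)
  · rcases eq_or_ne w a with hw | hw
    · rw [hw, Equiv.swap_apply_right, Equiv.swap_apply_of_ne_of_ne hvpa hv]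
      have h1 : (v : ℕ) < (a : ℕ) := hw ▸ hvw'
      have h2 : (v : ℕ) ≠ (pa : ℕ) := fun hc => hvpa (Fin.ext hc)
      exact Fin.lt_def.mpr (by omega)
    · rw [Equiv.swap_apply_of_ne_of_ne hvpa hv, Equiv.swap_apply_of_ne_of_ne hwpa hw]
      exact hvw

lemma a_notmem_step {I : Finset (Fin m)} {a pa : Fin m}
    (hpalt : (pa : ℕ) + 1 = (a : ℕ)) : a ∉ insert pa (I.erase a) := by
  simp only [Finset.mem_insert, Finset.mem_erase]
  push_neg
  exact ⟨fun h => by have := congrArg (fun z : Fin m => (z : ℕ)) h; omega,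
    fun h => absurd rfl h⟩

lemma orderEmb_swap_step (I : Finset (Fin m)) (hI : I.card = n)
    (a pa : Fin m) (haI : a ∈ I) (hpalt : (pa : ℕ) + 1 = (a : ℕ)) (hpa : pa ∉ I)
    (hI' : (insert pa (I.erase a)).card = n) (j : Fin n) :
    I.orderEmbOfFin hI j
      = Equiv.swap pa a ((insert pa (I.erase a)).orderEmbOfFin hI' j) := by
  have hanI' : a ∉ insert pa (I.erase a) := a_notmem_step hpalt
  have key := Finset.orderEmbOfFin_unique hI
    (f := fun j : Fin n =>
      Equiv.swap pa a ((insert pa (I.erase a)).orderEmbOfFin hI' j)) ?_ ?_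
  · exact (congrFun key j).symm
  · intro x
    show Equiv.swap pa a ((insert pa (I.erase a)).orderEmbOfFin hI' x) ∈ I
    have hmem := Finset.orderEmbOfFin_mem (insert pa (I.erase a)) hI' x
    rcases Finset.mem_insert.mp hmem with h | h
    · rw [h, Equiv.swap_apply_left]
      exact haI
    · have h1 : (insert pa (I.erase a)).orderEmbOfFin hI' x ≠ a :=
        fun hc => hanI' (by rw [hc] at hmem; exact hmem)
      have h2 : (insert pa (I.erase a)).orderEmbOfFin hI' x ≠ pa :=
        fun hc => hpa (hc ▸ (Finset.mem_of_mem_erase h))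
      rw [Equiv.swap_apply_of_ne_of_ne h2 h1]
      exact Finset.mem_of_mem_erase h
  · intro j1 j2 hj
    show Equiv.swap pa a _ < Equiv.swap pa a _
    refine swap_mono_aux hpalt ?_ ?_ ((((insert pa (I.erase a))).orderEmbOfFin hI').strictMono hj)
    · exact fun hc => hanI' (by have h := Finset.orderEmbOfFin_mem (insert pa (I.erase a)) hI' j1; rw [hc] at h; exact h)
    · exact fun hc => hanI' (by have h := Finset.orderEmbOfFin_mem (insert pa (I.erase a)) hI' j2; rw [hc] at h; exact h)

lemma orderEmb_swap_step_compl (I : Finset (Fin m)) (hI : I.card = n)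
    (a pa : Fin m) (haI : a ∈ I) (hpalt : (pa : ℕ) + 1 = (a : ℕ)) (hpa : pa ∉ I)
    (hc : Iᶜ.card = r) (hc' : (insert pa (I.erase a))ᶜ.card = r) (j : Fin r) :
    Iᶜ.orderEmbOfFin hc j
      = Equiv.swap pa a ((insert pa (I.erase a))ᶜ.orderEmbOfFin hc' j) := by
  have hpaI' : pa ∈ insert pa (I.erase a) := Finset.mem_insert_self _ _
  have key := Finset.orderEmbOfFin_unique hc
    (f := fun j : Fin r =>
      Equiv.swap pa a ((insert pa (I.erase a))ᶜ.orderEmbOfFin hc' j)) ?_ ?_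
  · exact (congrFun key j).symm
  · intro x
    show Equiv.swap pa a ((insert pa (I.erase a))ᶜ.orderEmbOfFin hc' x) ∈ Iᶜ
    have hmem := Finset.mem_compl.mp (Finset.orderEmbOfFin_mem _ hc' x)
    have hvpa : (insert pa (I.erase a))ᶜ.orderEmbOfFin hc' x ≠ pa :=
      fun hcq => hmem (by rw [hcq]; exact hpaI')
    rcases eq_or_ne ((insert pa (I.erase a))ᶜ.orderEmbOfFin hc' x) a with hva | hva
    · rw [hva, Equiv.swap_apply_right, Finset.mem_compl]
      exact hpa
    · rw [Equiv.swap_apply_of_ne_of_ne hvpa hva, Finset.mem_compl]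
      intro hvI
      exact hmem (Finset.mem_insert_of_mem (Finset.mem_erase.mpr ⟨hva, hvI⟩))
  · intro j1 j2 hj
    show Equiv.swap pa a _ < Equiv.swap pa a _
    refine swap_mono_aux' hpalt ?_ ?_
      ((((insert pa (I.erase a))ᶜ).orderEmbOfFin hc').strictMono hj)
    · exact fun hcq =>
        (Finset.mem_compl.mp (Finset.orderEmbOfFin_mem _ hc' j1)) (by rw [hcq]; exact hpaI')
    · exact fun hcq =>
        (Finset.mem_compl.mp (Finset.orderEmbOfFin_mem _ hc' j2)) (by rw [hcq]; exact hpaI')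

end SignRho2

section SignRho3

variable {m n r : ℕ}

lemma sign_rho_aux (hm : m = n + r) : ∀ (w : ℕ) (I : Finset (Fin m)) (hI : I.card = n),
    (∑ i ∈ I, (i : ℕ)) = w → (Equiv.Perm.sign (rho hm I hI) : ℤ) = vSign n I := by
  intro w
  induction w using Nat.strong_induction_on with
  | _ w ih =>
    intro I hI hw
    by_cases hF : I = firstn m n
    · subst hF
      rw [rho_firstn_eq_one hm hI, map_one, vsign_firstn (by omega)]
      rfl
    · obtain ⟨a, haI, ha0, hpaNot⟩ := exists_step I hI hF
      set pa : Fin m := ⟨(a : ℕ) - 1, lt_of_le_of_lt (Nat.sub_le _ _) a.isLt⟩ with hpadef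
      have hpalt : (pa : ℕ) + 1 = (a : ℕ) := by
        simp only [hpadef]
        omega
      have hpaI' : pa ∉ I.erase a := fun hc => hpaNot (Finset.mem_of_mem_erase hc)
      have hn1 : 0 < I.card := Finset.card_pos.mpr ⟨a, haI⟩
      have hI' : (insert pa (I.erase a)).card = n := by
        rw [Finset.card_insert_of_notMem hpaI', Finset.card_erase_of_mem haI, hI]
        omega
      have hrel : ∀ x, rho hm I hI x
          = Equiv.swap pa a (rho hm (insert pa (I.erase a)) hI' x) := by
        intro x
        rw [rho_apply, rho_apply, sel, sel]
        by_cases h : (x : ℕ) < n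
        · rw [dif_pos h, dif_pos h]
          exact orderEmb_swap_step I hI a pa haI hpalt hpaNot hI' ⟨(x : ℕ), h⟩
        · rw [dif_neg h, dif_neg h]
          exact orderEmb_swap_step_compl I hI a pa haI hpalt hpaNot _ _ _
      have hperm : rho hm I hI = Equiv.swap pa a * rho hm (insert pa (I.erase a)) hI' :=
        Equiv.ext hrel
      have hpane : pa ≠ a := fun hc => by
        have := congrArg (fun z : Fin m => (z : ℕ)) hc
        omega
      have hSa : (a : ℕ) + ∑ i ∈ I.erase a, (i : ℕ) = ∑ i ∈ I, (i : ℕ) :=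
        Finset.add_sum_erase I _ haI
      have hSa' : ∑ i ∈ insert pa (I.erase a), (i : ℕ)
          = (pa : ℕ) + ∑ i ∈ I.erase a, (i : ℕ) := Finset.sum_insert hpaI'
      have ihI' := ih (∑ i ∈ insert pa (I.erase a), (i : ℕ)) (by omega)
        (insert pa (I.erase a)) hI' rfl
      have hsgn : (Equiv.Perm.sign (rho hm I hI) : ℤ)
          = -(Equiv.Perm.sign (rho hm (insert pa (I.erase a)) hI') : ℤ) := by
        rw [hperm, map_mul, Equiv.Perm.sign_swap hpane]
        push_cast
        ring
      rw [hsgn, ihI']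
      -- now show vSign n I = - vSign n I'
      have hTa : ((a : ℕ) + 1) + ∑ i ∈ I.erase a, ((i : ℕ) + 1) = ∑ i ∈ I, ((i : ℕ) + 1) :=
        Finset.add_sum_erase I (fun i => (i : ℕ) + 1) haI
      have hTa' : ∑ i ∈ insert pa (I.erase a), ((i : ℕ) + 1)
          = ((pa : ℕ) + 1) + ∑ i ∈ I.erase a, ((i : ℕ) + 1) := Finset.sum_insert hpaI'
      rw [vSign, vSign]
      rw [show (∑ i ∈ I, ((i : ℕ) + 1)) + n * (n + 1) / 2
        = ((∑ i ∈ insert pa (I.erase a), ((i : ℕ) + 1)) + n * (n + 1) / 2) + 1 by omega]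
      rw [pow_succ]
      ring

end SignRho3

section Laplace

variable {m n r : ℕ}

lemma e_inl_val (hm : m = n + r) (j : Fin n) :
    (((finSumFinEquiv.trans (finCongr hm.symm)) (Sum.inl j) : Fin m) : ℕ) = (j : ℕ) := by
  simp [finSumFinEquiv_apply_left]

lemma e_inr_val (hm : m = n + r) (j : Fin r) :
    (((finSumFinEquiv.trans (finCongr hm.symm)) (Sum.inr j) : Fin m) : ℕ) = n + (j : ℕ) := by
  simp [finSumFinEquiv_apply_right]

lemma build_left (hm : m = n + r) (I : Finset (Fin m)) (hI : I.card = n)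
    (τ₁ : Equiv.Perm (Fin n)) (τ₂ : Equiv.Perm (Fin r)) (j : Fin n) :
    (rho hm I hI * ((finSumFinEquiv.trans (finCongr hm.symm)).permCongr
        (Equiv.sumCongr τ₁ τ₂)))
      ((finSumFinEquiv.trans (finCongr hm.symm)) (Sum.inl j))
      = I.orderEmbOfFin hI (τ₁ j) := by
  rw [Equiv.Perm.mul_apply, Equiv.permCongr_apply, Equiv.symm_apply_apply]
  simp only [Equiv.sumCongr_apply, Sum.map_inl]
  rw [rho_apply]
  rw [show sel hm I Iᶜ hI (card_compl_of_card hm hI)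
        ((finSumFinEquiv.trans (finCongr hm.symm)) (Sum.inl (τ₁ j)))
      = _ from rfl]
  rw [sel]
  rw [dif_pos (by rw [e_inl_val hm]; exact (τ₁ j).isLt)]
  exact congrArg _ (Fin.ext (e_inl_val hm (τ₁ j)))

lemma build_right (hm : m = n + r) (I : Finset (Fin m)) (hI : I.card = n)
    (τ₁ : Equiv.Perm (Fin n)) (τ₂ : Equiv.Perm (Fin r)) (j : Fin r) :
    (rho hm I hI * ((finSumFinEquiv.trans (finCongr hm.symm)).permCongr
        (Equiv.sumCongr τ₁ τ₂)))
      ((finSumFinEquiv.trans (finCongr hm.symm)) (Sum.inr j))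
      = Iᶜ.orderEmbOfFin (card_compl_of_card hm hI) (τ₂ j) := by
  rw [Equiv.Perm.mul_apply, Equiv.permCongr_apply, Equiv.symm_apply_apply]
  simp only [Equiv.sumCongr_apply, Sum.map_inr]
  rw [rho_apply]
  rw [sel]
  rw [dif_neg (by rw [e_inr_val hm]; omega)]
  exact congrArg _ (Fin.ext (by simp only; rw [e_inr_val hm]; omega))

lemma laplace {R : Type*} [CommRing R] (hm : m = n + r) (B : Matrix (Fin m) (Fin m) R) :
    B.det = ∑ I : {I : Finset (Fin m) // I.card = n},
      ((vSign n I.1 : ℤ) : R) *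
        ((B.submatrix (I.1.orderEmbOfFin I.2)
            (fun j : Fin n => ⟨(j : ℕ), by omega⟩)).det *
         (B.submatrix ((I.1)ᶜ.orderEmbOfFin (card_compl_of_card hm I.2))
            (fun j : Fin r => ⟨n + (j : ℕ), by omega⟩)).det) := by
  classical
  set e : Fin n ⊕ Fin r ≃ Fin m := finSumFinEquiv.trans (finCongr hm.symm) with hedef
  set build : (Σ _I : {I : Finset (Fin m) // I.card = n},
      Equiv.Perm (Fin n) × Equiv.Perm (Fin r)) → Equiv.Perm (Fin m) :=
    fun x => rho hm x.1.1 x.1.2 * (e.permCongr (Equiv.sumCongr x.2.1 x.2.2)) with hbuilddef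
  have build_mem : ∀ (I : {I : Finset (Fin m) // I.card = n}) (τ₁ τ₂) (v : Fin m),
      v ∈ I.1 ↔ ∃ j : Fin n, build ⟨I, (τ₁, τ₂)⟩ (e (Sum.inl j)) = v := by
    intro I τ₁ τ₂ v
    constructor
    · intro hv
      obtain ⟨j, hj⟩ : ∃ j : Fin n, I.1.orderEmbOfFin I.2 j = v := by
        have hr := Finset.range_orderEmbOfFin I.1 I.2
        have : v ∈ Set.range (I.1.orderEmbOfFin I.2) := by
          rw [hr]; exact hv
        exact this
      exact ⟨τ₁.symm j, by rw [hbuilddef]; simp only []; rw [build_left]; simp [hj]⟩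
    · rintro ⟨j, rfl⟩
      rw [hbuilddef]
      simp only []
      rw [build_left]
      exact Finset.orderEmbOfFin_mem _ _ _
  have hinj : Function.Injective build := by
    rintro ⟨⟨I, hI⟩, τ₁, τ₂⟩ ⟨⟨I', hI'⟩, τ₁', τ₂'⟩ h
    have hII : I = I' := by
      ext v
      rw [build_mem ⟨I, hI⟩ τ₁ τ₂ v, build_mem ⟨I', hI'⟩ τ₁' τ₂' v, h]
    subst hII
    rcases Subsingleton.elim hI hI' with rfl
    have hfun : ∀ x, build ⟨⟨I, hI⟩, (τ₁, τ₂)⟩ x = build ⟨⟨I, hI⟩, (τ₁', τ₂')⟩ x :=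
      fun x => by rw [h]
    have hτ1 : τ₁ = τ₁' := by
      ext j : 1
      have h1 := build_left hm I hI τ₁ τ₂ j
      have h2 := build_left hm I hI τ₁' τ₂' j
      have := (hfun (e (Sum.inl j)))
      rw [hbuilddef] at this
      simp only [] at this
      rw [h1, h2] at this
      exact (I.orderEmbOfFin hI).injective this
    have hτ2 : τ₂ = τ₂' := by
      ext j : 1
      have h1 := build_right hm I hI τ₁ τ₂ j
      have h2 := build_right hm I hI τ₁' τ₂' j
      have := (hfun (e (Sum.inr j)))
      rw [hbuilddef] at this
      simp only [] at this
      rw [h1, h2] at this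
      exact (Iᶜ.orderEmbOfFin (card_compl_of_card hm hI)).injective this
    rw [hτ1, hτ2]
  have hbij : Function.Bijective build := by
    rw [Fintype.bijective_iff_injective_and_card]
    refine ⟨hinj, ?_⟩
    rw [Fintype.card_sigma]
    simp only [Fintype.card_prod, Fintype.card_perm, Fintype.card_fin,
      Finset.sum_const, Finset.card_univ, Fintype.card_finset_len, smul_eq_mul]
    have hnm : n ≤ m := by omega
    have := Nat.choose_mul_factorial_mul_factorial hnm
    rw [show m - n = r by omega] at this
    rw [← this]
    ring
  rw [Matrix.det_apply']
  rw [← Fintype.sum_bijective build hbij _ _ (fun x => rfl)]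
  rw [← Finset.univ_sigma_univ, Finset.sum_sigma]
  refine Finset.sum_congr rfl (fun I _ => ?_)
  rw [Fintype.sum_prod_type]
  rw [Matrix.det_apply', Matrix.det_apply', Finset.sum_mul_sum, Finset.mul_sum]
  refine Finset.sum_congr rfl fun τ₁ _ => ?_
  rw [Finset.mul_sum]
  refine Finset.sum_congr rfl fun τ₂ _ => ?_
  have hsgn : (Equiv.Perm.sign (build ⟨I, (τ₁, τ₂)⟩) : ℤ)
      = vSign n I.1 * ((Equiv.Perm.sign τ₁ : ℤ) * (Equiv.Perm.sign τ₂ : ℤ)) := by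
    rw [hbuilddef]
    simp only []
    rw [map_mul, Equiv.Perm.sign_permCongr, Equiv.Perm.sign_sumCongr]
    push_cast
    rw [sign_rho_aux hm _ I.1 I.2 rfl]
  have hprd : (∏ i, B ((build ⟨I, (τ₁, τ₂)⟩) i) i)
      = (∏ j : Fin n, B (I.1.orderEmbOfFin I.2 (τ₁ j)) ⟨(j : ℕ), by omega⟩)
        * ∏ j : Fin r, B ((I.1)ᶜ.orderEmbOfFin (card_compl_of_card hm I.2) (τ₂ j))
            ⟨n + (j : ℕ), by omega⟩ := by
    rw [← Equiv.prod_comp e (fun i => B ((build ⟨I, (τ₁, τ₂)⟩) i) i)]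
    rw [Fintype.prod_sum_type]
    congr 1
    · refine Finset.prod_congr rfl fun j _ => ?_
      rw [hbuilddef]
      simp only []
      rw [build_left hm I.1 I.2 τ₁ τ₂ j]
      exact congrArg _ (Fin.ext (e_inl_val hm j))
    · refine Finset.prod_congr rfl fun j _ => ?_
      rw [hbuilddef]
      simp only []
      rw [build_right hm I.1 I.2 τ₁ τ₂ j]
      exact congrArg _ (Fin.ext (e_inr_val hm j))
  rw [hprd]
  rw [show ((Equiv.Perm.sign (build ⟨I, (τ₁, τ₂)⟩) : ℤ) : R)
      = ((vSign n I.1 * ((Equiv.Perm.sign τ₁ : ℤ) * (Equiv.Perm.sign τ₂ : ℤ)) : ℤ) : R) from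
    congrArg _ hsgn]
  simp only [Matrix.submatrix_apply]
  push_cast
  ring

end Laplace

section Bridge

variable {R : Type*} [CommRing R]

lemma sel_left_apply {M m n r : ℕ} (hm : m = n + r) (J K : Finset (Fin M))
    (hJ : J.card = n) (hK : K.card = r) (j : Fin n) :
    sel hm J K hJ hK ⟨(j : ℕ), by omega⟩ = J.orderEmbOfFin hJ j := by
  rw [sel, dif_pos (show ((⟨(j : ℕ), by omega⟩ : Fin m) : ℕ) < n from j.isLt)]

lemma sel_right_apply {M m n r : ℕ} (hm : m = n + r) (J K : Finset (Fin M))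
    (hJ : J.card = n) (hK : K.card = r) (j : Fin r) :
    sel hm J K hJ hK ⟨n + (j : ℕ), by omega⟩ = K.orderEmbOfFin hK j := by
  rw [sel, dif_neg (show ¬ ((⟨n + (j : ℕ), by omega⟩ : Fin m) : ℕ) < n by simp)]
  exact congrArg _ (Fin.ext (by simp))

lemma innerVV_eq_det (s n : ℕ) (hm : s + n - 1 = n + (s - 1))
    (A : Matrix (Fin (s + n - 1)) (Fin (s * n)) R) (J K : Finset (Fin (s * n)))
    (hJ : J.card = n) (hK : K.card = s - 1) :
    innerVV A J K = (A.submatrix id (sel hm J K hJ hK)).det := by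
  rw [laplace hm (A.submatrix id (sel hm J K hJ hK))]
  rw [innerVV]
  refine Finset.sum_congr rfl fun I _ => ?_
  rw [minor_eq A I.1 J I.2 hJ, minor_eq A (I.1)ᶜ K (card_compl_of_card hm I.2) hK]
  have h1 : (A.submatrix id (sel hm J K hJ hK)).submatrix (I.1.orderEmbOfFin I.2)
        (fun j : Fin n => (⟨(j : ℕ), by omega⟩ : Fin (s + n - 1)))
      = A.submatrix (I.1.orderEmbOfFin I.2) (J.orderEmbOfFin hJ) := by
    ext i j
    simp only [Matrix.submatrix_apply, id_eq]
    rw [sel_left_apply hm J K hJ hK j]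
  have h2 : (A.submatrix id (sel hm J K hJ hK)).submatrix
        ((I.1)ᶜ.orderEmbOfFin (card_compl_of_card hm I.2))
        (fun j : Fin (s - 1) => (⟨n + (j : ℕ), by omega⟩ : Fin (s + n - 1)))
      = A.submatrix ((I.1)ᶜ.orderEmbOfFin (card_compl_of_card hm I.2))
          (K.orderEmbOfFin hK) := by
    ext i j
    simp only [Matrix.submatrix_apply, id_eq]
    rw [sel_right_apply hm J K hJ hK j]
  rw [h1, h2]
  ring

lemma det_sel_zero {M m n r : ℕ} (hm : m = n + r) (A : Matrix (Fin m) (Fin M) R)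
    (J K : Finset (Fin M)) (hJ : J.card = n) (hK : K.card = r)
    (x : Fin M) (hxJ : x ∈ J) (hxK : x ∈ K) :
    (A.submatrix id (sel hm J K hJ hK)).det = 0 := by
  obtain ⟨j, hj⟩ : ∃ j, J.orderEmbOfFin hJ j = x := by
    have : x ∈ Set.range (J.orderEmbOfFin hJ) := by
      rw [Finset.range_orderEmbOfFin]; exact hxJ
    exact this
  obtain ⟨k, hk⟩ : ∃ k, K.orderEmbOfFin hK k = x := by
    have : x ∈ Set.range (K.orderEmbOfFin hK) := by
      rw [Finset.range_orderEmbOfFin]; exact hxK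
    exact this
  refine Matrix.det_zero_of_column_eq
    (i := (⟨(j : ℕ), by omega⟩ : Fin m)) (j := (⟨n + (k : ℕ), by omega⟩ : Fin m)) ?_ ?_
  · intro h
    have := congrArg (fun z : Fin m => (z : ℕ)) h
    simp only at this
    omega
  · intro l
    simp only [Matrix.submatrix_apply, id_eq]
    rw [sel_left_apply hm J K hJ hK j, sel_right_apply hm J K hJ hK k, hj, hk]

lemma det_sel_disjoint {M m n r : ℕ} (hm : m = n + r) (A : Matrix (Fin m) (Fin M) R)
    (J K : Finset (Fin M)) (hJ : J.card = n) (hK : K.card = r)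
    (hd : Disjoint J K) (hU : (J ∪ K).card = m) :
    ∃ e : ℤ, (e = 1 ∨ e = -1) ∧
      (A.submatrix id (sel hm J K hJ hK)).det = ((e : ℤ) : R) * minor A Finset.univ (J ∪ K) := by
  classical
  have hmemU : ∀ y : Fin m, sel hm J K hJ hK y ∈ J ∪ K := sel_mem_union hm J K hJ hK
  set σf : Fin m → Fin m :=
    fun y => ((J ∪ K).orderIsoOfFin hU).symm ⟨sel hm J K hJ hK y, hmemU y⟩ with hσdef
  have hσinj : Function.Injective σf := by
    intro a b hab
    have h0 := congrArg ((J ∪ K).orderIsoOfFin hU) hab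
    rw [hσdef] at h0
    simp only [OrderIso.apply_symm_apply, Subtype.mk.injEq] at h0
    exact sel_injective hm J K hJ hK hd h0
  set σp : Equiv.Perm (Fin m) := Equiv.ofBijective σf (Finite.injective_iff_bijective.mp hσinj)
    with hσpdef
  have hcol : ∀ y, sel hm J K hJ hK y = (J ∪ K).orderEmbOfFin hU (σp y) := by
    intro y
    have : (((J ∪ K).orderIsoOfFin hU) (σf y) : Fin M) = sel hm J K hJ hK y := by
      rw [hσdef]
      simp only [OrderIso.apply_symm_apply]
    rw [← this, Finset.coe_orderIsoOfFin_apply]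
    rfl
  have hmat : A.submatrix id (sel hm J K hJ hK)
      = (A.submatrix id ((J ∪ K).orderEmbOfFin hU)).submatrix id σp := by
    ext i j
    simp only [Matrix.submatrix_apply, id_eq]
    rw [hcol j]
  rw [hmat, Matrix.det_permute']
  rcases Int.units_eq_one_or (Equiv.Perm.sign σp) with h1 | h1
  · exact ⟨1, Or.inl rfl, by rw [h1, minor_univ A (J ∪ K) hU]; push_cast; ring⟩
  · exact ⟨-1, Or.inr rfl, by rw [h1, minor_univ A (J ∪ K) hU]; push_cast; ring⟩

end Bridge

section Comb

variable {s n : ℕ}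

lemma fin_div_lt (hn : 0 < n) (x : Fin (s * n)) : (x : ℕ) / n < s :=
  (Nat.div_lt_iff_lt_mul hn).mpr (by have := x.isLt; omega)

lemma mem_iotaSet (hn : 0 < n) (μ : Fin s → ℕ) (x : Fin (s * n)) :
    x ∈ iotaSet s n μ ↔ (x : ℕ) % n < μ ⟨(x : ℕ) / n, fin_div_lt hn x⟩ := by
  rw [iotaSet, Finset.mem_filter, dif_pos (fin_div_lt hn x)]
  simp

lemma mem_phiSet (hn : 0 < n) (k : Fin s) (μ : Fin s → ℕ) (x : Fin (s * n)) :
    x ∈ phiSet s n k μ ↔ ((x : ℕ) / n ≠ (k : ℕ) ∧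
      (x : ℕ) % n = μ ⟨(x : ℕ) / n, fin_div_lt hn x⟩) := by
  rw [phiSet, Finset.mem_filter, dif_pos (fin_div_lt hn x)]
  simp

lemma mk_block_lt (hn : 0 < n) (i : Fin s) {v : ℕ} (hv : v < n) :
    (i : ℕ) * n + v < s * n := by
  have h1 : ((i : ℕ) + 1) * n = (i : ℕ) * n + n := by ring
  have h2 : ((i : ℕ) + 1) * n ≤ s * n := Nat.mul_le_mul_right n i.isLt
  omega

lemma block_div (hn : 0 < n) {i v : ℕ} (hv : v < n) : (i * n + v) / n = i := by
  rw [Nat.mul_comm, Nat.mul_add_div hn, Nat.div_eq_of_lt hv]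
  omega

lemma block_mod (hn : 0 < n) {i v : ℕ} (hv : v < n) : (i * n + v) % n = v := by
  rw [Nat.mul_comm, Nat.mul_add_mod, Nat.mod_eq_of_lt hv]

lemma block_mem_iotaSet (hn : 0 < n) (μ : Fin s → ℕ) (i : Fin s) {v : ℕ} (hv : v < n) :
    (⟨(i : ℕ) * n + v, mk_block_lt hn i hv⟩ : Fin (s * n)) ∈ iotaSet s n μ ↔ v < μ i := by
  rw [mem_iotaSet hn μ]
  have hd : (((⟨(i : ℕ) * n + v, mk_block_lt hn i hv⟩ : Fin (s * n)) : ℕ)) / n = (i : ℕ) :=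
    block_div hn hv
  have hμ : μ ⟨(((⟨(i : ℕ) * n + v, mk_block_lt hn i hv⟩ : Fin (s * n)) : ℕ)) / n,
      fin_div_lt hn _⟩ = μ i := by
    congr 1
    exact Fin.ext hd
  rw [hμ, show (((⟨(i : ℕ) * n + v, mk_block_lt hn i hv⟩ : Fin (s * n)) : ℕ)) % n = v
    from block_mod hn hv]

lemma block_mem_phiSet (hn : 0 < n) (k : Fin s) (μ : Fin s → ℕ) (i : Fin s) {v : ℕ}
    (hv : v < n) :
    (⟨(i : ℕ) * n + v, mk_block_lt hn i hv⟩ : Fin (s * n)) ∈ phiSet s n k μ ↔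
      (i ≠ k ∧ v = μ i) := by
  rw [mem_phiSet hn k μ]
  have hd : (((⟨(i : ℕ) * n + v, mk_block_lt hn i hv⟩ : Fin (s * n)) : ℕ)) / n = (i : ℕ) :=
    block_div hn hv
  have hμ : μ ⟨(((⟨(i : ℕ) * n + v, mk_block_lt hn i hv⟩ : Fin (s * n)) : ℕ)) / n,
      fin_div_lt hn _⟩ = μ i := by
    congr 1
    exact Fin.ext hd
  rw [hμ, show (((⟨(i : ℕ) * n + v, mk_block_lt hn i hv⟩ : Fin (s * n)) : ℕ)) % n = v
    from block_mod hn hv, hd]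
  constructor
  · rintro ⟨h1, h2⟩
    exact ⟨fun hc => h1 (congrArg Fin.val hc), h2⟩
  · rintro ⟨h1, h2⟩
    exact ⟨fun hc => h1 (Fin.ext hc), h2⟩

lemma part_le_n (μ : Fin s → ℕ) (hμ : μ ∈ Finset.Nat.antidiagonalTuple s n) (i : Fin s) :
    μ i ≤ n := by
  rw [Finset.Nat.mem_antidiagonalTuple] at hμ
  calc μ i ≤ ∑ l, μ l := Finset.single_le_sum (fun l _ => Nat.zero_le (μ l)) (mem_univ i)
    _ = n := hμ

lemma card_iotaSet (hn : 0 < n) (μ : Fin s → ℕ)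
    (hμ : μ ∈ Finset.Nat.antidiagonalTuple s n) : (iotaSet s n μ).card = n := by
  classical
  have hsum : ∑ i, μ i = n := Finset.Nat.mem_antidiagonalTuple.mp hμ
  have hcard : (Finset.univ.sigma fun i : Fin s => Finset.range (μ i)).card = n := by
    rw [Finset.card_sigma]
    simpa using hsum
  suffices h : (iotaSet s n μ).card = (Finset.univ.sigma fun i : Fin s => Finset.range (μ i)).card by
    rw [h, hcard]
  refine Finset.card_bij' (fun x _ => ⟨⟨(x : ℕ) / n, fin_div_lt hn x⟩, (x : ℕ) % n⟩)
    (fun p hp => ⟨(p.1 : ℕ) * n + p.2, mk_block_lt hn p.1 (by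
      simp only [Finset.mem_sigma, Finset.mem_univ, Finset.mem_range, true_and] at hp
      exact lt_of_lt_of_le hp (part_le_n μ hμ p.1))⟩) ?_ ?_ ?_ ?_
  · intro x hx
    simp only [Finset.mem_sigma, Finset.mem_univ, Finset.mem_range, true_and]
    exact (mem_iotaSet hn μ x).mp hx
  · intro p hp
    simp only [Finset.mem_sigma, Finset.mem_univ, Finset.mem_range, true_and] at hp
    exact (block_mem_iotaSet hn μ p.1 (lt_of_lt_of_le hp (part_le_n μ hμ p.1))).mpr hp
  · intro x hx
    refine Fin.ext ?_
    simp only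
    rw [Nat.mul_comm ((x : ℕ) / n) n]
    have := Nat.div_add_mod (x : ℕ) n
    omega
  · intro p hp
    simp only [Finset.mem_sigma, Finset.mem_univ, Finset.mem_range, true_and] at hp
    have hlt : p.2 < n := lt_of_lt_of_le hp (part_le_n μ hμ p.1)
    refine Sigma.ext (Fin.ext ?_) (heq_of_eq ?_)
    · simp only
      exact block_div hn hlt
    · simp only
      exact block_mod hn hlt

lemma card_phiSet (hn : 0 < n) (k : Fin s) (μ : Fin s → ℕ)
    (hlt : ∀ i : Fin s, i ≠ k → μ i < n) : (phiSet s n k μ).card = s - 1 := by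
  classical
  have hcard : (Finset.univ.erase k).card = s - 1 := by
    rw [Finset.card_erase_of_mem (mem_univ k), Finset.card_univ, Fintype.card_fin]
  suffices h : (phiSet s n k μ).card = (Finset.univ.erase k).card by
    rw [h, hcard]
  refine Finset.card_bij' (fun x _ => ⟨(x : ℕ) / n, fin_div_lt hn x⟩)
    (fun i hi => ⟨(i : ℕ) * n + μ i, mk_block_lt hn i (hlt i (by
      simp only [Finset.mem_erase, Finset.mem_univ, and_true] at hi
      exact hi))⟩) ?_ ?_ ?_ ?_
  · intro x hx
    rw [mem_phiSet hn k μ] at hx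
    simp only [Finset.mem_erase, Finset.mem_univ, and_true]
    exact fun hc => hx.1 (congrArg Fin.val hc)
  · intro i hi
    simp only [Finset.mem_erase, Finset.mem_univ, and_true] at hi
    exact (block_mem_phiSet hn k μ i (hlt i hi)).mpr ⟨hi, rfl⟩
  · intro x hx
    rw [mem_phiSet hn k μ] at hx
    refine Fin.ext ?_
    simp only
    rw [← hx.2, Nat.mul_comm ((x : ℕ) / n) n]
    have := Nat.div_add_mod (x : ℕ) n
    omega
  · intro i hi
    simp only [Finset.mem_erase, Finset.mem_univ, and_true] at hi
    refine Fin.ext ?_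
    simp only
    exact block_div hn (hlt i hi)

lemma iota_phi_disjoint (hn : 0 < n) (k : Fin s) (μ : Fin s → ℕ) :
    Disjoint (iotaSet s n μ) (phiSet s n k μ) := by
  rw [Finset.disjoint_left]
  intro x hx hx'
  rw [mem_iotaSet hn μ] at hx
  rw [mem_phiSet hn k μ] at hx'
  omega

lemma triangle_inter (hn : 0 < n) (lam μ : Fin s → ℕ)
    (hlam : lam ∈ Finset.Nat.antidiagonalTuple s n)
    (hμ : μ ∈ Finset.Nat.antidiagonalTuple s n) (k : Fin s)
    (hmax : ∀ l, μ l ≤ μ k) (hne : lam ≠ μ)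
    (hsup : Finset.univ.sup lam ≤ Finset.univ.sup μ) :
    ∃ x : Fin (s * n), x ∈ iotaSet s n lam ∧ x ∈ phiSet s n k μ := by
  by_contra hcon
  push_neg at hcon
  have hle : ∀ i : Fin s, i ≠ k → lam i ≤ μ i := by
    intro i hik
    by_contra hgt
    push_neg at hgt
    have hμin : μ i < n := lt_of_lt_of_le hgt (part_le_n lam hlam i)
    have h1 := (block_mem_iotaSet hn lam i hμin).mpr hgt
    have h2 := (block_mem_phiSet hn k μ i hμin).mpr ⟨hik, rfl⟩
    exact hcon _ h1 h2
  have hsupμ : Finset.univ.sup μ = μ k :=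
    le_antisymm (Finset.sup_le fun l _ => hmax l) (Finset.le_sup (mem_univ k))
  have hlamk : lam k ≤ μ k := by
    calc lam k ≤ Finset.univ.sup lam := Finset.le_sup (mem_univ k)
      _ ≤ Finset.univ.sup μ := hsup
      _ = μ k := hsupμ
  have hall : ∀ i, lam i ≤ μ i := by
    intro i
    rcases eq_or_ne i k with rfl | h
    · exact hlamk
    · exact hle i h
  obtain ⟨i, hi⟩ : ∃ i, lam i ≠ μ i := by
    by_contra hc
    push_neg at hc
    exact hne (funext hc)
  have hstrict : lam i < μ i := lt_of_le_of_ne (hall i) hi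
  have hsums : (∑ l, lam l) = ∑ l, μ l := by
    rw [Finset.Nat.mem_antidiagonalTuple.mp hlam, Finset.Nat.mem_antidiagonalTuple.mp hμ]
  have : (∑ l, lam l) < ∑ l, μ l :=
    Finset.sum_lt_sum (fun l _ => hall l) ⟨i, mem_univ i, hstrict⟩
  omega

end Comb

/-- with `π(μ)` the least index of a maximal part and
`Φ(μ) = φ^{(π(μ))}(μ)`, the matrix `(⟨V_{ι(λ)}(A), V̄_{Φ(μ)}(A)⟩)_{λ,μ}` is
block (upper) triangular for the filtration by the maximal part, and its
determinant is `± ∏_{μ ∈ Z_{s,n}} det A_{ι(μ) ⊔ Φ(μ)}`. -/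
theorem det_inner_matrix (s n : ℕ) (hs : 0 < s) (hn : 0 < n)
    {R : Type*} [CommRing R] (A : Matrix (Fin (s + n - 1)) (Fin (s * n)) R)
    (p : (Fin s → ℕ) → Fin s)
    (hp : ∀ μ ∈ Finset.Nat.antidiagonalTuple s n,
      (∀ l, μ l ≤ μ (p μ)) ∧ ∀ k' : Fin s, (∀ l, μ l ≤ μ k') → p μ ≤ k')
    (Φ : (Fin s → ℕ) → Finset (Fin (s * n)))
    (hΦ : ∀ μ ∈ Finset.Nat.antidiagonalTuple s n, Φ μ = phiSet s n (p μ) μ) :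
    (∀ lam μ : Comp s n, lam ≠ μ →
      (Finset.univ.sup lam.1 ≤ Finset.univ.sup μ.1) →
      innerVV A (iotaSet s n lam.1) (Φ μ.1) = 0) ∧
    ∃ e : ℤ, (e = 1 ∨ e = -1) ∧
      Matrix.det (Matrix.of fun lam μ : Comp s n =>
          innerVV A (iotaSet s n lam.1) (Φ μ.1))
        = ((e : ℤ) : R) * ∏ μ ∈ Finset.Nat.antidiagonalTuple s n,
            minor A Finset.univ (iotaSet s n μ ∪ Φ μ) := by
  classical
  have hm : s + n - 1 = n + (s - 1) := by omega
  have hμlt : ∀ μ ∈ Finset.Nat.antidiagonalTuple s n, ∀ i : Fin s, i ≠ p μ → μ i < n := by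
    intro μ hμ i hik
    by_contra hc
    push_neg at hc
    have h1 : μ (p μ) ≥ n := le_trans hc ((hp μ hμ).1 i)
    have hsum : ∑ l, μ l = n := Finset.Nat.mem_antidiagonalTuple.mp hμ
    have hpair : μ i + μ (p μ) ≤ ∑ l, μ l := by
      have hsub : ({i, p μ} : Finset (Fin s)).sum μ ≤ Finset.univ.sum μ :=
        Finset.sum_le_sum_of_subset (Finset.subset_univ _)
      rwa [Finset.sum_pair hik] at hsub
    omega
  have cardI : ∀ μ : Comp s n, (iotaSet s n μ.1).card = n :=
    fun μ => card_iotaSet hn μ.1 μ.2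
  have cardΦ : ∀ μ : Comp s n, (Φ μ.1).card = s - 1 := fun μ => by
    rw [hΦ μ.1 μ.2]
    exact card_phiSet hn (p μ.1) μ.1 (hμlt μ.1 μ.2)
  have part1 : ∀ lam μ : Comp s n, lam ≠ μ →
      (Finset.univ.sup lam.1 ≤ Finset.univ.sup μ.1) →
      innerVV A (iotaSet s n lam.1) (Φ μ.1) = 0 := by
    intro lam μ hne hsup
    have hKc : (Φ μ.1).card = s - 1 := cardΦ μ
    rw [innerVV_eq_det s n hm A _ _ (cardI lam) hKc]
    have hne' : lam.1 ≠ μ.1 := fun hc => hne (Subtype.ext hc)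
    obtain ⟨x, hx1, hx2⟩ := triangle_inter hn lam.1 μ.1 lam.2 μ.2 (p μ.1)
      ((hp μ.1 μ.2).1) hne' hsup
    rw [← hΦ μ.1 μ.2] at hx2
    exact det_sel_zero hm A _ _ (cardI lam) hKc x hx1 hx2
  refine ⟨part1, ?_⟩
  have diag : ∀ μ : Comp s n, ∃ e : ℤ, (e = 1 ∨ e = -1) ∧
      innerVV A (iotaSet s n μ.1) (Φ μ.1)
        = ((e : ℤ) : R) * minor A Finset.univ (iotaSet s n μ.1 ∪ Φ μ.1) := by
    intro μ
    have hKc := cardΦ μ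
    have hd : Disjoint (iotaSet s n μ.1) (Φ μ.1) := by
      rw [hΦ μ.1 μ.2]
      exact iota_phi_disjoint hn (p μ.1) μ.1
    have hU : ((iotaSet s n μ.1) ∪ (Φ μ.1)).card = s + n - 1 := by
      rw [Finset.card_union_of_disjoint hd, cardI μ, hKc]
      omega
    obtain ⟨e, he, heq⟩ := det_sel_disjoint hm A _ _ (cardI μ) hKc hd hU
    exact ⟨e, he, by rw [innerVV_eq_det s n hm A _ _ (cardI μ) hKc]; exact heq⟩
  choose ee hee heq using diag
  -- the sorting equivalence
  set D : Matrix (Comp s n) (Comp s n) R :=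
    Matrix.of fun lam μ : Comp s n => innerVV A (iotaSet s n lam.1) (Φ μ.1) with hD
  have supn : ∀ μ : Comp s n, Finset.univ.sup μ.1 ≤ n :=
    fun μ => Finset.sup_le (fun i _ => part_le_n μ.1 μ.2 i)
  set keyf : Comp s n → ℕ ×ₗ ℕ := fun μ =>
    toLex (n - Finset.univ.sup μ.1, ((Fintype.equivFin (Comp s n)) μ : ℕ)) with hkeyf
  have keyinj : Function.Injective keyf := by
    intro a b hab
    rw [hkeyf] at hab
    have h2 := congrArg (fun z : ℕ ×ₗ ℕ => (ofLex z).2) hab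
    simp only [ofLex_toLex] at h2
    exact (Fintype.equivFin (Comp s n)).injective (Fin.ext h2)
  set N := Fintype.card (Comp s n) with hN
  set T : Finset (ℕ ×ₗ ℕ) := Finset.univ.image keyf with hT
  have hTcard : T.card = N := by
    rw [hT, Finset.card_image_of_injective _ keyinj, Finset.card_univ, hN]
  set g : Comp s n → {x // x ∈ T} := fun μ => ⟨keyf μ, by
    rw [hT]; exact Finset.mem_image_of_mem keyf (mem_univ μ)⟩ with hg
  have hgbij : Function.Bijective g := by
    rw [Fintype.bijective_iff_injective_and_card]
    constructor
    · intro a b hab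
      exact keyinj (congrArg Subtype.val hab)
    · have hcT : Fintype.card {x // x ∈ T} = N := by
        rw [Fintype.card_coe]
        exact hTcard
      rw [hcT, hN]
  set e2 : Comp s n ≃ {x // x ∈ T} := Equiv.ofBijective g hgbij with he2
  set q : Fin N ≃ Comp s n := (T.orderIsoOfFin hTcard).toEquiv.trans e2.symm with hq
  have hkeyq : ∀ i : Fin N, keyf (q i) = ((T.orderIsoOfFin hTcard) i : ℕ ×ₗ ℕ) := by
    intro i
    have := e2.apply_symm_apply ((T.orderIsoOfFin hTcard) i)
    rw [he2] at this
    have h2 := congrArg Subtype.val this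
    simp only [Equiv.ofBijective_apply, hg] at h2
    exact h2
  have hqmono : ∀ i j : Fin N, i < j → keyf (q i) < keyf (q j) := by
    intro i j hij
    rw [hkeyq i, hkeyq j]
    exact (T.orderIsoOfFin hTcard).strictMono hij
  have hzero : ∀ i j : Fin N, j < i → D (q i) (q j) = 0 := by
    intro i j hij
    have hk := hqmono j i hij
    have hne : q i ≠ q j := by
      intro hc
      rw [hc] at hk
      exact lt_irrefl _ hk
    have hsup : Finset.univ.sup (q i).1 ≤ Finset.univ.sup (q j).1 := by
      rw [hkeyf] at hk
      rw [Prod.Lex.lt_iff] at hk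
      have hsn1 := supn (q i)
      have hsn2 := supn (q j)
      rcases hk with h | ⟨h, _⟩
      · simp only [ofLex_toLex] at h
        omega
      · simp only [ofLex_toLex] at h
        omega
    exact part1 (q i) (q j) hne hsup
  have hdet : D.det = ∏ i : Fin N, D (q i) (q i) := by
    rw [← Matrix.det_submatrix_equiv_self q D]
    exact Matrix.det_of_upperTriangular (fun i j hij => hzero i j hij)
  have hdet2 : D.det = ∏ μ : Comp s n, D μ μ := by
    rw [hdet]
    exact Equiv.prod_comp q (fun μ => D μ μ)
  have hdiagval : ∀ μ : Comp s n, D μ μ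
      = ((ee μ : ℤ) : R) * minor A Finset.univ (iotaSet s n μ.1 ∪ Φ μ.1) := by
    intro μ
    rw [hD]
    exact heq μ
  refine ⟨∏ μ : Comp s n, ee μ, ?_, ?_⟩
  · refine Finset.prod_induction ee (fun z => z = 1 ∨ z = -1) ?_ (Or.inl rfl)
      (fun μ _ => hee μ)
    rintro a b (rfl | rfl) (rfl | rfl) <;> simp
  · rw [hdet2]
    rw [Finset.prod_congr rfl (fun μ _ => hdiagval μ)]
    rw [Finset.prod_mul_distrib]
    push_cast
    congr 1
    exact Finset.prod_coe_sort _ (fun μ => minor A Finset.univ (iotaSet s n μ ∪ Φ μ))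
end

section
/- Fix k_0 and define Φ : Z_{s,n} → binom([sn], s−1) by Φ(μ) = φ^{(k_0)}(μ) if μ_{k_0} > 0 or μ ∉ R^{(k_0)}, and Φ(μ_0^{(l)}) = {(i−1)n+1 : i ≠ k_0, l} ⊔ {(k_0−1)n+2} for l ≠ k_0, where R^{(k_0)} = {μ_0^{(l)} : l ≠ k_0} and μ_0^{(l)} has n in position l. Then for all λ, μ ∈ Z_{s,n}, ⟨V_{ι(λ)}(A), V̄_{Φ(μ)}(A)⟩ = 0 unless λ ⪯_{k_0} μ. -/
open Finset

/-- The replacement value `Φ(μ_0^{(l)}) = ⊔_{i ≠ k0, l} {(i−1)n+1} ⊔ {(k0−1)n+2}`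
(here `0`-based: `{ i·n : i ≠ k0, l } ∪ { k0·n + 1 }`). -/
def specialSet (s n : ℕ) (k0 l : Fin s) : Finset (Fin (s * n)) :=
  Finset.univ.filter fun x =>
    ((x : ℕ) % n = 0 ∧ (x : ℕ) / n ≠ (k0 : ℕ) ∧ (x : ℕ) / n ≠ (l : ℕ)) ∨
      (x : ℕ) = (k0 : ℕ) * n + 1

open Equiv

section Split
variable {N n : ℕ}

lemma compl_card {I : Finset (Fin N)} (hI : I.card = n) : Iᶜ.card = N - n := by
  rw [Finset.card_compl, hI, Fintype.card_fin]

/-- canonical equivalence -/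
def sumFinEquiv (hn : n ≤ N) : Fin n ⊕ Fin (N - n) ≃ Fin N :=
  finSumFinEquiv.trans (finCongr (by omega))

def splitFun (I : Finset (Fin N)) (hI : I.card = n) : Fin n ⊕ Fin (N - n) → Fin N :=
  Sum.elim (I.orderEmbOfFin hI) (Iᶜ.orderEmbOfFin (compl_card hI))

lemma splitFun_bij (hn : n ≤ N) (I : Finset (Fin N)) (hI : I.card = n) :
    Function.Bijective (splitFun I hI) := by
  rw [Fintype.bijective_iff_injective_and_card]
  constructor
  · intro x y hxy
    rcases x with x | x <;> rcases y with y | y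
    · exact congrArg _ ((I.orderEmbOfFin hI).injective hxy)
    · exfalso
      have h1 : I.orderEmbOfFin hI x ∈ I := Finset.orderEmbOfFin_mem _ _ _
      have h2 : Iᶜ.orderEmbOfFin (compl_card hI) y ∈ Iᶜ := Finset.orderEmbOfFin_mem _ _ _
      rw [show Iᶜ.orderEmbOfFin (compl_card hI) y = I.orderEmbOfFin hI x from hxy.symm,
        Finset.mem_compl] at h2
      exact h2 h1
    · exfalso
      have h1 : I.orderEmbOfFin hI y ∈ I := Finset.orderEmbOfFin_mem _ _ _
      have h2 : Iᶜ.orderEmbOfFin (compl_card hI) x ∈ Iᶜ := Finset.orderEmbOfFin_mem _ _ _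
      rw [show Iᶜ.orderEmbOfFin (compl_card hI) x = I.orderEmbOfFin hI y from hxy,
        Finset.mem_compl] at h2
      exact h2 h1
    · exact congrArg _ ((Iᶜ.orderEmbOfFin (compl_card hI)).injective hxy)
  · simp [Fintype.card_sum]; omega

noncomputable def splitEquiv (hn : n ≤ N) (I : Finset (Fin N)) (hI : I.card = n) :
    (Fin n ⊕ Fin (N - n)) ≃ Fin N := Equiv.ofBijective _ (splitFun_bij hn I hI)

noncomputable def splitPerm (hn : n ≤ N) (I : Finset (Fin N)) (hI : I.card = n) : Perm (Fin N) :=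
  (sumFinEquiv hn).symm.trans (splitEquiv hn I hI)

lemma splitPerm_apply (hn : n ≤ N) (I : Finset (Fin N)) (hI : I.card = n) (j : Fin N) :
    splitPerm hn I hI j = splitFun I hI ((sumFinEquiv hn).symm j) := rfl

end Split
section Swap
variable {N : ℕ}

lemma orderEmbOfFin_swap {m : ℕ} {a b : Fin N} (hab : (b : ℕ) = (a : ℕ) + 1)
    {S T : Finset (Fin N)} (hTS : ∀ x ∈ T, Equiv.swap a b x ∈ S)
    (hT : a ∉ T ∨ b ∉ T) (hS : S.card = m) (hT' : T.card = m) (j : Fin m) :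
    S.orderEmbOfFin hS j = Equiv.swap a b (T.orderEmbOfFin hT' j) := by
  have hmono : StrictMono (fun j => Equiv.swap a b (T.orderEmbOfFin hT' j)) := by
    intro j1 j2 hj
    set x := T.orderEmbOfFin hT' j1 with hx
    set y := T.orderEmbOfFin hT' j2 with hy
    have hxy : x < y := (T.orderEmbOfFin hT').strictMono hj
    have hxT : x ∈ T := Finset.orderEmbOfFin_mem _ _ _
    have hyT : y ∈ T := Finset.orderEmbOfFin_mem _ _ _
    show Equiv.swap a b x < Equiv.swap a b y
    by_cases hxa : x = a
    · subst hxa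
      have hbT : b ∉ T := by rcases hT with h | h; exacts [absurd hxT h, h]
      have hyb : y ≠ b := fun h => hbT (h ▸ hyT)
      have hya : y ≠ x := fun h => absurd (h ▸ hxy) (lt_irrefl _)
      rw [Equiv.swap_apply_left, Equiv.swap_apply_of_ne_of_ne hya hyb]
      rw [Fin.lt_def] at hxy ⊢
      have h1 : (y : ℕ) ≠ (b : ℕ) := fun h => hyb (Fin.ext h)
      omega
    · by_cases hxb : x = b
      · subst hxb
        have haT : a ∉ T := by rcases hT with h | h; exacts [h, absurd hxT h]
        have hya : y ≠ a := fun h => haT (h ▸ hyT)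
        have hyb : y ≠ x := fun h => absurd (h ▸ hxy) (lt_irrefl _)
        rw [Equiv.swap_apply_right, Equiv.swap_apply_of_ne_of_ne hya hyb]
        rw [Fin.lt_def] at hxy ⊢
        omega
      · rw [Equiv.swap_apply_of_ne_of_ne hxa hxb]
        by_cases hya : y = a
        · subst hya
          rw [Equiv.swap_apply_left, Fin.lt_def] at *
          omega
        · by_cases hyb : y = b
          · subst hyb
            have haT : a ∉ T := by rcases hT with h | h; exacts [h, absurd hyT h]
            rw [Equiv.swap_apply_right]
            have h1 : (x : ℕ) ≠ (a : ℕ) := fun h => hxa (Fin.ext h)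
            rw [Fin.lt_def] at hxy ⊢
            omega
          · rw [Equiv.swap_apply_of_ne_of_ne hya hyb]
            exact hxy
  exact (congrFun (Finset.orderEmbOfFin_unique hS
    (f := fun j => Equiv.swap a b (T.orderEmbOfFin hT' j))
    (fun j => hTS _ (Finset.orderEmbOfFin_mem _ _ _)) hmono) j).symm

end Swap

section Sign
variable {N n : ℕ}

def lowSet (N n : ℕ) : Finset (Fin N) := Finset.univ.filter fun i => (i : ℕ) < n

lemma sum_lowSet (hn : n ≤ N) : (∑ i ∈ lowSet N n, ((i : ℕ) + 1)) = n * (n + 1) / 2 := by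
  have h1 : (∑ i ∈ lowSet N n, ((i : ℕ) + 1)) = ∑ m ∈ Finset.range n, (m + 1) := by
    apply Finset.sum_bij (fun (i : Fin N) _ => (i : ℕ))
    · intro a ha
      simp only [lowSet, Finset.mem_filter, Finset.mem_univ, true_and] at ha
      simpa using ha
    · intro a _ b _ hab; exact Fin.val_injective hab
    · intro m hm
      exact ⟨⟨m, lt_of_lt_of_le (Finset.mem_range.mp hm) hn⟩,
        by simp [lowSet, Finset.mem_range.mp hm], rfl⟩
    · intro a _; rfl
  have h2 : (∑ m ∈ Finset.range (n + 1), m) = ∑ m ∈ Finset.range n, (m + 1) := by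
    rw [Finset.sum_range_succ' (fun m => m) n]; simp
  have h3 : (∑ i ∈ Finset.range (n + 1), i) * 2 = (n + 1) * n := by
    simpa using Finset.sum_range_id_mul_two (n + 1)
  have h4 : n * (n + 1) = (n + 1) * n := Nat.mul_comm _ _
  omega

lemma card_lowSet (hn : n ≤ N) : (lowSet N n).card = n := by
  have h1 : (lowSet N n).card = (Finset.range n).card := by
    apply Finset.card_bij (fun (i : Fin N) _ => (i : ℕ))
    · intro a ha
      simp only [lowSet, Finset.mem_filter, Finset.mem_univ, true_and] at ha
      simpa using ha
    · intro a _ b _ hab; exact Fin.val_injective hab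
    · intro m hm
      exact ⟨⟨m, lt_of_lt_of_le (Finset.mem_range.mp hm) hn⟩,
        by simp [lowSet, Finset.mem_range.mp hm], rfl⟩
  rw [h1, Finset.card_range]

lemma splitPerm_lowSet (hn : n ≤ N) (hI : (lowSet N n).card = n) :
    splitPerm hn (lowSet N n) hI = Equiv.refl _ := by
  have h1 : ∀ j : Fin n, (lowSet N n).orderEmbOfFin hI j = ⟨j, lt_of_lt_of_le j.2 hn⟩ := by
    intro j
    refine (congrFun (Finset.orderEmbOfFin_unique hI
      (f := fun j : Fin n => (⟨(j : ℕ), lt_of_lt_of_le j.2 hn⟩ : Fin N)) ?_ ?_) j).symm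
    · intro x; simp [lowSet]
    · intro x y hxy; rw [Fin.lt_def]; exact hxy
  have h2 : ∀ j : Fin (N - n), (lowSet N n)ᶜ.orderEmbOfFin (compl_card hI) j
      = ⟨n + j, by omega⟩ := by
    intro j
    refine (congrFun (Finset.orderEmbOfFin_unique (compl_card hI)
      (f := fun j : Fin (N - n) => (⟨n + (j : ℕ), by omega⟩ : Fin N)) ?_ ?_) j).symm
    · intro x; simp [lowSet]
    · intro x y hxy; rw [Fin.lt_def]; simpa using hxy
  apply Equiv.ext; intro j
  rw [splitPerm_apply]
  rcases h : (sumFinEquiv hn).symm j with i | i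
  · have hj : j = (sumFinEquiv hn) (Sum.inl i) := by
      rw [← h, Equiv.apply_symm_apply]
    have hjv : (j : ℕ) = (i : ℕ) := by rw [hj]; simp [sumFinEquiv]
    simp only [splitFun, Sum.elim_inl, h1 i, Equiv.refl_apply]
    exact Fin.ext hjv.symm
  · have hj : j = (sumFinEquiv hn) (Sum.inr i) := by
      rw [← h, Equiv.apply_symm_apply]
    have hjv : (j : ℕ) = n + (i : ℕ) := by rw [hj]; simp [sumFinEquiv]
    simp only [splitFun, Sum.elim_inr, h2 i, Equiv.refl_apply]
    exact Fin.ext hjv.symm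

end Sign

section Sign2
variable {N n : ℕ}

lemma exists_adjacent {I : Finset (Fin N)} (hI : I.card = n) (hlow : I ≠ lowSet N n) :
    ∃ a b : Fin N, (b : ℕ) = (a : ℕ) + 1 ∧ a ∉ I ∧ b ∈ I := by
  by_contra hc
  push_neg at hc
  have hdown : ∀ m : ℕ, ∀ b : Fin N, b ∈ I → (b : ℕ) = m → ∀ a : Fin N, a ≤ b → a ∈ I := by
    intro m
    induction m using Nat.strong_induction_on with
    | _ m IH =>
      intro b hb hbm a hab
      rcases eq_or_lt_of_le hab with h | h
      · exact Fin.ext_iff.mpr (congrArg Fin.val h) ▸ h ▸ hb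
      · have hm : 1 ≤ m := by
          rw [Fin.lt_def] at h; omega
        have hblt : m - 1 < N := by have := b.2; omega
        set b' : Fin N := ⟨m - 1, hblt⟩ with hb'
        have hb'I : b' ∈ I := by
          have := hc b' b
          rw [Fin.lt_def] at h
          have hv : (b : ℕ) = (b' : ℕ) + 1 := by simp [hb']; omega
          by_contra hcon
          exact (this hv hcon) hb
        exact IH (m - 1) (by omega) b' hb'I rfl a (by rw [Fin.le_def] at hab ⊢; simp [hb']; omega)
  apply hlow
  ext j
  simp only [lowSet, Finset.mem_filter, Finset.mem_univ, true_and]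
  constructor
  · intro hj
    have hsub : Finset.Iic j ⊆ I := fun y hy => hdown (j : ℕ) j hj rfl y (Finset.mem_Iic.mp hy)
    have := Finset.card_le_card hsub
    rw [Fin.card_Iic, hI] at this
    omega
  · intro hj
    by_contra hcon
    have hsub : I ⊆ Finset.Iio j := by
      intro y hy
      rw [Finset.mem_Iio]
      by_contra hy2
      exact hcon (hdown (y : ℕ) y hy rfl j (le_of_not_gt hy2))
    have := Finset.card_le_card hsub
    rw [Fin.card_Iio, hI] at this
    omega

lemma sign_splitPerm_aux (hn : n ≤ N) : ∀ t (I : Finset (Fin N)) (hI : I.card = n),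
    (∑ i ∈ I, (i : ℕ)) = t → ((Equiv.Perm.sign (splitPerm hn I hI) : ℤ)) = vSign n I := by
  intro t
  induction t using Nat.strong_induction_on with
  | _ t IH =>
    intro I hI hsum
    by_cases hlow : I = lowSet N n
    · subst hlow
      rw [splitPerm_lowSet hn hI]
      simp only [Equiv.Perm.sign_refl, Units.val_one]
      rw [vSign, sum_lowSet hn, ← two_mul]
      exact (Even.neg_one_pow ⟨_, (two_mul _)⟩).symm
    · obtain ⟨a, b, hab, haI, hbI⟩ := exists_adjacent hI hlow
      have hane : a ≠ b := fun h => by rw [h] at hab; omega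
      set I' := insert a (I.erase b) with hI'def
      have haE : a ∉ I.erase b := fun h => haI (Finset.mem_of_mem_erase h)
      have hnpos : 0 < n := hI ▸ Finset.card_pos.mpr ⟨b, hbI⟩
      have hI'c : I'.card = n := by
        rw [hI'def, Finset.card_insert_of_notMem haE, Finset.card_erase_of_mem hbI, hI]
        omega
      have haI' : a ∈ I' := Finset.mem_insert_self _ _
      have hbI' : b ∉ I' := by
        rw [hI'def, Finset.mem_insert]
        rintro (h | h)
        · exact hane (h.symm)
        · exact (Finset.notMem_erase b I) h
      -- sums
      have hsum1 : (∑ i ∈ I, (i : ℕ)) = (∑ i ∈ I', (i : ℕ)) + 1 := by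
        have e1 : (b : ℕ) + ∑ i ∈ I.erase b, (i : ℕ) = ∑ i ∈ I, (i : ℕ) :=
          Finset.add_sum_erase I (fun i : Fin N => (i : ℕ)) hbI
        have e2 : (∑ i ∈ I', (i : ℕ)) = (a : ℕ) + ∑ i ∈ I.erase b, (i : ℕ) := by
          rw [hI'def]; exact Finset.sum_insert haE
        omega
      have hsum2 : (∑ i ∈ I, ((i : ℕ) + 1)) = (∑ i ∈ I', ((i : ℕ) + 1)) + 1 := by
        have e1 : ((b : ℕ) + 1) + ∑ i ∈ I.erase b, ((i : ℕ) + 1) = ∑ i ∈ I, ((i : ℕ) + 1) :=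
          Finset.add_sum_erase I (fun i : Fin N => (i : ℕ) + 1) hbI
        have e2 : (∑ i ∈ I', ((i : ℕ) + 1)) = ((a : ℕ) + 1) + ∑ i ∈ I.erase b, ((i : ℕ) + 1) := by
          rw [hI'def]; exact Finset.sum_insert haE
        omega
      -- embedding relations
      have hembI : ∀ j : Fin n, I.orderEmbOfFin hI j = Equiv.swap a b (I'.orderEmbOfFin hI'c j) := by
        intro j
        apply orderEmbOfFin_swap hab _ (Or.inr hbI')
        intro x hx
        by_cases hxa : x = a
        · rw [hxa, Equiv.swap_apply_left]; exact hbI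
        · have hxb : x ≠ b := fun h => hbI' (h ▸ hx)
          rw [Equiv.swap_apply_of_ne_of_ne hxa hxb]
          rw [hI'def, Finset.mem_insert] at hx
          rcases hx with h | h
          · exact absurd h hxa
          · exact Finset.mem_of_mem_erase h
      have hembIc : ∀ j : Fin (N - n), Iᶜ.orderEmbOfFin (compl_card hI) j
          = Equiv.swap a b (I'ᶜ.orderEmbOfFin (compl_card hI'c) j) := by
        intro j
        apply orderEmbOfFin_swap hab _ (Or.inl (by rwa [Finset.mem_compl, not_not]))
        intro x hx
        rw [Finset.mem_compl] at hx
        by_cases hxb : x = b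
        · rw [hxb, Equiv.swap_apply_right, Finset.mem_compl]; exact haI
        · have hxa : x ≠ a := fun h => hx (h ▸ haI')
          rw [Equiv.swap_apply_of_ne_of_ne hxa hxb, Finset.mem_compl]
          intro hxI
          exact hx (by rw [hI'def, Finset.mem_insert]; exact Or.inr (Finset.mem_erase.mpr ⟨hxb, hxI⟩))
      have hsp : splitPerm hn I hI = Equiv.swap a b * splitPerm hn I' hI'c := by
        apply Equiv.ext; intro j
        rw [Equiv.Perm.mul_apply, splitPerm_apply, splitPerm_apply]
        rcases h : (sumFinEquiv hn).symm j with i | i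
        · simpa only [splitFun, Sum.elim_inl] using hembI i
        · simpa only [splitFun, Sum.elim_inr] using hembIc i
      rw [hsp, map_mul, Equiv.Perm.sign_swap hane]
      have hIH := IH (∑ i ∈ I', (i : ℕ)) (by omega) I' hI'c rfl
      rw [Units.val_mul, Units.val_neg, Units.val_one]
      rw [hIH]
      rw [vSign, vSign, hsum2]
      rw [show (∑ i ∈ I', ((i : ℕ) + 1)) + 1 + n * (n + 1) / 2
        = ((∑ i ∈ I', ((i : ℕ) + 1)) + n * (n + 1) / 2) + 1 by omega, pow_succ]
      ring

end Sign2

lemma minor_eq_det {R : Type*} [CommRing R] {N M k : ℕ} (A : Matrix (Fin N) (Fin M) R)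
    {I : Finset (Fin N)} {J : Finset (Fin M)} (hI : I.card = k) (hJ : J.card = k) :
    minor A I J = (A.submatrix (I.orderEmbOfFin hI) (J.orderEmbOfFin hJ)).det := by
  subst hI
  rw [minor, dif_pos hJ]

section Lap
variable {N n : ℕ}

noncomputable def lapPerm (hn : n ≤ N) (I : Finset (Fin N)) (hI : I.card = n)
    (σ : Equiv.Perm (Fin n)) (τ : Equiv.Perm (Fin (N - n))) : Equiv.Perm (Fin N) :=
  splitPerm hn I hI * ((sumFinEquiv hn).permCongr (σ.sumCongr τ))

lemma lapPerm_apply (hn : n ≤ N) (I : Finset (Fin N)) (hI : I.card = n)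
    (σ : Equiv.Perm (Fin n)) (τ : Equiv.Perm (Fin (N - n))) (z : Fin n ⊕ Fin (N - n)) :
    lapPerm hn I hI σ τ ((sumFinEquiv hn) z) = splitFun I hI ((σ.sumCongr τ) z) := by
  rw [lapPerm, Equiv.Perm.mul_apply, Equiv.permCongr_apply, Equiv.symm_apply_apply,
    splitPerm_apply, Equiv.symm_apply_apply]

lemma sign_lapPerm (hn : n ≤ N) (I : Finset (Fin N)) (hI : I.card = n)
    (σ : Equiv.Perm (Fin n)) (τ : Equiv.Perm (Fin (N - n))) :
    ((Equiv.Perm.sign (lapPerm hn I hI σ τ) : ℤ))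
      = vSign n I * (Equiv.Perm.sign σ : ℤ) * (Equiv.Perm.sign τ : ℤ) := by
  rw [lapPerm, map_mul, Equiv.Perm.sign_permCongr, Equiv.Perm.sign_sumCongr]
  push_cast
  rw [sign_splitPerm_aux hn _ I hI rfl]
  ring

lemma lapPerm_bijective (hn : n ≤ N) :
    Function.Bijective (fun p : {I : Finset (Fin N) // I.card = n}
        × Equiv.Perm (Fin n) × Equiv.Perm (Fin (N - n)) =>
      lapPerm hn p.1.1 p.1.2 p.2.1 p.2.2) := by
  rw [Fintype.bijective_iff_injective_and_card]
  constructor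
  · rintro ⟨⟨I, hI⟩, σ, τ⟩ ⟨⟨I', hI'⟩, σ', τ'⟩ h
    simp only at h
    have happ : ∀ z, splitFun I hI ((σ.sumCongr τ) z) = splitFun I' hI' ((σ'.sumCongr τ') z) := by
      intro z
      rw [← lapPerm_apply hn I hI σ τ z, ← lapPerm_apply hn I' hI' σ' τ' z, h]
    have hinl : ∀ i : Fin n, I.orderEmbOfFin hI (σ i) = I'.orderEmbOfFin hI' (σ' i) := by
      intro i; simpa [splitFun] using happ (Sum.inl i)
    have hinr : ∀ i : Fin (N - n), Iᶜ.orderEmbOfFin (compl_card hI) (τ i)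
        = I'ᶜ.orderEmbOfFin (compl_card hI') (τ' i) := by
      intro i; simpa [splitFun] using happ (Sum.inr i)
    have hII : I = I' := by
      ext y
      constructor
      · intro hy
        have : y ∈ Set.range (I.orderEmbOfFin hI) := by
          rw [Finset.range_orderEmbOfFin]; exact hy
        obtain ⟨i0, hi0⟩ := this
        rw [← hi0, ← Equiv.apply_symm_apply σ i0, hinl]
        exact Finset.orderEmbOfFin_mem _ _ _
      · intro hy
        have : y ∈ Set.range (I'.orderEmbOfFin hI') := by
          rw [Finset.range_orderEmbOfFin]; exact hy
        obtain ⟨i0, hi0⟩ := this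
        rw [← hi0, ← Equiv.apply_symm_apply σ' i0, ← hinl]
        exact Finset.orderEmbOfFin_mem _ _ _
    subst hII
    have hσ : σ = σ' := by
      apply Equiv.ext; intro i
      exact (I.orderEmbOfFin hI).injective (hinl i)
    have hτ : τ = τ' := by
      apply Equiv.ext; intro i
      exact (Iᶜ.orderEmbOfFin (compl_card hI)).injective (hinr i)
    simp [hσ, hτ]
  · rw [Fintype.card_prod, Fintype.card_prod, Fintype.card_finset_len, Fintype.card_perm,
      Fintype.card_perm, Fintype.card_perm]
    simp only [Fintype.card_fin]
    rw [← Nat.choose_mul_factorial_mul_factorial hn]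
    ring

end Lap

lemma sum_minor_mul_minor {R : Type*} [CommRing R] {N M n : ℕ} (hn : n ≤ N)
    (A : Matrix (Fin N) (Fin M) R) {J K : Finset (Fin M)} {x : Fin M}
    (hxJ : x ∈ J) (hxK : x ∈ K) :
    ∑ I : {I : Finset (Fin N) // I.card = n},
      minor A I.1 J * (((vSign n I.1 : ℤ) : R) * minor A (I.1)ᶜ K) = 0 := by
  by_cases hJ : J.card = n
  swap
  · apply Finset.sum_eq_zero; intro I _
    rw [show minor A I.1 J = 0 by rw [minor, dif_neg]; rw [I.2]; exact hJ, zero_mul]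
  by_cases hK : K.card = N - n
  swap
  · apply Finset.sum_eq_zero; intro I _
    rw [show minor A (I.1)ᶜ K = 0 by rw [minor, dif_neg]; rw [compl_card I.2]; exact hK,
      mul_zero, mul_zero]
  set B : Matrix (Fin N) (Fin N) R :=
    Matrix.of (fun r c => A r (Sum.elim (J.orderEmbOfFin hJ) (K.orderEmbOfFin hK)
      ((sumFinEquiv hn).symm c))) with hB
  obtain ⟨aj, haj⟩ : ∃ aj : Fin n, J.orderEmbOfFin hJ aj = x := by
    have hx : x ∈ Set.range (J.orderEmbOfFin hJ) := by
      rw [Finset.range_orderEmbOfFin]; exact Finset.mem_coe.mpr hxJ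
    exact hx
  obtain ⟨bk, hbk⟩ : ∃ bk : Fin (N - n), K.orderEmbOfFin hK bk = x := by
    have hx : x ∈ Set.range (K.orderEmbOfFin hK) := by
      rw [Finset.range_orderEmbOfFin]; exact Finset.mem_coe.mpr hxK
    exact hx
  have hdet : B.det = 0 := by
    apply Matrix.det_zero_of_column_eq
      (i := (sumFinEquiv hn) (Sum.inl aj)) (j := (sumFinEquiv hn) (Sum.inr bk))
    · intro hcon
      exact Sum.inl_ne_inr ((sumFinEquiv hn).injective hcon)
    · intro r
      simp only [hB, Matrix.of_apply, Equiv.symm_apply_apply, Sum.elim_inl, Sum.elim_inr,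
        haj, hbk]
  have step1 : ∀ I : {I : Finset (Fin N) // I.card = n},
      minor A I.1 J * (((vSign n I.1 : ℤ) : R) * minor A (I.1)ᶜ K)
        = ∑ σ : Equiv.Perm (Fin n), ∑ τ : Equiv.Perm (Fin (N - n)),
            ((Equiv.Perm.sign (lapPerm hn I.1 I.2 σ τ) : ℤ) : R)
              * ∏ c, B (lapPerm hn I.1 I.2 σ τ c) c := by
    rintro ⟨I, hI⟩
    rw [minor_eq_det A hI hJ, minor_eq_det A (compl_card hI) hK,
      Matrix.det_apply', Matrix.det_apply', Finset.mul_sum, Finset.sum_mul_sum]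
    refine Finset.sum_congr rfl fun σ _ => Finset.sum_congr rfl fun τ _ => ?_
    have hprod : (∏ c, B (lapPerm hn I hI σ τ c) c)
        = (∏ i, A (I.orderEmbOfFin hI (σ i)) (J.orderEmbOfFin hJ i))
          * ∏ i, A (Iᶜ.orderEmbOfFin (compl_card hI) (τ i)) (K.orderEmbOfFin hK i) := by
      rw [← Equiv.prod_comp (sumFinEquiv hn) (fun c => B (lapPerm hn I hI σ τ c) c)]
      rw [Fintype.prod_sum_type]
      congr 1
      · refine Finset.prod_congr rfl fun i _ => ?_
        rw [lapPerm_apply]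
        simp [hB, splitFun]
      · refine Finset.prod_congr rfl fun i _ => ?_
        rw [lapPerm_apply]
        simp [hB, splitFun]
    have hsign : ((Equiv.Perm.sign (lapPerm hn I hI σ τ) : ℤ) : R)
        = ((vSign n I : ℤ) : R) * ((Equiv.Perm.sign σ : ℤ) : R)
          * ((Equiv.Perm.sign τ : ℤ) : R) := by
      rw [show ((Equiv.Perm.sign (lapPerm hn I hI σ τ) : ℤ))
        = vSign n I * (Equiv.Perm.sign σ : ℤ) * (Equiv.Perm.sign τ : ℤ) from
          sign_lapPerm hn I hI σ τ]
      push_cast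
      ring
    rw [hprod, hsign]
    simp only [Matrix.submatrix_apply]
    ring
  have step2 : (∑ p : {I : Finset (Fin N) // I.card = n}
        × Equiv.Perm (Fin n) × Equiv.Perm (Fin (N - n)),
      ((Equiv.Perm.sign (lapPerm hn p.1.1 p.1.2 p.2.1 p.2.2) : ℤ) : R)
        * ∏ c, B (lapPerm hn p.1.1 p.1.2 p.2.1 p.2.2 c) c)
      = ∑ ρ : Equiv.Perm (Fin N), ((Equiv.Perm.sign ρ : ℤ) : R) * ∏ c, B (ρ c) c :=
    Fintype.sum_bijective _ (lapPerm_bijective hn) _ _ (fun p => rfl)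
  have step3 : (∑ p : {I : Finset (Fin N) // I.card = n}
        × Equiv.Perm (Fin n) × Equiv.Perm (Fin (N - n)),
      ((Equiv.Perm.sign (lapPerm hn p.1.1 p.1.2 p.2.1 p.2.2) : ℤ) : R)
        * ∏ c, B (lapPerm hn p.1.1 p.1.2 p.2.1 p.2.2 c) c)
      = ∑ I : {I : Finset (Fin N) // I.card = n},
          ∑ σ : Equiv.Perm (Fin n), ∑ τ : Equiv.Perm (Fin (N - n)),
            ((Equiv.Perm.sign (lapPerm hn I.1 I.2 σ τ) : ℤ) : R)
              * ∏ c, B (lapPerm hn I.1 I.2 σ τ c) c := by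
    rw [Fintype.sum_prod_type]
    exact Finset.sum_congr rfl fun I _ => Fintype.sum_prod_type _
  calc ∑ I : {I : Finset (Fin N) // I.card = n},
      minor A I.1 J * (((vSign n I.1 : ℤ) : R) * minor A (I.1)ᶜ K)
      = ∑ I : {I : Finset (Fin N) // I.card = n},
          ∑ σ : Equiv.Perm (Fin n), ∑ τ : Equiv.Perm (Fin (N - n)),
            ((Equiv.Perm.sign (lapPerm hn I.1 I.2 σ τ) : ℤ) : R)
              * ∏ c, B (lapPerm hn I.1 I.2 σ τ c) c :=
        Finset.sum_congr rfl fun I _ => step1 I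
    _ = ∑ ρ : Equiv.Perm (Fin N), ((Equiv.Perm.sign ρ : ℤ) : R) * ∏ c, B (ρ c) c :=
        step3 ▸ step2
    _ = B.det := (Matrix.det_apply' B).symm
    _ = 0 := hdet

lemma innerVV_eq_zero {R : Type*} [CommRing R] {s n : ℕ} (hn : n ≤ s + n - 1)
    (A : Matrix (Fin (s + n - 1)) (Fin (s * n)) R) {J K : Finset (Fin (s * n))}
    {x : Fin (s * n)} (hxJ : x ∈ J) (hxK : x ∈ K) : innerVV A J K = 0 := by
  unfold innerVV
  exact sum_minor_mul_minor hn A hxJ hxK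

/-- with `Φ = φ^{(k0)}` except on `R^{(k0)} = {μ_0^{(l)} : l ≠ k0}`
where `Φ(μ_0^{(l)})` is the special set above, one has
`⟨V_{ι(λ)}(A), V̄_{Φ(μ)}(A)⟩ = 0` unless `λ ⪯_{k0} μ`. -/
theorem inner_vanish_modified (s n : ℕ) (hs : 0 < s) (hn : 2 ≤ n) (k0 : Fin s)
    {R : Type*} [CommRing R] (A : Matrix (Fin (s + n - 1)) (Fin (s * n)) R)
    (Φ : (Fin s → ℕ) → Finset (Fin (s * n)))
    (hΦa : ∀ μ ∈ Finset.Nat.antidiagonalTuple s n,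
      (¬ ∃ l : Fin s, l ≠ k0 ∧ μ = fun i => if i = l then n else 0) →
      Φ μ = phiSet s n k0 μ)
    (hΦb : ∀ l : Fin s, l ≠ k0 →
      Φ (fun i => if i = l then n else 0) = specialSet s n k0 l) :
    ∀ lam ∈ Finset.Nat.antidiagonalTuple s n,
    ∀ μ ∈ Finset.Nat.antidiagonalTuple s n,
      (¬ ∀ i : Fin s, i ≠ k0 → lam i ≤ μ i) →
      innerVV A (iotaSet s n lam) (Φ μ) = 0 := by
  intro lam hlam μ hμ hcon
  push_neg at hcon
  obtain ⟨i0, hik0, hlt⟩ := hcon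
  have hlamsum : ∑ i, lam i = n := (Finset.Nat.mem_antidiagonalTuple).mp hlam
  have hlami : lam i0 ≤ n :=
    hlamsum ▸ Finset.single_le_sum (fun i _ => Nat.zero_le _) (Finset.mem_univ i0)
  have hnpos : 0 < n := by omega
  have hNn : n ≤ s + n - 1 := by omega
  by_cases hsp : ∃ l : Fin s, l ≠ k0 ∧ μ = fun i => if i = l then n else 0
  · obtain ⟨l, hlk0, hμeq⟩ := hsp
    have hil : i0 ≠ l := by
      intro h
      rw [hμeq] at hlt
      rw [h] at hlt hlami
      simp at hlt
      omega
    have hμ0 : μ i0 = 0 := by rw [hμeq]; simp [hil]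
    have hlampos : 0 < lam i0 := by omega
    have hxb : (i0 : ℕ) * n < s * n := (Nat.mul_lt_mul_right hnpos).mpr i0.2
    set x : Fin (s * n) := ⟨(i0 : ℕ) * n, hxb⟩ with hx
    have hmod : (x : ℕ) % n = 0 := Nat.mul_mod_left _ _
    have hdiv : (x : ℕ) / n = (i0 : ℕ) := by
      show ((i0 : ℕ) * n) / n = (i0 : ℕ)
      exact Nat.mul_div_cancel _ hnpos
    have hxJ : x ∈ iotaSet s n lam := by
      rw [iotaSet, Finset.mem_filter]
      refine ⟨Finset.mem_univ _, ?_⟩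
      rw [hmod, hdiv, dif_pos i0.2]
      simpa using hlampos
    have hxK : x ∈ specialSet s n k0 l := by
      rw [specialSet, Finset.mem_filter]
      refine ⟨Finset.mem_univ _, Or.inl ⟨hmod, ?_, ?_⟩⟩
      · rw [hdiv]; exact fun h => hik0 (Fin.ext h)
      · rw [hdiv]; exact fun h => hil (Fin.ext h)
    rw [hμeq, hΦb l hlk0]
    exact innerVV_eq_zero hNn A hxJ hxK
  · have hΦ := hΦa μ hμ hsp
    have hμlt : μ i0 < n := by omega
    have hxb : (i0 : ℕ) * n + μ i0 < s * n := by
      calc (i0 : ℕ) * n + μ i0 < ((i0 : ℕ) + 1) * n := by rw [Nat.add_mul]; omega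
        _ ≤ s * n := Nat.mul_le_mul_right n i0.2
    set x : Fin (s * n) := ⟨(i0 : ℕ) * n + μ i0, hxb⟩ with hx
    have hmod : (x : ℕ) % n = μ i0 := by
      show ((i0 : ℕ) * n + μ i0) % n = μ i0
      rw [Nat.add_comm, Nat.add_mul_mod_self_right]
      exact Nat.mod_eq_of_lt hμlt
    have hdiv : (x : ℕ) / n = (i0 : ℕ) := by
      show ((i0 : ℕ) * n + μ i0) / n = (i0 : ℕ)
      rw [Nat.add_comm, Nat.add_mul_div_right _ _ hnpos, Nat.div_eq_of_lt hμlt, Nat.zero_add]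
    have hxJ : x ∈ iotaSet s n lam := by
      rw [iotaSet, Finset.mem_filter]
      refine ⟨Finset.mem_univ _, ?_⟩
      rw [hmod, hdiv, dif_pos i0.2]
      simpa using hlt
    have hxK : x ∈ phiSet s n k0 μ := by
      rw [phiSet, Finset.mem_filter]
      refine ⟨Finset.mem_univ _, ?_, ?_⟩
      · rw [hdiv]; exact fun h => hik0 (Fin.ext h)
      · rw [hmod, hdiv, dif_pos i0.2]
    rw [hΦ]
    exact innerVV_eq_zero hNn A hxJ hxK
end

section
/- The leading term (in lex order x_1 ≫ ⋯ ≫ x_{sn}) of the determinant det(x_J^{s+n−I})_{I ∈ R, J ∈ C} is the product of its diagonal entries and equals ∏_{k=1}^{s} ∏_{j=1}^{n} x_{(k−1)n+j}^{(s+1−k)·binom(s+n−j, s)}, with leading coefficient 1. -/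
open Finset

/-- The exponent vector of the monomial `x_J^{s+n−I} = ∏_p x_{j_p}^{s+n−i_p}`
(with `I`, `J` listed increasingly; junk `0` if the sizes differ). -/
noncomputable def Dvec (s n : ℕ) (I : Finset (Fin (s + n - 1)))
    (J : Finset (Fin (s * n))) : Fin (s * n) →₀ ℕ :=
  if h : J.card = I.card then
    ∑ p : Fin I.card,
      Finsupp.single (J.orderEmbOfFin h p) ((s + n - 1) - (I.orderEmbOfFin rfl p : ℕ))
  else 0

/-- `d` is lexicographically smaller than `D` for `x_1 ≫ x_2 ≫ ⋯`: at the first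
index where they differ, `d` has the smaller exponent. -/
def lexLT {M : ℕ} (d D : Fin M →₀ ℕ) : Prop :=
  ∃ j : Fin M, (∀ i : Fin M, i < j → d i = D i) ∧ d j < D j

/-- The element `(k−1)n + j` of `[sn]` (0-based: `k·n + j`). -/
def finIdx {s n : ℕ} (k : Fin s) (j : Fin n) : Fin (s * n) :=
  ⟨(k : ℕ) * n + (j : ℕ), by
    have h1 : (k : ℕ) * n + (j : ℕ) < ((k : ℕ) + 1) * n := by
      rw [Nat.succ_mul]; exact Nat.add_lt_add_left j.isLt _
    exact lt_of_lt_of_le h1 (Nat.mul_le_mul_right n k.isLt)⟩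

/-- The exponent vector of `∏_{k=1}^s ∏_{j=1}^n x_{(k−1)n+j}^{(s+1−k)·C(s+n−j, s)}`. -/
noncomputable def Dstar (s n : ℕ) : Fin (s * n) →₀ ℕ :=
  ∑ k : Fin s, ∑ j : Fin n,
    Finsupp.single (finIdx k j) ((s - (k : ℕ)) * (s + n - 1 - (j : ℕ)).choose s)



namespace BD

def extf (s : ℕ) (μ : Fin s → ℕ) (l : ℕ) : ℕ := if h : l < s then μ ⟨l, h⟩ else 0

def Spre (s : ℕ) (μ : Fin s → ℕ) (i : ℕ) : ℕ := ∑ l ∈ Finset.range i, extf s μ l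

def blk (s : ℕ) (μ : Fin s → ℕ) (p : ℕ) : ℕ := Nat.findGreatest (fun i => Spre s μ i ≤ p) s

variable {s n : ℕ}

lemma Spre_mono (μ : Fin s → ℕ) {i j : ℕ} (h : i ≤ j) : Spre s μ i ≤ Spre s μ j :=
  Finset.sum_le_sum_of_subset (Finset.range_subset_range.2 h)

lemma Spre_succ (μ : Fin s → ℕ) (i : ℕ) : Spre s μ (i + 1) = Spre s μ i + extf s μ i :=
  Finset.sum_range_succ _ _

lemma Spre_total (μ : Fin s → ℕ) (hμ : ∑ i, μ i = n) : Spre s μ s = n := by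
  rw [← hμ, Spre]
  rw [← Fin.sum_univ_eq_sum_range]
  exact Finset.sum_congr rfl fun l _ => by simp [extf, l.isLt]

lemma extf_le (μ : Fin s → ℕ) (hμ : ∑ i, μ i = n) (k : ℕ) : extf s μ k ≤ n := by
  unfold extf
  split
  · exact hμ ▸ Finset.single_le_sum (fun i _ => Nat.zero_le _) (Finset.mem_univ _)
  · exact Nat.zero_le _

lemma Spre_blk_le (μ : Fin s → ℕ) (p : ℕ) : Spre s μ (blk s μ p) ≤ p := by
  rcases Nat.eq_zero_or_pos (blk s μ p) with h | h
  · rw [h]; simp [Spre]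
  · exact Nat.findGreatest_of_ne_zero (P := fun i => Spre s μ i ≤ p) rfl (Nat.pos_iff_ne_zero.1 h)

lemma blk_le (μ : Fin s → ℕ) (p : ℕ) : blk s μ p ≤ s := Nat.findGreatest_le s

lemma blk_lt (μ : Fin s → ℕ) (hμ : ∑ i, μ i = n) {p : ℕ} (hp : p < n) : blk s μ p < s := by
  rcases Nat.lt_or_ge (blk s μ p) s with h | h
  · exact h
  · exfalso
    have h1 := Spre_blk_le μ p
    have h2 : blk s μ p = s := le_antisymm (blk_le μ p) h
    rw [h2, Spre_total μ hμ] at h1; omega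

lemma lt_Spre_blk_succ (μ : Fin s → ℕ) (hμ : ∑ i, μ i = n) {p : ℕ} (hp : p < n) :
    p < Spre s μ (blk s μ p + 1) := by
  by_contra h
  exact Nat.findGreatest_is_greatest (Nat.lt_succ_self _) (blk_lt μ hμ hp)
    (Nat.le_of_not_lt h)

lemma blk_ge (μ : Fin s → ℕ) {p k : ℕ} (hk : k ≤ s) (h : Spre s μ k ≤ p) : k ≤ blk s μ p :=
  Nat.le_findGreatest hk h

lemma blk_eq (μ : Fin s → ℕ) {p k : ℕ} (hk : k ≤ s) (h1 : Spre s μ k ≤ p)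
    (h2 : p < Spre s μ (k + 1)) : blk s μ p = k := by
  refine le_antisymm ?_ (blk_ge μ hk h1)
  by_contra h
  have h3 : k + 1 ≤ blk s μ p := by omega
  have := le_trans (Spre_mono μ h3) (Spre_blk_le μ p)
  omega

lemma blk_mono (μ : Fin s → ℕ) {p q : ℕ} (h : p ≤ q) : blk s μ p ≤ blk s μ q :=
  Nat.findGreatest_mono (fun _ hi => le_trans hi h) le_rfl


lemma offset_lt (μ : Fin s → ℕ) (hμ : ∑ i, μ i = n) {p : ℕ} (hp : p < n) :
    p - Spre s μ (blk s μ p) < extf s μ (blk s μ p) := by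
  have h1 := Spre_blk_le μ p
  have h2 := lt_Spre_blk_succ μ hμ hp
  rw [Spre_succ] at h2
  omega

def gstar (μ : Fin s → ℕ) (hμ : ∑ i, μ i = n) (p : Fin n) : Fin (s + n - 1) :=
  ⟨(p : ℕ) + blk s μ p, by have h1 := blk_lt μ hμ p.isLt; have h2 := p.isLt; omega⟩

def giota (μ : Fin s → ℕ) (hμ : ∑ i, μ i = n) (p : Fin n) : Fin (s * n) :=
  ⟨blk s μ p * n + (p - Spre s μ (blk s μ p)), by
    have h1 := blk_lt μ hμ p.isLt
    have h2 := offset_lt μ hμ p.isLt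
    have h3 := extf_le μ hμ (blk s μ p)
    calc blk s μ p * n + ((p : ℕ) - Spre s μ (blk s μ p)) < blk s μ p * n + n := by omega
      _ = (blk s μ p + 1) * n := by ring
      _ ≤ s * n := Nat.mul_le_mul_right n (by omega)⟩

lemma gstar_strictMono (μ : Fin s → ℕ) (hμ : ∑ i, μ i = n) : StrictMono (gstar μ hμ) := by
  intro p q h
  have h1 : (p : ℕ) < q := h
  have := blk_mono μ (le_of_lt h1)
  simp only [gstar, Fin.mk_lt_mk, Fin.lt_def]
  omega

lemma giota_strictMono (μ : Fin s → ℕ) (hμ : ∑ i, μ i = n) : StrictMono (giota μ hμ) := by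
  intro p q h
  have h1 : (p : ℕ) < q := h
  have hb := blk_mono μ (le_of_lt h1)
  simp only [giota, Fin.mk_lt_mk, Fin.lt_def]
  rcases eq_or_lt_of_le hb with he | hl
  · have h2 := Spre_blk_le μ (p : ℕ)
    have h3 := Spre_blk_le μ (q : ℕ)
    rw [he] at h2
    rw [he]
    omega
  · have h2 := offset_lt μ hμ p.isLt
    have h3 := extf_le μ hμ (blk s μ (p : ℕ))
    calc blk s μ (p:ℕ) * n + ((p : ℕ) - Spre s μ (blk s μ (p:ℕ))) < blk s μ (p:ℕ) * n + n := by omega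
      _ = (blk s μ (p:ℕ) + 1) * n := by ring
      _ ≤ blk s μ (q:ℕ) * n := Nat.mul_le_mul_right n hl
      _ ≤ blk s μ (q:ℕ) * n + ((q : ℕ) - Spre s μ (blk s μ (q:ℕ))) := Nat.le_add_right _ _

lemma Spre_eq_sum_filter_lt (μ : Fin s → ℕ) (i : ℕ) (hi : i ≤ s) :
    Spre s μ i = ∑ l ∈ Finset.univ.filter (fun l : Fin s => (l : ℕ) < i), μ l := by
  have h1 : ∑ l ∈ Finset.univ.filter (fun l : Fin s => (l : ℕ) < i), μ l
      = ∑ l : Fin s, if (l : ℕ) < i then extf s μ (l : ℕ) else 0 := by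
    rw [Finset.sum_filter]
    exact Finset.sum_congr rfl fun l _ => by simp [extf, l.isLt]
  rw [h1, Fin.sum_univ_eq_sum_range (fun l => if l < i then extf s μ l else 0) s,
    ← Finset.sum_filter]
  refine Finset.sum_congr ?_ (fun _ _ => rfl)
  ext l
  simp only [Finset.mem_filter, Finset.mem_range]
  omega


lemma div_lt_s (hn : 0 < n) (x : Fin (s * n)) : (x : ℕ) / n < s :=
  Nat.div_lt_of_lt_mul (lt_of_lt_of_le x.isLt (le_of_eq (Nat.mul_comm s n)))

lemma mem_iotaSet (hn : 0 < n) (μ : Fin s → ℕ) (x : Fin (s * n)) :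
    x ∈ iotaSet s n μ ↔ (x : ℕ) % n < extf s μ ((x : ℕ) / n) := by
  have hdiv := div_lt_s hn x
  simp [iotaSet, extf, hdiv]

lemma div_mod_spec (hn : 0 < n) {b off : ℕ} (hoff : off < n) :
    (b * n + off) / n = b ∧ (b * n + off) % n = off := by
  constructor
  · rw [Nat.mul_comm, Nat.mul_add_div hn, Nat.div_eq_of_lt hoff, Nat.add_zero]
  · rw [Nat.mul_comm, Nat.mul_add_mod, Nat.mod_eq_of_lt hoff]

lemma iotaSet_eq (hn : 0 < n) (μ : Fin s → ℕ) (hμ : ∑ i, μ i = n) :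
    iotaSet s n μ = Finset.image (giota μ hμ) Finset.univ := by
  ext x
  rw [mem_iotaSet hn, Finset.mem_image]
  constructor
  · intro hx
    have hk : (x : ℕ) / n < s := div_lt_s hn x
    have hjn : (x : ℕ) % n < n := Nat.mod_lt _ hn
    have hSk : Spre s μ ((x:ℕ)/n + 1) ≤ n := by
      have h1 : Spre s μ ((x:ℕ)/n + 1) ≤ Spre s μ s := Spre_mono μ hk
      have h2 := Spre_total μ hμ
      omega
    have hsucc := Spre_succ μ ((x:ℕ)/n)
    have hp : Spre s μ ((x:ℕ)/n) + (x:ℕ) % n < n := by omega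
    refine ⟨⟨Spre s μ ((x:ℕ)/n) + (x:ℕ) % n, hp⟩, Finset.mem_univ _, ?_⟩
    have hb : blk s μ (Spre s μ ((x:ℕ)/n) + (x:ℕ) % n) = (x:ℕ)/n :=
      blk_eq μ (le_of_lt hk) (Nat.le_add_right _ _) (by omega)
    apply Fin.ext
    simp only [giota, hb]
    have h5 := Nat.div_add_mod (x : ℕ) n
    have h6 : (x:ℕ) / n * n = n * ((x:ℕ) / n) := Nat.mul_comm _ _
    omega
  · rintro ⟨p, -, rfl⟩
    have hoff := offset_lt μ hμ p.isLt
    have hoffn : (p : ℕ) - Spre s μ (blk s μ (p:ℕ)) < n :=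
      lt_of_lt_of_le hoff (extf_le μ hμ _)
    obtain ⟨hd, hm⟩ := div_mod_spec hn (b := blk s μ (p:ℕ)) hoffn
    show ((giota μ hμ p : ℕ)) % n < extf s μ ((giota μ hμ p : ℕ) / n)
    simp only [giota]
    rw [hd, hm]
    exact hoff

lemma sum_filter_lt (μ : Fin s → ℕ) (i : Fin s) :
    ∑ l ∈ Finset.univ.filter (· < i), μ l = Spre s μ (i : ℕ) := by
  rw [Spre_eq_sum_filter_lt μ (i : ℕ) (le_of_lt i.isLt)]
  refine Finset.sum_congr ?_ (fun _ _ => rfl)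
  ext l; simp only [Finset.mem_filter, Finset.mem_univ, true_and, Fin.lt_def]

lemma sum_filter_le (μ : Fin s → ℕ) (i : Fin s) :
    ∑ l ∈ Finset.univ.filter (· ≤ i), μ l = Spre s μ ((i : ℕ) + 1) := by
  rw [Spre_eq_sum_filter_lt μ ((i : ℕ) + 1) i.isLt]
  refine Finset.sum_congr ?_ (fun _ _ => rfl)
  ext l
  simp only [Finset.mem_filter, Finset.mem_univ, true_and, Fin.le_def, Nat.lt_succ_iff]

lemma mem_starPos (μ : Fin s → ℕ) (q : Fin (s + n - 1)) :
    q ∈ starPos s n μ ↔ ∃ i : Fin s,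
      Spre s μ (i : ℕ) + (i : ℕ) ≤ (q : ℕ) ∧ (q : ℕ) < Spre s μ ((i : ℕ) + 1) + (i : ℕ) := by
  unfold starPos
  rw [Finset.mem_filter]
  simp only [Finset.mem_univ, true_and]
  constructor
  · rintro ⟨i, h1, h2⟩
    exact ⟨i, by rwa [← sum_filter_lt μ i], by rwa [← sum_filter_le μ i]⟩
  · rintro ⟨i, h1, h2⟩
    exact ⟨i, by rwa [sum_filter_lt μ i], by rwa [sum_filter_le μ i]⟩

lemma starPos_eq (hn : 0 < n) (μ : Fin s → ℕ) (hμ : ∑ i, μ i = n) :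
    starPos s n μ = Finset.image (gstar μ hμ) Finset.univ := by
  ext q
  rw [mem_starPos, Finset.mem_image]
  constructor
  · rintro ⟨i, h1, h2⟩
    have hSk : Spre s μ ((i:ℕ) + 1) ≤ n := by
      have h3 : Spre s μ ((i:ℕ) + 1) ≤ Spre s μ s := Spre_mono μ i.isLt
      have h4 := Spre_total μ hμ
      omega
    have hp : (q : ℕ) - (i : ℕ) < n := by omega
    refine ⟨⟨(q : ℕ) - (i : ℕ), hp⟩, Finset.mem_univ _, ?_⟩
    have hb : blk s μ ((q : ℕ) - (i : ℕ)) = (i : ℕ) :=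
      blk_eq μ (le_of_lt i.isLt) (by omega) (by omega)
    apply Fin.ext
    simp only [gstar, hb]
    omega
  · rintro ⟨p, -, rfl⟩
    have hb := blk_lt μ hμ p.isLt
    have h1 := Spre_blk_le μ (p : ℕ)
    have h2 := lt_Spre_blk_succ μ hμ p.isLt
    exact ⟨⟨blk s μ (p : ℕ), hb⟩, by simp only [gstar]; omega, by simp only [gstar]; omega⟩

lemma card_iotaSet (hn : 0 < n) (μ : Fin s → ℕ) (hμ : ∑ i, μ i = n) :
    (iotaSet s n μ).card = n := by
  rw [iotaSet_eq hn μ hμ,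
    Finset.card_image_of_injective _ (giota_strictMono μ hμ).injective,
    Finset.card_univ, Fintype.card_fin]

lemma card_starPos (hn : 0 < n) (μ : Fin s → ℕ) (hμ : ∑ i, μ i = n) :
    (starPos s n μ).card = n := by
  rw [starPos_eq hn μ hμ,
    Finset.card_image_of_injective _ (gstar_strictMono μ hμ).injective,
    Finset.card_univ, Fintype.card_fin]

lemma gstar_mem (hn : 0 < n) (ρ : Fin s → ℕ) (hρ : ∑ i, ρ i = n) (p : Fin n) :
    gstar ρ hρ p ∈ starPos s n ρ := by
  rw [starPos_eq hn ρ hρ]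
  exact Finset.mem_image_of_mem _ (Finset.mem_univ _)

lemma giota_mem (hn : 0 < n) (μ : Fin s → ℕ) (hμ : ∑ i, μ i = n) (p : Fin n) :
    giota μ hμ p ∈ iotaSet s n μ := by
  rw [iotaSet_eq hn μ hμ]
  exact Finset.mem_image_of_mem _ (Finset.mem_univ _)

lemma Dvec_eq (hn : 0 < n) (ρ μ : Fin s → ℕ) (hρ : ∑ i, ρ i = n) (hμ : ∑ i, μ i = n) :
    Dvec s n (starPos s n ρ) (iotaSet s n μ) =
      ∑ p : Fin n, Finsupp.single (giota μ hμ p) ((s + n - 1) - (gstar ρ hρ p : ℕ)) := by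
  have hI : (starPos s n ρ).card = n := card_starPos hn ρ hρ
  have hJ : (iotaSet s n μ).card = (starPos s n ρ).card := by
    rw [hI, card_iotaSet hn μ hμ]
  rw [Dvec, dif_pos hJ]
  have hstar : (fun q : Fin (starPos s n ρ).card => gstar ρ hρ (finCongr hI q))
      = (starPos s n ρ).orderEmbOfFin rfl := by
    apply Finset.orderEmbOfFin_unique
    · intro q
      exact gstar_mem hn ρ hρ _
    · intro q q' hqq'
      exact gstar_strictMono ρ hρ
        (by simp only [Fin.lt_def, finCongr_apply, Fin.coe_cast]; exact hqq')
  have hiota : (fun q : Fin (starPos s n ρ).card => giota μ hμ (finCongr hI q))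
      = (iotaSet s n μ).orderEmbOfFin hJ := by
    apply Finset.orderEmbOfFin_unique
    · intro q
      exact giota_mem hn μ hμ _
    · intro q q' hqq'
      exact giota_strictMono μ hμ
        (by simp only [Fin.lt_def, finCongr_apply, Fin.coe_cast]; exact hqq')
  rw [← Equiv.sum_comp (finCongr hI.symm)
    (fun q : Fin (starPos s n ρ).card => Finsupp.single ((iotaSet s n μ).orderEmbOfFin hJ q)
      ((s + n - 1) - ((starPos s n ρ).orderEmbOfFin rfl q : ℕ)))]
  refine Finset.sum_congr rfl fun p _ => ?_
  have hcast : finCongr hI (finCongr hI.symm p) = p := by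
    apply Fin.ext; simp
  have h1 : (iotaSet s n μ).orderEmbOfFin hJ (finCongr hI.symm p) = giota μ hμ p := by
    rw [← hiota]
    show giota μ hμ (finCongr hI (finCongr hI.symm p)) = giota μ hμ p
    rw [hcast]
  have h2 : ((starPos s n ρ).orderEmbOfFin rfl (finCongr hI.symm p) : ℕ)
      = (gstar ρ hρ p : ℕ) := by
    rw [← hstar]
    show ((gstar ρ hρ (finCongr hI (finCongr hI.symm p))) : ℕ) = _
    rw [hcast]
  rw [h1, h2]

lemma spre_add_lt (μ : Fin s → ℕ) (hμ : ∑ i, μ i = n) {k j : ℕ} (hk : k < s)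
    (h : j < extf s μ k) : Spre s μ k + j < n := by
  have h1 : Spre s μ (k + 1) ≤ Spre s μ s := Spre_mono μ hk
  have h2 := Spre_total μ hμ
  have h3 := Spre_succ μ k
  omega

lemma blk_at_diag (μ : Fin s → ℕ) {k j : ℕ} (hk : k < s) (h : j < extf s μ k) :
    blk s μ (Spre s μ k + j) = k :=
  blk_eq μ (le_of_lt hk) (Nat.le_add_right _ _) (by rw [Spre_succ]; omega)

lemma giota_val_eq (hn : 0 < n) (μ : Fin s → ℕ) (hμ : ∑ i, μ i = n) {k j : ℕ} (hk : k < s)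
    (h : j < extf s μ k) :
    (giota μ hμ ⟨Spre s μ k + j, spre_add_lt μ hμ hk h⟩ : ℕ) = k * n + j := by
  simp only [giota, blk_at_diag μ hk h]
  omega

lemma Dvec_apply (hn : 0 < n) (ρ μ : Fin s → ℕ) (hρ : ∑ i, ρ i = n) (hμ : ∑ i, μ i = n)
    {k j : ℕ} (hk : k < s) (hj : j < n) :
    (Dvec s n (starPos s n ρ) (iotaSet s n μ)) (finIdx ⟨k, hk⟩ ⟨j, hj⟩) =
      if j < extf s μ k then
        (s + n - 1) - (Spre s μ k + j + blk s ρ (Spre s μ k + j)) else 0 := by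
  rw [Dvec_eq hn ρ μ hρ hμ, Finsupp.finset_sum_apply]
  simp only [Finsupp.single_apply]
  by_cases h : j < extf s μ k
  · rw [if_pos h]
    set p0 : Fin n := ⟨Spre s μ k + j, spre_add_lt μ hμ hk h⟩ with hp0
    have hval : giota μ hμ p0 = finIdx ⟨k, hk⟩ ⟨j, hj⟩ := by
      apply Fin.ext
      rw [giota_val_eq hn μ hμ hk h]
      rfl
    rw [Finset.sum_eq_single p0]
    · rw [if_pos hval]
      simp only [gstar, hp0]
    · intro p _ hp
      rw [if_neg]
      intro hcontra
      exact hp ((giota_strictMono μ hμ).injective (hcontra.trans hval.symm))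
    · intro hcontra
      exact absurd (Finset.mem_univ p0) hcontra
  · rw [if_neg h]
    apply Finset.sum_eq_zero
    intro p _
    rw [if_neg]
    intro hcontra
    have hoff := offset_lt μ hμ p.isLt
    have hoffn : (p : ℕ) - Spre s μ (blk s μ (p:ℕ)) < n :=
      lt_of_lt_of_le hoff (extf_le μ hμ _)
    have hval : (giota μ hμ p : ℕ) = blk s μ (p:ℕ) * n + ((p:ℕ) - Spre s μ (blk s μ (p:ℕ))) := rfl
    have hval2 : (giota μ hμ p : ℕ) = k * n + j := congrArg Fin.val hcontra
    obtain ⟨hd1, hm1⟩ := div_mod_spec hn (b := blk s μ (p:ℕ)) hoffn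
    obtain ⟨hd2, hm2⟩ := div_mod_spec hn (b := k) hj
    have heq : blk s μ (p:ℕ) * n + ((p:ℕ) - Spre s μ (blk s μ (p:ℕ))) = k * n + j :=
      hval.symm.trans hval2
    rw [heq] at hd1 hm1
    rw [hd2] at hd1
    rw [hm2] at hm1
    rw [hd1, hm1] at h
    exact h hoff

lemma comp_sum (μ : Comp s n) : ∑ i, μ.1 i = n := Finset.Nat.mem_antidiagonalTuple.1 μ.2

noncomputable def Esum (σ : Equiv.Perm (Comp s n)) : Fin (s * n) →₀ ℕ :=
  ∑ μ : Comp s n, Dvec s n (starPos s n (σ μ).1) (iotaSet s n μ.1)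

lemma Esum_apply (hn : 0 < n) (σ : Equiv.Perm (Comp s n)) {k j : ℕ} (hk : k < s) (hj : j < n) :
    Esum σ (finIdx ⟨k, hk⟩ ⟨j, hj⟩) =
      ∑ μ : Comp s n, (if j < extf s μ.1 k then
        (s + n - 1) - (Spre s μ.1 k + j + blk s (σ μ).1 (Spre s μ.1 k + j)) else 0) := by
  rw [Esum, Finsupp.finset_sum_apply]
  exact Finset.sum_congr rfl fun μ _ =>
    Dvec_apply hn (σ μ).1 μ.1 (comp_sum _) (comp_sum _) hk hj

def Agree (σ : Equiv.Perm (Comp s n)) (k : ℕ) : Prop :=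
  ∀ μ : Comp s n, ∀ l : Fin s, (l : ℕ) < k → (σ μ).1 l = μ.1 l

lemma Agree_mono {σ : Equiv.Perm (Comp s n)} {k k' : ℕ} (h : k' ≤ k) (hA : Agree σ k) :
    Agree σ k' := fun μ l hl => hA μ l (lt_of_lt_of_le hl h)

lemma Spre_congr {ρ μ : Fin s → ℕ} {k : ℕ} (h : ∀ l : Fin s, (l : ℕ) < k → ρ l = μ l)
    {i : ℕ} (hi : i ≤ k) : Spre s ρ i = Spre s μ i := by
  refine Finset.sum_congr rfl fun l hl => ?_
  rw [Finset.mem_range] at hl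
  by_cases hls : l < s
  · simp only [extf, dif_pos hls]
    exact h ⟨l, hls⟩ (lt_of_lt_of_le hl hi)
  · simp only [extf, dif_neg hls]

lemma blk_ge_of_agree {σ : Equiv.Perm (Comp s n)} {k : ℕ} (hk : k < s) (hA : Agree σ k)
    (μ : Comp s n) (j : ℕ) : k ≤ blk s (σ μ).1 (Spre s μ.1 k + j) := by
  have hS : Spre s (σ μ).1 k = Spre s μ.1 k := Spre_congr (hA μ) le_rfl
  exact blk_ge (σ μ).1 (le_of_lt hk) (by omega)

lemma blk_eq_iff_thr {σ : Equiv.Perm (Comp s n)} {k j : ℕ} (hk : k < s) (hA : Agree σ k)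
    (μ : Comp s n) (hj : j < extf s μ.1 k) :
    blk s (σ μ).1 (Spre s μ.1 k + j) = k ↔ j < extf s (σ μ).1 k := by
  have hS : Spre s (σ μ).1 k = Spre s μ.1 k := Spre_congr (hA μ) le_rfl
  have hp : Spre s μ.1 k + j < n := spre_add_lt μ.1 (comp_sum μ) hk hj
  constructor
  · intro hb
    have h2 := lt_Spre_blk_succ (σ μ).1 (comp_sum (σ μ)) hp
    rw [hb, Spre_succ] at h2
    omega
  · intro hthr
    exact blk_eq _ (le_of_lt hk) (by omega) (by rw [Spre_succ]; omega)

lemma F_eq (hn : 0 < n) (σ : Equiv.Perm (Comp s n)) {k j : ℕ} (hk : k < s) (hj : j < n)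
    (hA : Agree σ k)
    (hthr : ∀ μ : Comp s n, j < extf s μ.1 k → j < extf s (σ μ).1 k) :
    Esum σ (finIdx ⟨k, hk⟩ ⟨j, hj⟩) = Esum 1 (finIdx ⟨k, hk⟩ ⟨j, hj⟩) := by
  rw [Esum_apply hn σ hk hj, Esum_apply hn 1 hk hj]
  refine Finset.sum_congr rfl fun μ _ => ?_
  simp only [Equiv.Perm.coe_one, id_eq]
  by_cases h : j < extf s μ.1 k
  · rw [if_pos h, if_pos h]
    rw [(blk_eq_iff_thr hk hA μ h).2 (hthr μ h), blk_at_diag μ.1 hk h]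
  · rw [if_neg h, if_neg h]

lemma F_lt (hn : 0 < n) (σ : Equiv.Perm (Comp s n)) {k j : ℕ} (hk : k < s) (hj : j < n)
    (hA : Agree σ k)
    (hw : ∃ μ : Comp s n, j < extf s μ.1 k ∧ ¬ j < extf s (σ μ).1 k) :
    Esum σ (finIdx ⟨k, hk⟩ ⟨j, hj⟩) < Esum 1 (finIdx ⟨k, hk⟩ ⟨j, hj⟩) := by
  rw [Esum_apply hn σ hk hj, Esum_apply hn 1 hk hj]
  obtain ⟨μ0, hμ0a, hμ0b⟩ := hw
  apply Finset.sum_lt_sum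
  · intro μ _
    simp only [Equiv.Perm.coe_one, id_eq]
    by_cases h : j < extf s μ.1 k
    · rw [if_pos h, if_pos h, blk_at_diag μ.1 hk h]
      have := blk_ge_of_agree hk hA μ j
      omega
    · rw [if_neg h, if_neg h]
  · refine ⟨μ0, Finset.mem_univ _, ?_⟩
    simp only [Equiv.Perm.coe_one, id_eq]
    rw [if_pos hμ0a, if_pos hμ0a, blk_at_diag μ0.1 hk hμ0a]
    have h1 := blk_ge_of_agree hk hA μ0 j
    have h2 : blk s (σ μ0).1 (Spre s μ0.1 k + j) ≠ k :=
      fun hc => hμ0b ((blk_eq_iff_thr hk hA μ0 hμ0a).1 hc)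
    have hp : Spre s μ0.1 k + j < n := spre_add_lt μ0.1 (comp_sum μ0) hk hμ0a
    omega

lemma Agree_succ {σ : Equiv.Perm (Comp s n)} {k : ℕ} (hk : k < s) (hA : Agree σ k)
    (hthr : ∀ j, ∀ μ : Comp s n, j < extf s μ.1 k → j < extf s (σ μ).1 k) :
    Agree σ (k + 1) := by
  have hpt : ∀ μ : Comp s n, extf s μ.1 k ≤ extf s (σ μ).1 k := by
    intro μ
    rcases Nat.eq_zero_or_pos (extf s μ.1 k) with h | h
    · omega
    · have := hthr (extf s μ.1 k - 1) μ (by omega)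
      omega
  have hsum : ∑ μ : Comp s n, extf s (σ μ).1 k = ∑ μ : Comp s n, extf s μ.1 k :=
    Equiv.sum_comp σ (fun μ => extf s μ.1 k)
  have hall : ∀ μ : Comp s n, extf s (σ μ).1 k = extf s μ.1 k := by
    intro μ
    by_contra hne
    have hlt : extf s μ.1 k < extf s (σ μ).1 k := lt_of_le_of_ne (hpt μ) (Ne.symm hne)
    have := Finset.sum_lt_sum (fun i _ => hpt i) ⟨μ, Finset.mem_univ _, hlt⟩
    omega
  intro μ l hl
  rcases Nat.lt_or_ge (l : ℕ) k with h | h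
  · exact hA μ l h
  · have hlk : l = (⟨k, hk⟩ : Fin s) := Fin.ext (show (l : ℕ) = k by omega)
    subst hlk
    have h3 := hall μ
    simp only [extf, dif_pos hk] at h3
    exact h3

lemma idx_lt_iff {k' j' k j : ℕ} (hj' : j' < n) (hj : j < n) :
    k' * n + j' < k * n + j ↔ (k' < k ∨ (k' = k ∧ j' < j)) := by
  constructor
  · intro h
    rcases Nat.lt_trichotomy k' k with h1 | h1 | h1
    · exact Or.inl h1
    · subst h1; exact Or.inr ⟨rfl, by omega⟩
    · exfalso
      have hm := Nat.mul_le_mul_right n (show k + 1 ≤ k' from h1)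
      have hexp : (k + 1) * n = k * n + n := by ring
      omega
  · rintro (h | ⟨rfl, h⟩)
    · have hm := Nat.mul_le_mul_right n (show k' + 1 ≤ k from h)
      have hexp : (k' + 1) * n = k' * n + n := by ring
      omega
    · omega

lemma Esum_lexLT (hs : 0 < s) (hn : 0 < n) (σ : Equiv.Perm (Comp s n)) (hσ : σ ≠ 1) :
    lexLT (Esum σ) (Esum (1 : Equiv.Perm (Comp s n))) := by
  classical
  have hnagree : ¬ Agree σ s := by
    intro hA
    apply hσ
    apply Equiv.ext
    intro μ
    exact Subtype.ext (funext fun l => hA μ l l.isLt)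
  have hwit : ¬ Agree σ ((s - 1) + 1) := by
    have h : s - 1 + 1 = s := by omega
    rwa [h]
  have hex : ∃ k, ¬ Agree σ (k + 1) := ⟨s - 1, hwit⟩
  set k := Nat.find hex with hkdef
  have hAk : Agree σ k := by
    rcases Nat.eq_zero_or_pos k with h0 | h0
    · intro μ l hl
      rw [h0] at hl
      exact absurd hl (Nat.not_lt_zero _)
    · have h1 := Nat.find_min hex (show k - 1 < k by omega)
      have hk1 : k - 1 + 1 = k := by omega
      rw [hk1] at h1
      exact not_not.1 h1
  have hks : k < s := by
    have hle : k ≤ s - 1 := Nat.find_le hwit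
    omega
  have hnA : ¬ Agree σ (k + 1) := Nat.find_spec hex
  have hexj : ∃ j, ∃ μ : Comp s n, j < extf s μ.1 k ∧ ¬ j < extf s (σ μ).1 k := by
    by_contra hc
    push_neg at hc
    exact hnA (Agree_succ hks hAk fun j μ h => hc j μ h)
  set j := Nat.find hexj with hjdef
  obtain ⟨μ0, hμ0a, hμ0b⟩ := Nat.find_spec hexj
  have hjn : j < n := lt_of_lt_of_le hμ0a (extf_le μ0.1 (comp_sum μ0) k)
  refine ⟨finIdx ⟨k, hks⟩ ⟨j, hjn⟩, ?_, ?_⟩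
  · intro i hi
    have hik : (i : ℕ) / n < s := div_lt_s hn i
    have hijn : (i : ℕ) % n < n := Nat.mod_lt _ hn
    have hidx : i = finIdx ⟨(i : ℕ) / n, hik⟩ ⟨(i : ℕ) % n, hijn⟩ := by
      apply Fin.ext
      show (i : ℕ) = (i : ℕ) / n * n + (i : ℕ) % n
      have := Nat.div_add_mod (i : ℕ) n
      have hc : (i : ℕ) / n * n = n * ((i : ℕ) / n) := Nat.mul_comm _ _
      omega
    have hival : (i : ℕ) = (i : ℕ) / n * n + (i : ℕ) % n := congrArg Fin.val hidx
    have hxval : ((finIdx (⟨k, hks⟩ : Fin s) (⟨j, hjn⟩ : Fin n)) : ℕ) = k * n + j := rfl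
    have hlt : (i : ℕ) / n * n + (i : ℕ) % n < k * n + j := by
      have h := (Fin.lt_def).1 hi
      omega
    rcases (idx_lt_iff hijn hjn).1 hlt with h | ⟨h1, h2⟩
    · rw [hidx]
      refine F_eq hn σ hik hijn (Agree_mono (le_of_lt h) hAk) fun μ hμ => ?_
      have he : extf s (σ μ).1 ((i : ℕ) / n) = extf s μ.1 ((i : ℕ) / n) := by
        simp only [extf, dif_pos hik]
        exact hAk μ ⟨(i : ℕ) / n, hik⟩ h
      omega
    · rw [hidx]
      refine F_eq hn σ hik hijn (by rw [h1]; exact hAk) fun μ hμ => ?_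
      by_contra hc
      have hmin := Nat.find_min hexj (show (i : ℕ) % n < j from h2)
      rw [h1] at hμ hc
      exact hmin ⟨μ, hμ, hc⟩
  · exact F_lt hn σ hks hjn hAk ⟨μ0, hμ0a, hμ0b⟩

lemma sum_adt_succ {M : Type*} [AddCommMonoid M] (k m : ℕ) (f : (Fin (k + 1) → ℕ) → M) :
    ∑ ν ∈ Finset.Nat.antidiagonalTuple (k + 1) m, f ν =
      ∑ ab ∈ Finset.HasAntidiagonal.antidiagonal m, ∑ τ ∈ Finset.Nat.antidiagonalTuple k ab.2,
        f (Fin.cons ab.1 τ) := by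
  rw [← Finset.sum_sigma (Finset.HasAntidiagonal.antidiagonal m)
    (fun ab => Finset.Nat.antidiagonalTuple k ab.2) (fun x => f (Fin.cons x.1.1 x.2))]
  refine Finset.sum_nbij'
    (fun ν : Fin (k + 1) → ℕ =>
      (⟨(ν 0, ∑ i : Fin k, ν i.succ), Fin.tail ν⟩ : (_ : ℕ × ℕ) × (Fin k → ℕ)))
    (fun x => Fin.cons x.1.1 x.2) ?_ ?_ ?_ ?_ ?_
  · intro ν hν
    rw [Finset.Nat.mem_antidiagonalTuple] at hν
    rw [Finset.mem_sigma]
    dsimp only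
    constructor
    · rw [Finset.HasAntidiagonal.mem_antidiagonal]
      rw [Fin.sum_univ_succ] at hν
      exact hν
    · rw [Finset.Nat.mem_antidiagonalTuple]
      rfl
  · rintro ⟨⟨a, b⟩, τ⟩ hx
    rw [Finset.mem_sigma] at hx
    obtain ⟨h1, h2⟩ := hx
    rw [Finset.HasAntidiagonal.mem_antidiagonal] at h1
    rw [Finset.Nat.mem_antidiagonalTuple] at h2
    dsimp only
    rw [Finset.Nat.mem_antidiagonalTuple, Fin.sum_univ_succ, Fin.cons_zero]
    simp only [Fin.cons_succ]
    rw [h2]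
    exact h1
  · intro ν _
    exact Fin.cons_self_tail ν
  · rintro ⟨⟨a, b⟩, τ⟩ hx
    rw [Finset.mem_sigma] at hx
    have h2 : ∑ i, τ i = b := Finset.Nat.mem_antidiagonalTuple.1 hx.2
    simp only [Fin.cons_zero, Fin.tail_cons, Fin.cons_succ]
    rw [h2]
  · intro ν _
    rw [Fin.cons_self_tail]

lemma card_adt : ∀ (t : ℕ) (m : ℕ),
    (Finset.Nat.antidiagonalTuple (t + 1) m).card = (t + m).choose m := by
  intro t
  induction t with
  | zero =>
    intro m
    rw [Finset.Nat.antidiagonalTuple_one]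
    simp
  | succ t ih =>
    intro m
    have h1 : (Finset.Nat.antidiagonalTuple (t + 2) m).card =
        ∑ ab ∈ Finset.HasAntidiagonal.antidiagonal m, (Finset.Nat.antidiagonalTuple (t + 1) ab.2).card := by
      rw [Finset.card_eq_sum_ones, sum_adt_succ (t + 1) m (fun _ => (1 : ℕ))]
      exact Finset.sum_congr rfl fun ab _ => (Finset.card_eq_sum_ones _).symm
    rw [h1]
    have h2 : ∑ ab ∈ Finset.HasAntidiagonal.antidiagonal m, (Finset.Nat.antidiagonalTuple (t + 1) ab.2).card =
        ∑ ab ∈ Finset.HasAntidiagonal.antidiagonal m, (t + ab.2).choose ab.2 :=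
      Finset.sum_congr rfl fun ab _ => ih ab.2
    rw [h2, Finset.Nat.sum_antidiagonal_eq_sum_range_succ_mk]
    have h3 : ∀ i ∈ Finset.range (m + 1),
        (t + (m - i)).choose (m - i) = (fun b => (t + b).choose b) (m + 1 - 1 - i) :=
      fun i _ => by norm_num
    rw [Finset.sum_congr rfl h3, Finset.sum_range_reflect (fun b => (t + b).choose b) (m + 1)]
    have h4 : ∀ b ∈ Finset.range (m + 1), (t + b).choose b = (t + b).choose t := by
      intro b _
      have := Nat.choose_symm (Nat.le_add_right t b)
      rwa [Nat.add_sub_cancel_left] at this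
    rw [Finset.sum_congr rfl h4]
    have h5 : ∑ b ∈ Finset.range (m + 1), (t + b).choose t
        = ∑ i ∈ Finset.Icc t (t + m), i.choose t := by
      refine Finset.sum_nbij' (fun b => t + b) (fun i => i - t) ?_ ?_ ?_ ?_ ?_
      · intro b hb
        rw [Finset.mem_range] at hb
        rw [Finset.mem_Icc]
        omega
      · intro i hi
        rw [Finset.mem_Icc] at hi
        rw [Finset.mem_range]
        omega
      · intro b _
        omega
      · intro i hi
        rw [Finset.mem_Icc] at hi
        omega
      · intro b _
        rfl
    rw [h5, Nat.sum_Icc_choose]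
    have h6 := Nat.choose_symm (show t + 1 ≤ t + m + 1 by omega)
    have h7 : t + m + 1 - (t + 1) = m := by omega
    rw [h7] at h6
    rw [← h6]
    congr 1
    omega

lemma sum_perm_adt {M : Type*} [AddCommMonoid M] (m : ℕ) (e : Equiv.Perm (Fin s))
    (f : (Fin s → ℕ) → M) :
    ∑ ν ∈ Finset.Nat.antidiagonalTuple s m, f ν =
      ∑ ν ∈ Finset.Nat.antidiagonalTuple s m, f (ν ∘ e) := by
  refine Finset.sum_nbij' (fun ν => ν ∘ e.symm) (fun ν => ν ∘ e) ?_ ?_ ?_ ?_ ?_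
  · intro ν hν
    rw [Finset.Nat.mem_antidiagonalTuple] at hν ⊢
    rw [← hν]
    exact Equiv.sum_comp e.symm ν
  · intro ν hν
    rw [Finset.Nat.mem_antidiagonalTuple] at hν ⊢
    rw [← hν]
    exact Equiv.sum_comp e ν
  · intro ν _
    funext x
    simp
  · intro ν _
    funext x
    simp
  · intro ν _
    have hcomp : ((ν ∘ ⇑e.symm) ∘ ⇑e) = ν := by
      funext x
      simp
    show f ν = f ((ν ∘ ⇑e.symm) ∘ ⇑e)
    rw [hcomp]

lemma coord_sum (hs : 0 < s) (m : ℕ) (l : Fin s) :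
    ∑ ν ∈ Finset.Nat.antidiagonalTuple s m, (ν l + 1) = (s + m).choose m := by
  obtain ⟨t, rfl⟩ : ∃ t, s = t + 1 := ⟨s - 1, by omega⟩
  have hsym : ∀ l' : Fin (t + 1),
      ∑ ν ∈ Finset.Nat.antidiagonalTuple (t + 1) m, (ν l' + 1) =
        ∑ ν ∈ Finset.Nat.antidiagonalTuple (t + 1) m, (ν l + 1) := by
    intro l'
    have h := sum_perm_adt (s := t + 1) m (Equiv.swap l l') (fun ν => ν l' + 1)
    rw [h]
    refine Finset.sum_congr rfl fun ν _ => ?_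
    simp [Equiv.swap_apply_right]
  obtain ⟨W, hW⟩ : ∃ W, (∑ ν ∈ Finset.Nat.antidiagonalTuple (t + 1) m, (ν l + 1)) = W :=
    ⟨_, rfl⟩
  rw [hW] at hsym ⊢
  clear hW
  have key : (t + 1) * W = (t + 1 + m) * (t + m).choose m := by
    have h1 : ∑ l' : Fin (t + 1), ∑ ν ∈ Finset.Nat.antidiagonalTuple (t + 1) m, (ν l' + 1)
        = (t + 1) * W := by
      rw [Finset.sum_congr rfl fun l' _ => hsym l', Finset.sum_const, Finset.card_univ,
        Fintype.card_fin, smul_eq_mul]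
    have h2 : ∑ l' : Fin (t + 1), ∑ ν ∈ Finset.Nat.antidiagonalTuple (t + 1) m, (ν l' + 1)
        = ∑ ν ∈ Finset.Nat.antidiagonalTuple (t + 1) m, (m + (t + 1)) := by
      rw [Finset.sum_comm]
      refine Finset.sum_congr rfl fun ν hν => ?_
      rw [Finset.sum_add_distrib, Finset.Nat.mem_antidiagonalTuple.1 hν, Finset.sum_const,
        Finset.card_univ, Fintype.card_fin, smul_eq_mul, mul_one]
    rw [← h1, h2, Finset.sum_const, card_adt t m, smul_eq_mul, Nat.mul_comm]
    congr 1
    exact Nat.add_comm _ _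
  have e1 := Nat.add_one_mul_choose_eq (t + m) m
  have e2 := Nat.choose_succ_right_eq (t + m + 1) m
  have h3 : t + m + 1 - m = t + 1 := by omega
  rw [h3] at e2
  have hA : t + 1 + m = t + m + 1 := by omega
  have key2 : (t + 1) * W = (t + 1) * (t + 1 + m).choose m := by
    rw [key, hA]
    calc (t + m + 1) * (t + m).choose m
        = (t + m + 1).choose (m + 1) * (m + 1) := e1
      _ = (t + m + 1).choose m * (t + 1) := e2
      _ = (t + 1) * (t + m + 1).choose m := Nat.mul_comm _ _
  exact Nat.eq_of_mul_eq_mul_left (by omega) key2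

lemma card_filter_lt {k : ℕ} (hk : k ≤ s) :
    (Finset.univ.filter fun l : Fin s => (l : ℕ) < k).card = k := by
  apply Finset.card_eq_of_bijective (fun i hi => ⟨i, by omega⟩)
  · intro a ha
    rw [Finset.mem_filter] at ha
    exact ⟨(a : ℕ), ha.2, Fin.ext rfl⟩
  · intro i hi
    rw [Finset.mem_filter]
    exact ⟨Finset.mem_univ _, hi⟩
  · intro i j hi hj hij
    exact congrArg Fin.val hij

lemma main_identity (hs : 0 < s) (hn : 0 < n) {k j : ℕ} (hk : k < s) (hj : j < n) :
    ∑ μ ∈ Finset.Nat.antidiagonalTuple s n,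
        (if j < extf s μ k then (s + n - 1) - (Spre s μ k + j + k) else 0)
      = (s - k) * (s + n - 1 - j).choose s := by
  classical
  set m := n - 1 - j with hm
  set a : Fin s := ⟨k, hk⟩ with ha
  rw [← Finset.sum_filter]
  have hstep : ∑ μ ∈ (Finset.Nat.antidiagonalTuple s n).filter (fun μ => j < extf s μ k),
      ((s + n - 1) - (Spre s μ k + j + k))
      = ∑ τ ∈ Finset.Nat.antidiagonalTuple s m, ((s + n - 1) - (Spre s τ k + j + k)) := by
    refine Finset.sum_nbij' (fun μ => Function.update μ a (μ a - (j + 1)))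
      (fun τ => Function.update τ a (τ a + (j + 1))) ?_ ?_ ?_ ?_ ?_
    · intro μ hμ
      rw [Finset.mem_filter] at hμ
      obtain ⟨h1, h2⟩ := hμ
      rw [Finset.Nat.mem_antidiagonalTuple] at h1 ⊢
      have hja : j < μ a := by
        simpa only [extf, dif_pos hk] using h2
      rw [Finset.sum_update_of_mem (Finset.mem_univ a)]
      have hsplit : ∑ i, μ i = μ a + ∑ i ∈ Finset.univ \ {a}, μ i :=
        (Finset.sum_eq_add_sum_sdiff_singleton_of_mem (Finset.mem_univ a) μ)
      omega
    · intro τ hτ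
      rw [Finset.Nat.mem_antidiagonalTuple] at hτ
      rw [Finset.mem_filter]
      constructor
      · rw [Finset.Nat.mem_antidiagonalTuple]
        rw [Finset.sum_update_of_mem (Finset.mem_univ a)]
        have hsplit : ∑ i, τ i = τ a + ∑ i ∈ Finset.univ \ {a}, τ i :=
          (Finset.sum_eq_add_sum_sdiff_singleton_of_mem (Finset.mem_univ a) τ)
        have hτa : τ a ≤ m := by
          rw [← hτ]
          exact Finset.single_le_sum (fun i _ => Nat.zero_le _) (Finset.mem_univ a)
        omega
      · simp only [extf, dif_pos hk]
        have : Function.update τ a (τ a + (j + 1)) a = τ a + (j + 1) :=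
          Function.update_self a _ τ
        rw [show (⟨k, hk⟩ : Fin s) = a from rfl, this]
        omega
    · intro μ hμ
      rw [Finset.mem_filter] at hμ
      have hja : j < μ a := by
        simpa only [extf, dif_pos hk] using hμ.2
      funext x
      by_cases hx : x = a
      · subst hx
        simp only [Function.update_self]
        omega
      · simp only [Function.update_of_ne hx]
    · intro τ _
      funext x
      by_cases hx : x = a
      · subst hx
        simp only [Function.update_self]
        omega
      · simp only [Function.update_of_ne hx]
    · intro μ hμ
      have hSpre : Spre s (Function.update μ a (μ a - (j + 1))) k = Spre s μ k := by
        refine (Spre_congr (k := k) ?_ le_rfl)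
        intro l hl
        have hla : l ≠ a := by
          intro hcontra
          rw [hcontra] at hl
          simp only [ha] at hl
          omega
        exact Function.update_of_ne hla _ μ
      rw [hSpre]
  rw [hstep]
  clear hstep
  have hGE : ∀ τ ∈ Finset.Nat.antidiagonalTuple s m,
      (s + n - 1) - (Spre s τ k + j + k)
        = ∑ l ∈ Finset.univ.filter (fun l : Fin s => ¬ (l : ℕ) < k), (τ l + 1) := by
    intro τ hτ
    rw [Finset.Nat.mem_antidiagonalTuple] at hτ
    have hsplit : ∑ l ∈ Finset.univ.filter (fun l : Fin s => (l : ℕ) < k), τ l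
        + ∑ l ∈ Finset.univ.filter (fun l : Fin s => ¬ (l : ℕ) < k), τ l = ∑ l, τ l :=
      Finset.sum_filter_add_sum_filter_not _ _ _
    have hSpre : Spre s τ k = ∑ l ∈ Finset.univ.filter (fun l : Fin s => (l : ℕ) < k), τ l :=
      Spre_eq_sum_filter_lt τ k (le_of_lt hk)
    have hcards : (Finset.univ.filter fun l : Fin s => ¬ (l : ℕ) < k).card = s - k := by
      have h1 : (Finset.univ.filter fun l : Fin s => (l : ℕ) < k).card
          + (Finset.univ.filter fun l : Fin s => ¬ (l : ℕ) < k).card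
          = (Finset.univ : Finset (Fin s)).card :=
        Finset.card_filter_add_card_filter_not (fun l : Fin s => (l : ℕ) < k)
      rw [card_filter_lt (le_of_lt hk), Finset.card_univ, Fintype.card_fin] at h1
      omega
    have hdistr : ∑ l ∈ Finset.univ.filter (fun l : Fin s => ¬ (l : ℕ) < k), (τ l + 1)
        = (∑ l ∈ Finset.univ.filter (fun l : Fin s => ¬ (l : ℕ) < k), τ l) + (s - k) := by
      rw [Finset.sum_add_distrib, Finset.sum_const, hcards, smul_eq_mul, mul_one]
    rw [hdistr]
    clear hdistr
    omega
  rw [Finset.sum_congr rfl hGE, Finset.sum_comm]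
  have hcoord : ∀ l ∈ Finset.univ.filter (fun l : Fin s => ¬ (l : ℕ) < k),
      ∑ τ ∈ Finset.Nat.antidiagonalTuple s m, (τ l + 1) = (s + m).choose m :=
    fun l _ => coord_sum hs m l
  rw [Finset.sum_congr rfl hcoord, Finset.sum_const]
  have hcards : (Finset.univ.filter fun l : Fin s => ¬ (l : ℕ) < k).card = s - k := by
    have h1 : (Finset.univ.filter fun l : Fin s => (l : ℕ) < k).card
        + (Finset.univ.filter fun l : Fin s => ¬ (l : ℕ) < k).card
        = (Finset.univ : Finset (Fin s)).card :=
      Finset.card_filter_add_card_filter_not (fun l : Fin s => (l : ℕ) < k)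
    rw [card_filter_lt (le_of_lt hk), Finset.card_univ, Fintype.card_fin] at h1
    omega
  rw [hcards, smul_eq_mul]
  have hsm : s + m = s + n - 1 - j := by omega
  have hchoose : (s + m).choose m = (s + m).choose s := by
    have := Nat.choose_symm (Nat.le_add_right s m)
    rwa [Nat.add_sub_cancel_left] at this
  rw [hchoose, hsm]


lemma finIdx_val {k : Fin s} {j : Fin n} : ((finIdx k j : Fin (s * n)) : ℕ) = k * n + j := rfl

lemma finIdx_inj (hn : 0 < n) {k k' : Fin s} {j j' : Fin n}
    (h : finIdx k' j' = finIdx k j) : k' = k ∧ j' = j := by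
  have hval : (k' : ℕ) * n + (j' : ℕ) = (k : ℕ) * n + (j : ℕ) := congrArg Fin.val h
  obtain ⟨hd1, hm1⟩ := div_mod_spec hn (b := (k' : ℕ)) j'.isLt
  obtain ⟨hd2, hm2⟩ := div_mod_spec hn (b := (k : ℕ)) j.isLt
  rw [hval] at hd1 hm1
  rw [hd2] at hd1
  rw [hm2] at hm1
  exact ⟨Fin.ext hd1.symm, Fin.ext hm1.symm⟩

lemma Dstar_apply (hn : 0 < n) {k j : ℕ} (hk : k < s) (hj : j < n) :
    Dstar s n (finIdx ⟨k, hk⟩ ⟨j, hj⟩) = (s - k) * (s + n - 1 - j).choose s := by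
  rw [Dstar, Finsupp.finset_sum_apply]
  rw [Finset.sum_eq_single (⟨k, hk⟩ : Fin s)]
  · rw [Finsupp.finset_sum_apply, Finset.sum_eq_single (⟨j, hj⟩ : Fin n)]
    · rw [Finsupp.single_apply, if_pos rfl]
    · intro b _ hb
      rw [Finsupp.single_apply, if_neg]
      intro hc
      exact hb (finIdx_inj hn hc).2
    · intro hc
      exact absurd (Finset.mem_univ _) hc
  · intro a _ ha
    rw [Finsupp.finset_sum_apply]
    apply Finset.sum_eq_zero
    intro b _
    rw [Finsupp.single_apply, if_neg]
    intro hc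
    exact ha (finIdx_inj hn hc).1
  · intro hc
    exact absurd (Finset.mem_univ _) hc

lemma Esum_one_eq (hs : 0 < s) (hn : 0 < n) :
    Esum (1 : Equiv.Perm (Comp s n)) = Dstar s n := by
  apply Finsupp.ext
  intro x
  have hk : (x : ℕ) / n < s := div_lt_s hn x
  have hj : (x : ℕ) % n < n := Nat.mod_lt _ hn
  have hidx : x = finIdx ⟨(x : ℕ) / n, hk⟩ ⟨(x : ℕ) % n, hj⟩ := by
    apply Fin.ext
    show (x : ℕ) = (x : ℕ) / n * n + (x : ℕ) % n
    have h1 := Nat.div_add_mod (x : ℕ) n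
    have h2 : (x : ℕ) / n * n = n * ((x : ℕ) / n) := Nat.mul_comm _ _
    omega
  rw [hidx, Esum_apply hn 1 hk hj, Dstar_apply hn hk hj]
  have h1 : ∀ μ : Comp s n,
      (if (x : ℕ) % n < extf s μ.1 ((x : ℕ) / n) then
        (s + n - 1) - (Spre s μ.1 ((x : ℕ) / n) + (x : ℕ) % n
          + blk s ((1 : Equiv.Perm (Comp s n)) μ).1
              (Spre s μ.1 ((x : ℕ) / n) + (x : ℕ) % n)) else 0)
      = (if (x : ℕ) % n < extf s μ.1 ((x : ℕ) / n) then
        (s + n - 1) - (Spre s μ.1 ((x : ℕ) / n) + (x : ℕ) % n + (x : ℕ) / n) else 0) := by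
    intro μ
    simp only [Equiv.Perm.coe_one, id_eq]
    by_cases h : (x : ℕ) % n < extf s μ.1 ((x : ℕ) / n)
    · rw [if_pos h, if_pos h, blk_at_diag μ.1 hk h]
    · rw [if_neg h, if_neg h]
  rw [Finset.sum_congr rfl fun μ _ => h1 μ]
  exact (Finset.sum_coe_sort (Finset.Nat.antidiagonalTuple s n)
    (fun μ => if (x : ℕ) % n < extf s μ ((x : ℕ) / n) then
      (s + n - 1) - (Spre s μ ((x : ℕ) / n) + (x : ℕ) % n + (x : ℕ) / n) else 0)).trans
    (main_identity hs hn hk hj)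

lemma lexLT_ne {M : ℕ} {d D : Fin M →₀ ℕ} (h : lexLT d D) : d ≠ D := by
  obtain ⟨j, _, hlt⟩ := h
  intro heq
  rw [heq] at hlt
  exact lt_irrefl _ hlt

lemma prod_monomial {ι : Type*} (t : Finset ι) (d : ι → (Fin (s * n) →₀ ℕ)) :
    ∏ i ∈ t, (MvPolynomial.monomial (d i) (1 : ℚ)) = MvPolynomial.monomial (∑ i ∈ t, d i) 1 := by
  induction t using Finset.cons_induction with
  | empty => simp
  | cons a t ha ih =>
    rw [Finset.prod_cons, Finset.sum_cons, ih, MvPolynomial.monomial_mul, one_mul]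

end BD

/-- the lex (`x_1 ≫ ⋯ ≫ x_{sn}`) leading term of
`det (x_J^{s+n−I})_{I ∈ R, J ∈ C}` is the product of its diagonal entries,
namely `∏_{k=1}^s ∏_{j=1}^n x_{(k−1)n+j}^{(s+1−k)·C(s+n−j,s)}`, with leading
coefficient `1`. -/
theorem big_det_leading (s n : ℕ) (hs : 0 < s) (hn : 0 < n) :
    ∀ P : MvPolynomial (Fin (s * n)) ℚ,
      P = Matrix.det (Matrix.of fun ρ μ : Comp s n =>
        MvPolynomial.monomial (Dvec s n (starPos s n ρ.1) (iotaSet s n μ.1)) (1 : ℚ)) →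
      -- the product of the diagonal entries is the claimed monomial …
      (∑ μ ∈ Finset.Nat.antidiagonalTuple s n,
          Dvec s n (starPos s n μ) (iotaSet s n μ)) = Dstar s n ∧
      -- … and it is the lex leading term of the determinant, with coefficient 1
      MvPolynomial.coeff (Dstar s n) P = 1 ∧
      ∀ d ∈ P.support, d ≠ Dstar s n → lexLT d (Dstar s n) := by
  classical
  intro P hP
  have hone : BD.Esum (1 : Equiv.Perm (Comp s n)) = Dstar s n := BD.Esum_one_eq hs hn
  have hpart1 : (∑ μ ∈ Finset.Nat.antidiagonalTuple s n,
      Dvec s n (starPos s n μ) (iotaSet s n μ)) = Dstar s n := by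
    rw [← hone, BD.Esum]
    rw [← Finset.sum_coe_sort (Finset.Nat.antidiagonalTuple s n)
      (fun μ => Dvec s n (starPos s n μ) (iotaSet s n μ))]
    exact Finset.sum_congr rfl fun μ _ => by simp
  have hdet : P = ∑ σ : Equiv.Perm (Comp s n),
      Equiv.Perm.sign σ • (MvPolynomial.monomial (BD.Esum σ) (1 : ℚ)) := by
    rw [hP, Matrix.det_apply]
    refine Finset.sum_congr rfl fun σ _ => ?_
    congr 1
    rw [BD.Esum, ← BD.prod_monomial]
    refine Finset.prod_congr rfl fun μ _ => ?_
    rw [Matrix.of_apply]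
  refine ⟨hpart1, ?_, ?_⟩
  · rw [hdet, MvPolynomial.coeff_sum]
    rw [Finset.sum_eq_single (1 : Equiv.Perm (Comp s n))]
    · rw [MvPolynomial.coeff_smul, MvPolynomial.coeff_monomial, if_pos hone]
      simp
    · intro σ _ hσ
      rw [MvPolynomial.coeff_smul, MvPolynomial.coeff_monomial, if_neg, smul_zero]
      intro hc
      exact BD.lexLT_ne (BD.Esum_lexLT hs hn σ hσ) (hc.trans hone.symm)
    · intro hc
      exact absurd (Finset.mem_univ _) hc
  · intro d hd hne
    rw [hdet] at hd
    have hd2 := MvPolynomial.support_sum hd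
    rw [Finset.mem_biUnion] at hd2
    obtain ⟨σ, _, hdσ⟩ := hd2
    have hd3 : d ∈ (MvPolynomial.monomial (BD.Esum σ) (1 : ℚ)).support :=
      MvPolynomial.support_smul hdσ
    rw [MvPolynomial.support_monomial, if_neg one_ne_zero, Finset.mem_singleton] at hd3
    subst hd3
    have hσ : σ ≠ 1 := by
      intro hc
      subst hc
      exact hne hone
    have := BD.Esum_lexLT hs hn σ hσ
    rwa [hone] at this
end
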